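/- arXiv:0802.2424 — 4 statements merged into one kernel-verified Lean document; each statement's English description precedes it below -/
import Mathlib

section
/- Let d ≥ 2 and let μ be a Borel probability measure on ℝ^d with joint distribution function H(x_1,…,x_d) = μ{y ∈ ℝ^d : y_1 ≤ x_1, …, y_d ≤ x_d}, and suppose that each marginal distribution function F_m(t) = μ{y : y_m ≤ t}, m = 1,…,d, is continuous. Then there exists a unique function C : [0,1]^d → [0,1] which is the joint distribution function of a Borel probability measure on [0,1]^d all of whose one-dimensional marginals are the uniform distribution on [0,1], and which satisfies H(x_1,…,x_d) = C(F_1(x_1),…,F_d(x_d)) for all (x_1,…,x_d) ∈ ℝ^d. -/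
open MeasureTheory Set

open Filter Topology in
section
open Filter Topology

namespace SklarAux

variable (ρ : Measure ℝ) [IsProbabilityMeasure ρ] {G : ℝ → ℝ}

lemma cdf_mono (hG : ∀ t, G t = (ρ (Iic t)).toReal) : Monotone G := fun a b hab => by
  rw [hG, hG]
  exact ENNReal.toReal_mono (measure_ne_top _ _) (measure_mono (Iic_subset_Iic.2 hab))

lemma cdf_ofReal (hG : ∀ t, G t = (ρ (Iic t)).toReal) (t : ℝ) :
    ρ (Iic t) = ENNReal.ofReal (G t) := by
  rw [hG]; exact (ENNReal.ofReal_toReal (measure_ne_top _ _)).symm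

lemma cdf_nonneg (hG : ∀ t, G t = (ρ (Iic t)).toReal) (t : ℝ) : 0 ≤ G t := by
  rw [hG]; exact ENNReal.toReal_nonneg

lemma cdf_le_one (hG : ∀ t, G t = (ρ (Iic t)).toReal) (t : ℝ) : G t ≤ 1 := by
  rw [hG]
  have : ρ (Iic t) ≤ 1 := (measure_mono (subset_univ _)).trans_eq measure_univ
  simpa using ENNReal.toReal_mono (by simp) this

lemma cdf_Ioc_null (hG : ∀ t, G t = (ρ (Iic t)).toReal) {a b : ℝ} (hab : a ≤ b)
    (h : G a = G b) : ρ (Ioc a b) = 0 := by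
  rw [← Iic_sdiff_Iic, measure_diff (Iic_subset_Iic.2 hab) nullMeasurableSet_Iic
    (measure_ne_top _ _), cdf_ofReal ρ hG, cdf_ofReal ρ hG, h, tsub_self]

lemma null_level (hG : ∀ t, G t = (ρ (Iic t)).toReal) (hGc : Continuous G) (x : ℝ) :
    ρ {t | G t ≤ G x ∧ x < t} = 0 := by
  set A := {t | G t ≤ G x ∧ x < t} with hA
  rcases eq_empty_or_nonempty A with h | hne
  · simp [h]
  have hmono := cdf_mono ρ hG
  by_cases hB : BddAbove A
  · set s := sSup A with hs
    have hscl : s ∈ closure A := csSup_mem_closure hne hB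
    have hclosed : IsClosed {t | G t ≤ G x ∧ x ≤ t} :=
      (isClosed_le hGc continuous_const).inter (isClosed_le continuous_const continuous_id)
    have hAsub : A ⊆ {t | G t ≤ G x ∧ x ≤ t} := fun t ht => ⟨ht.1, ht.2.le⟩
    have hsmem : s ∈ {t | G t ≤ G x ∧ x ≤ t} := closure_minimal hAsub hclosed hscl
    have hGs : G x = G s := le_antisymm (hmono hsmem.2) hsmem.1
    have hAIoc : A ⊆ Ioc x s := fun t ht => ⟨ht.2, le_csSup hB ht⟩
    exact measure_mono_null hAIoc (cdf_Ioc_null ρ hG hsmem.2 hGs)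
  · -- unbounded: then G is eventually constant equal to G x
    have hr : ∀ r, ρ (Iic r) ≤ ρ (Iic x) := by
      intro r
      obtain ⟨t, ht, hrt⟩ := not_bddAbove_iff.1 hB r
      have h1 : G r ≤ G x := le_trans (hmono hrt.le) ht.1
      rw [cdf_ofReal ρ hG, cdf_ofReal ρ hG]
      exact ENNReal.ofReal_le_ofReal h1
    have huniv : ρ univ ≤ ρ (Iic x) :=
      le_of_tendsto (tendsto_measure_Iic_atTop ρ) (Eventually.of_forall hr)
    have : ρ (Iic x)ᶜ = 0 := by
      rw [measure_compl measurableSet_Iic (measure_ne_top _ _),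
        le_antisymm (measure_mono (subset_univ _)) huniv, tsub_self]
    exact measure_mono_null (fun t ht => not_le.2 ht.2) this

lemma exists_cdf_eq (hG : ∀ t, G t = (ρ (Iic t)).toReal) (hGc : Continuous G) {u : ℝ}
    (hu0 : 0 < u) (hu1 : u < 1) : ∃ t, G t = u := by
  have hGeq : (fun r => (ρ (Iic r)).toReal) = G := funext fun t => (hG t).symm
  have htop : Tendsto G atTop (𝓝 1) := by
    have h1 : Tendsto (fun r => (ρ (Iic r)).toReal) atTop (𝓝 1) := by
      have := (ENNReal.tendsto_toReal (show ρ univ ≠ ⊤ by simp)).comp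
        (tendsto_measure_Iic_atTop ρ)
      simpa [Function.comp_def, measure_univ] using this
    rwa [hGeq] at h1
  have hbot : Tendsto G atBot (𝓝 0) := by
    have hiInter : (⋂ r : ℝ, Iic r) = (∅ : Set ℝ) := by
      ext t; simp only [mem_iInter, mem_Iic, mem_empty_iff_false, iff_false, not_forall, not_le]
      exact ⟨t - 1, by linarith⟩
    have h0 : Tendsto (fun r => ρ (Iic r)) atBot (𝓝 0) := by
      have := tendsto_measure_iInter_atBot (μ := ρ) (s := fun r : ℝ => Iic r)
        (fun r => nullMeasurableSet_Iic) (fun a b hab => Iic_subset_Iic.2 hab)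
        ⟨0, measure_ne_top _ _⟩
      simpa [hiInter, Function.comp_def] using this
    have h1 : Tendsto (fun r => (ρ (Iic r)).toReal) atBot (𝓝 0) := by
      have := (ENNReal.tendsto_toReal (show (0:ENNReal) ≠ ⊤ by simp)).comp h0
      simpa [Function.comp_def] using this
    rwa [hGeq] at h1
  obtain ⟨b, hb⟩ := (htop.eventually (eventually_gt_nhds hu1)).exists
  obtain ⟨a, ha⟩ := (hbot.eventually (eventually_lt_nhds hu0)).exists
  have hab : a ≤ b := by
    by_contra hcon
    exact absurd (cdf_mono ρ hG (le_of_not_ge hcon)) (not_le.2 (ha.trans hb))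
  obtain ⟨t, _, ht⟩ := intermediate_value_Icc hab hGc.continuousOn ⟨ha.le, hb.le⟩
  exact ⟨t, ht⟩

lemma measure_cdf_le (hG : ∀ t, G t = (ρ (Iic t)).toReal) (hGc : Continuous G) {u : ℝ}
    (hu0 : 0 < u) (hu1 : u < 1) : ρ {t | G t ≤ u} = ENNReal.ofReal u := by
  obtain ⟨t0, ht0⟩ := exists_cdf_eq ρ hG hGc hu0 hu1
  have hsub : Iic t0 ⊆ {t | G t ≤ u} := fun t ht => ht0 ▸ cdf_mono ρ hG ht
  have hnull : ρ ({t | G t ≤ u} \ Iic t0) = 0 := by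
    refine measure_mono_null (fun t ht => ?_) (null_level ρ hG hGc t0)
    exact ⟨ht.1.trans_eq ht0.symm, not_le.1 ht.2⟩
  rw [← measure_eq_measure_of_null_diff hsub hnull, cdf_ofReal ρ hG, ht0]

lemma map_cdf (hG : ∀ t, G t = (ρ (Iic t)).toReal) (hGc : Continuous G) :
    ρ.map G = volume.restrict (Icc (0:ℝ) 1) := by
  haveI : IsProbabilityMeasure (ρ.map G) :=
    Measure.isProbabilityMeasure_map hGc.measurable.aemeasurable
  refine Measure.ext_of_Iic (ρ.map G) _ (fun a => ?_)
  rw [Measure.map_apply hGc.measurable measurableSet_Iic,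
    Measure.restrict_apply measurableSet_Iic]
  have hset : G ⁻¹' Iic a = {t | G t ≤ a} := rfl
  rcases le_or_gt 1 a with h1a | ha1
  · have : G ⁻¹' Iic a = univ := eq_univ_of_forall fun t => (cdf_le_one ρ hG t).trans h1a
    rw [this, measure_univ, inter_eq_self_of_subset_right (fun x hx => hx.2.trans h1a)]
    simp [Real.volume_Icc]
  rcases le_or_gt a 0 with ha0 | h0a
  · have hL : ρ (G ⁻¹' Iic a) = 0 := by
      have hle : ∀ᶠ n : ℕ in atTop, ρ (G ⁻¹' Iic a) ≤ ENNReal.ofReal (1/(n+1)) := by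
        filter_upwards [eventually_ge_atTop 1] with n hn
        have hn1 : (1:ℝ)/(n+1) < 1 := by
          rw [div_lt_one (by positivity)]
          have : (1:ℝ) ≤ (n:ℝ) := by exact_mod_cast hn
          linarith
        rw [← measure_cdf_le ρ hG hGc (by positivity) hn1]
        exact measure_mono fun t ht => le_trans (le_trans ht (ha0.trans (by positivity)))
          le_rfl
      have htend : Tendsto (fun n : ℕ => ENNReal.ofReal (1/(n+1))) atTop (𝓝 0) := by
        rw [← ENNReal.ofReal_zero]
        exact (ENNReal.continuous_ofReal.tendsto 0).comp
          tendsto_one_div_add_atTop_nhds_zero_nat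
      simpa using ge_of_tendsto htend hle
    rw [hL]
    refine (measure_mono_null (fun x hx => ?_) (measure_singleton (0:ℝ))).symm
    have : x = 0 := le_antisymm (hx.1.trans ha0) hx.2.1
    simp [this]
  · rw [hset, measure_cdf_le ρ hG hGc h0a ha1]
    have : Iic a ∩ Icc 0 1 = Icc 0 a := by
      ext x
      simp only [mem_inter_iff, mem_Iic, mem_Icc]
      exact ⟨fun h => ⟨h.2.1, h.1⟩, fun h => ⟨h.2, h.1, h.2.trans ha1.le⟩⟩
    rw [this, Real.volume_Icc, sub_zero]

end SklarAux

end

noncomputable section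

namespace Sklar

/-- The unit cube `[0,1]^d`. -/
def box (d : ℕ) : Set (Fin d → ℝ) := Set.univ.pi fun _ => Set.Icc (0 : ℝ) 1

/-- The lower orthant `{y : y_1 ≤ x_1, …, y_d ≤ x_d}`. -/
def orthant {d : ℕ} (x : Fin d → ℝ) : Set (Fin d → ℝ) := {y | ∀ m, y m ≤ x m}

/-- `C` is a copula: on `[0,1]^d` it coincides with the joint distribution function of a
Borel probability measure concentrated on `[0,1]^d` whose one-dimensional marginals are all
the uniform distribution on `[0,1]`. -/
def IsCopula (d : ℕ) (C : (Fin d → ℝ) → ℝ) : Prop :=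
  ∃ ν : Measure (Fin d → ℝ), IsProbabilityMeasure ν ∧ ν (box d)ᶜ = 0 ∧
    (∀ m : Fin d, ν.map (fun y => y m) = volume.restrict (Set.Icc (0 : ℝ) 1)) ∧
    ∀ u ∈ box d, C u = (ν (orthant u)).toReal

end Sklar

open Sklar in
/-- Sklar's theorem: if `μ` is a Borel probability measure on `ℝ^d`
(`d ≥ 2`) whose marginal distribution functions `F_1, …, F_d` are continuous, then there is
a unique copula `C` with `H(x) = C(F_1(x_1), …, F_d(x_d))` for all `x`, where `H` is the
joint distribution function of `μ`. -/
theorem sklar_theorem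
    (d : ℕ) (hd : 2 ≤ d) (μ : Measure (Fin d → ℝ)) [IsProbabilityMeasure μ]
    (F : Fin d → ℝ → ℝ)
    (hF : ∀ (m : Fin d) (t : ℝ), F m t = (μ {y | y m ≤ t}).toReal)
    (hFc : ∀ m, Continuous (F m)) :
    ∃ C : (Fin d → ℝ) → ℝ,
      (IsCopula d C ∧
        ∀ x : Fin d → ℝ, (μ (orthant x)).toReal = C fun m => F m (x m)) ∧
      ∀ C' : (Fin d → ℝ) → ℝ,
        (IsCopula d C' ∧
          ∀ x : Fin d → ℝ, (μ (orthant x)).toReal = C' fun m => F m (x m)) →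
        Set.EqOn C' C (box d) := by
  classical
  have hd0 : 0 < d := lt_of_lt_of_le two_pos hd
  haveI : Nonempty (Fin d) := ⟨⟨0, hd0⟩⟩
  set T : (Fin d → ℝ) → (Fin d → ℝ) := fun y m => F m (y m) with hT
  have hTc : Continuous T := continuous_pi fun m => (hFc m).comp (continuous_apply m)
  have hmeval : ∀ m : Fin d, Measurable fun y : Fin d → ℝ => y m :=
    fun m => measurable_pi_apply m
  set ρ : Fin d → Measure ℝ := fun m => μ.map (fun y => y m) with hρ
  haveI hρprob : ∀ m, IsProbabilityMeasure (ρ m) :=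
    fun m => Measure.isProbabilityMeasure_map (hmeval m).aemeasurable
  have hFρ : ∀ m t, F m t = ((ρ m) (Iic t)).toReal := by
    intro m t
    rw [hF, hρ]
    rw [Measure.map_apply (hmeval m) measurableSet_Iic]
    rfl
  have hF0 : ∀ m t, 0 ≤ F m t := fun m t => SklarAux.cdf_nonneg (ρ m) (hFρ m) t
  have hF1 : ∀ m t, F m t ≤ 1 := fun m t => SklarAux.cdf_le_one (ρ m) (hFρ m) t
  have hFmono : ∀ m, Monotone (F m) := fun m => SklarAux.cdf_mono (ρ m) (hFρ m)
  set ν : Measure (Fin d → ℝ) := μ.map T with hν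
  haveI hνprob : IsProbabilityMeasure ν :=
    Measure.isProbabilityMeasure_map hTc.measurable.aemeasurable
  have horth_eq : ∀ u : Fin d → ℝ, orthant u = Set.pi univ fun m => Iic (u m) := by
    intro u; ext y; simp [orthant, Set.mem_pi, Pi.le_def]
  have horth_meas : ∀ u : Fin d → ℝ, MeasurableSet (orthant u) := fun u =>
    (horth_eq u) ▸ MeasurableSet.univ_pi fun m => measurableSet_Iic
  have hbox_meas : MeasurableSet (box d) := MeasurableSet.univ_pi fun _ => measurableSet_Icc
  have hTbox : ∀ y, T y ∈ box d := by
    intro y m _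
    exact ⟨hF0 m (y m), hF1 m (y m)⟩
  -- ν vanishes off the box
  have hν_box : ν (box d)ᶜ = 0 := by
    rw [hν, Measure.map_apply hTc.measurable hbox_meas.compl]
    have : T ⁻¹' (box d)ᶜ = ∅ := by
      ext y; simp only [mem_preimage, mem_compl_iff, mem_empty_iff_false, iff_false, not_not]
      exact hTbox y
    rw [this, measure_empty]
  -- marginals of ν are uniform
  have hν_marg : ∀ m : Fin d, ν.map (fun y => y m) = volume.restrict (Icc (0:ℝ) 1) := by
    intro m
    rw [hν, Measure.map_map (hmeval m) hTc.measurable]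
    have hcomp : (fun y : Fin d → ℝ => y m) ∘ T = (F m) ∘ (fun y : Fin d → ℝ => y m) := rfl
    rw [hcomp, ← Measure.map_map (hFc m).measurable (hmeval m)]
    exact SklarAux.map_cdf (ρ m) (hFρ m) (hFc m)
  -- the H-equation
  have hHeq : ∀ x : Fin d → ℝ, (μ (orthant x)).toReal = (ν (orthant (T x))).toReal := by
    intro x
    rw [hν, Measure.map_apply hTc.measurable (horth_meas _)]
    have hsub : orthant x ⊆ T ⁻¹' orthant (T x) := by
      intro y hy m
      exact hFmono m (hy m)
    have hdiff : μ (T ⁻¹' orthant (T x) \ orthant x) = 0 := by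
      refine measure_mono_null (fun y hy => ?_)
        (measure_iUnion_null fun m =>
          (?_ : μ ((fun y : Fin d → ℝ => y m) ⁻¹' {t | F m t ≤ F m (x m) ∧ x m < t}) = 0))
      · obtain ⟨hy1, hy2⟩ := hy
        simp only [orthant, mem_setOf_eq, not_forall, not_le] at hy2
        obtain ⟨m, hm⟩ := hy2
        exact mem_iUnion.2 ⟨m, hy1 m, hm⟩
      · have hAm : MeasurableSet {t : ℝ | F m t ≤ F m (x m) ∧ x m < t} :=
          ((hFc m).measurable measurableSet_Iic).inter measurableSet_Ioi
        rw [← Measure.map_apply (hmeval m) hAm]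
        exact SklarAux.null_level (ρ m) (hFρ m) (hFc m) (x m)
    rw [measure_eq_measure_of_null_diff hsub hdiff]
  -- key marginal computation for any copula measure
  have key : ∀ κ : Measure (Fin d → ℝ),
      (∀ m : Fin d, κ.map (fun y => y m) = volume.restrict (Icc (0:ℝ) 1)) →
      ∀ (m : Fin d) (s : Set ℝ), MeasurableSet s →
      κ ((fun y : Fin d → ℝ => y m) ⁻¹' s) = volume (s ∩ Icc 0 1) := by
    intro κ hκ m s hs
    rw [← Measure.map_apply (hmeval m) hs, hκ m, Measure.restrict_apply hs]
  refine ⟨fun u => (ν (orthant u)).toReal,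
    ⟨⟨ν, hνprob, hν_box, hν_marg, fun u _ => rfl⟩, hHeq⟩, ?_⟩
  -- uniqueness
  rintro C' ⟨⟨ν', hν'prob, hν'box, hν'marg, hC'⟩, hH'⟩ u hu
  haveI := hν'prob
  show C' u = (ν (orthant u)).toReal
  rw [hC' u hu]
  suffices hsuff : ν' (orthant u) = ν (orthant u) by rw [hsuff]
  have hu01 : ∀ m, 0 ≤ u m ∧ u m ≤ 1 := fun m => hu m (mem_univ m)
  by_cases h0 : ∃ m, u m = 0
  · obtain ⟨m, hm0⟩ := h0
    have hzero : ∀ κ : Measure (Fin d → ℝ),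
        (∀ m : Fin d, κ.map (fun y => y m) = volume.restrict (Icc (0:ℝ) 1)) →
        κ (orthant u) = 0 := by
      intro κ hκ
      refine measure_mono_null (t := (fun y : Fin d → ℝ => y m) ⁻¹' Iic 0)
        (fun y hy => (hy m).trans hm0.le) ?_
      rw [key κ hκ m (Iic 0) measurableSet_Iic]
      refine measure_mono_null (t := {(0:ℝ)}) (fun x hx => ?_) (measure_singleton (0:ℝ))
      exact le_antisymm hx.1 hx.2.1
    rw [hzero ν' hν'marg, hzero ν hν_marg]
  · push_neg at h0
    have hu0 : ∀ m, 0 < u m := fun m => lt_of_le_of_ne (hu01 m).1 (Ne.symm (h0 m))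
    set v : ℕ → Fin d → ℝ := fun n j => min (u j) (1 - 1/(n+2)) with hv
    have hvle : ∀ n j, v n j ≤ u j := fun n j => min_le_left _ _
    have hfrac : ∀ n : ℕ, (0:ℝ) < 1/(n+2) ∧ (1:ℝ)/(n+2) < 1 := by
      intro n
      have hn2 : (0:ℝ) < (n:ℝ)+2 := by positivity
      have hn0 : (0:ℝ) ≤ (n:ℝ) := Nat.cast_nonneg n
      exact ⟨by positivity, (div_lt_one hn2).2 (by linarith)⟩
    have hv0 : ∀ n j, 0 < v n j := fun n j => lt_min (hu0 j) (by linarith [(hfrac n).2])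
    have hv1 : ∀ n j, v n j < 1 :=
      fun n j => lt_of_le_of_lt (min_le_right _ _) (sub_lt_self 1 (hfrac n).1)
    have hvbox : ∀ n, v n ∈ box d := fun n j _ => ⟨(hv0 n j).le, (hv1 n j).le⟩
    have hvm : Monotone fun n => orthant (v n) := by
      intro a b hab y hy j
      refine le_trans (hy j) (min_le_min le_rfl ?_)
      have hcast : (a:ℝ) ≤ (b:ℝ) := Nat.cast_le.2 hab
      have h1 : (1:ℝ)/(b+2) ≤ 1/(a+2) :=
        one_div_le_one_div_of_le (by positivity) (by linarith)
      linarith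
    have hsubv : ∀ n, orthant (v n) ⊆ orthant u := fun n y hy j => (hy j).trans (hvle n j)
    have hcover : orthant u \ (⋃ n, orthant (v n)) ⊆
        ⋃ m, (fun y : Fin d → ℝ => y m) ⁻¹' {(1:ℝ)} := by
      rintro y ⟨hyu, hyn⟩
      by_contra hcon
      simp only [mem_iUnion, mem_preimage, mem_singleton_iff, not_exists] at hcon
      have hylt : ∀ m, y m < 1 := fun m => lt_of_le_of_ne ((hyu m).trans (hu01 m).2) (hcon m)
      obtain ⟨c, hcle, hclt⟩ : ∃ c, (∀ m, y m ≤ c) ∧ c < 1 := by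
        refine ⟨Finset.univ.sup' Finset.univ_nonempty y,
          fun m => Finset.le_sup' y (Finset.mem_univ m), ?_⟩
        exact (Finset.sup'_lt_iff Finset.univ_nonempty).2 fun m _ => hylt m
      obtain ⟨n, hn⟩ := exists_nat_one_div_lt (sub_pos.2 hclt)
      refine hyn (mem_iUnion.2 ⟨n, fun j => le_min (hyu j) ?_⟩)
      have h12 : (1:ℝ)/(n+2) ≤ 1/(n+1) :=
        one_div_le_one_div_of_le (by positivity) (by linarith)
      linarith [hcle j]
    have hone : ∀ κ : Measure (Fin d → ℝ),
        (∀ m : Fin d, κ.map (fun y => y m) = volume.restrict (Icc (0:ℝ) 1)) →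
        ∀ m : Fin d, κ ((fun y : Fin d → ℝ => y m) ⁻¹' {(1:ℝ)}) = 0 := by
      intro κ hκ m
      rw [key κ hκ m {1} (measurableSet_singleton 1)]
      exact measure_mono_null inter_subset_left (measure_singleton 1)
    have hlim : ∀ κ : Measure (Fin d → ℝ),
        (∀ m : Fin d, κ.map (fun y => y m) = volume.restrict (Icc (0:ℝ) 1)) →
        κ (orthant u) = ⨆ n, κ (orthant (v n)) := by
      intro κ hκ
      have h1 : κ (⋃ n, orthant (v n)) = κ (orthant u) :=
        measure_eq_measure_of_null_diff (iUnion_subset hsubv)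
          (measure_mono_null hcover (measure_iUnion_null fun m => hone κ hκ m))
      rw [← h1, Directed.measure_iUnion hvm.directed_le]
    have hagree : ∀ n, ν' (orthant (v n)) = ν (orthant (v n)) := by
      intro n
      have hx : ∀ j, ∃ t, F j t = v n j := fun j =>
        SklarAux.exists_cdf_eq (ρ j) (hFρ j) (hFc j) (hv0 n j) (hv1 n j)
      choose x hxeq using hx
      have hTx : (fun m => F m (x m)) = v n := funext hxeq
      have e1 : (μ (orthant x)).toReal = (ν (orthant (v n))).toReal := by
        rw [hHeq x]
        have : T x = v n := hTx
        rw [this]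
      have e2 : (μ (orthant x)).toReal = (ν' (orthant (v n))).toReal := by
        rw [hH' x, hTx, hC' (v n) (hvbox n)]
      exact (ENNReal.toReal_eq_toReal_iff' (measure_ne_top _ _) (measure_ne_top _ _)).1
        (e2.symm.trans e1)
    rw [hlim ν' hν'marg, hlim ν hν_marg]
    exact iSup_congr hagree
end
end

section
/- For every 0 < r < 2, the global weak Besov space W_G(r) is contained in the local weak Besov space W_L(r), and the inclusion is strict: there exists f ∈ L²([0,1]^d) with f ∈ W_L(r) but f ∉ W_G(r). -/
open MeasureTheory ProbabilityTheory Real Set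
open scoped ENNReal NNReal

noncomputable section

attribute [local instance] Classical.propDecidable

namespace CopulaEstimation

/-- The unit cube `[0,1]^d`. -/
def box (d : ℕ) : Set (Fin d → ℝ) := Set.univ.pi fun _ => Set.Icc (0 : ℝ) 1

/-- Rescaled and translated univariate function `h_{j,k}(x) = 2^{j/2} h(2^j x - k)`. -/
def wsc (h : ℝ → ℝ) (j : ℕ) (k : ℤ) (x : ℝ) : ℝ :=
  (2 : ℝ) ^ ((j : ℝ) / 2) * h ((2 : ℝ) ^ (j : ℕ) * x - (k : ℝ))

/-- The index set `S_d = {0,1}^d \ {(0,…,0)}`. -/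
def Sd (d : ℕ) : Type := {ε : Fin d → Bool // ε ≠ fun _ => false}

instance (d : ℕ) : Fintype (Sd d) := by unfold Sd; infer_instance

/-- Tensorized scaling function `φ_{j,k}`. -/
def tensS (φ : ℝ → ℝ) {d : ℕ} (j : ℕ) (k : Fin d → ℤ) (x : Fin d → ℝ) : ℝ :=
  ∏ m, wsc φ j (k m) (x m)

/-- Tensorized wavelet `ψ^ε_{j,k}`. -/
def tensW (φ ψ : ℝ → ℝ) {d : ℕ} (j : ℕ) (ε : Fin d → Bool) (k : Fin d → ℤ)
    (x : Fin d → ℝ) : ℝ :=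
  ∏ m, if ε m then wsc ψ j (k m) (x m) else wsc φ j (k m) (x m)

/-- Scaling coefficient `f_{j,k}` of a function supported on the unit cube. -/
def coefS (φ : ℝ → ℝ) {d : ℕ} (f : (Fin d → ℝ) → ℝ) (j : ℕ) (k : Fin d → ℤ) : ℝ :=
  ∫ x in box d, f x * tensS φ j k x

/-- Wavelet coefficient `f^ε_{j,k}` of a function supported on the unit cube. -/
def coefW (φ ψ : ℝ → ℝ) {d : ℕ} (f : (Fin d → ℝ) → ℝ) (j : ℕ) (k : Fin d → ℤ)
    (ε : Fin d → Bool) : ℝ :=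
  ∫ x in box d, f x * tensW φ ψ j ε k x

/-- The hypotheses on the pair `(φ, ψ)`: continuously differentiable, supported on `[0, L]`,
and generating, at every coarse level `j₀`, an orthonormal basis of `L²(ℝ^d)`
(orthonormality together with the Parseval identity). -/
def IsWaveletBasis (d : ℕ) (L : ℝ) (φ ψ : ℝ → ℝ) : Prop :=
  ContDiff ℝ 1 φ ∧ ContDiff ℝ 1 ψ ∧
  (∀ x, x ∉ Set.Icc (0 : ℝ) L → φ x = 0) ∧
  (∀ x, x ∉ Set.Icc (0 : ℝ) L → ψ x = 0) ∧
  (∀ (j j' : ℕ) (k k' : Fin d → ℤ) (ε ε' : Sd d),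
    ∫ x : Fin d → ℝ, tensW φ ψ j ε.1 k x * tensW φ ψ j' ε'.1 k' x
      = if j = j' ∧ k = k' ∧ ε = ε' then 1 else 0) ∧
  (∀ (j : ℕ) (k k' : Fin d → ℤ),
    ∫ x : Fin d → ℝ, tensS φ j k x * tensS φ j k' x = if k = k' then 1 else 0) ∧
  (∀ (j₀ j : ℕ), j₀ ≤ j → ∀ (k k' : Fin d → ℤ) (ε : Sd d),
    ∫ x : Fin d → ℝ, tensS φ j₀ k x * tensW φ ψ j ε.1 k' x = 0) ∧
  (∀ (j₀ : ℕ) (f : (Fin d → ℝ) → ℝ), MemLp f 2 volume →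
    ∫ x, (f x) ^ 2
      = (∑' k : Fin d → ℤ, (∫ x, f x * tensS φ j₀ k x) ^ 2)
        + ∑' (j : {j : ℕ // j₀ ≤ j}) (k : Fin d → ℤ) (ε : Sd d),
            (∫ x, f x * tensW φ ψ j.1 ε.1 k x) ^ 2)

/-- Membership in the Besov space `B^s_{2∞}` of `L²([0,1]^d)`, in terms of wavelet
coefficients. -/
def MemBesov (φ ψ : ℝ → ℝ) {d : ℕ} (s : ℝ) (f : (Fin d → ℝ) → ℝ) : Prop :=
  (⨆ J : ℕ, ENNReal.ofReal ((2 : ℝ) ^ (2 * (J : ℝ) * s)) *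
      ∑' (j : {j : ℕ // J < j}) (k : Fin d → ℤ) (ε : Sd d),
        ENNReal.ofReal ((coefW φ ψ f j.1 k ε.1) ^ 2)) < ⊤

/-- Membership in the local weak Besov space `W_L(r)`. -/
def MemWeakL (φ ψ : ℝ → ℝ) {d : ℕ} (r : ℝ) (f : (Fin d → ℝ) → ℝ) : Prop :=
  (⨆ lam ∈ Set.Ioc (0 : ℝ) 1, ENNReal.ofReal (lam ^ (r - 2)) *
      ∑' (j : ℕ) (k : Fin d → ℤ) (ε : Sd d),
        (if |coefW φ ψ f j k ε.1| ≤ lam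
          then ENNReal.ofReal ((coefW φ ψ f j k ε.1) ^ 2) else 0)) < ⊤

/-- Membership in the global weak Besov space `W_G(r)`. -/
def MemWeakG (φ ψ : ℝ → ℝ) {d : ℕ} (r : ℝ) (f : (Fin d → ℝ) → ℝ) : Prop :=
  (⨆ lam ∈ Set.Ioc (0 : ℝ) 1, ENNReal.ofReal (lam ^ (r - 2)) *
      ∑' (j : ℕ) (k : Fin d → ℤ) (ε : Sd d),
        (if (∑' k' : Fin d → ℤ, (coefW φ ψ f j k' ε.1) ^ 2) ≤ (2 : ℝ) ^ (d * j) * lam ^ 2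
          then ENNReal.ofReal ((coefW φ ψ f j k ε.1) ^ 2) else 0)) < ⊤

/-- Essential boundedness of `f` on `[0,1]^d`. -/
def MemLinf {d : ℕ} (f : (Fin d → ℝ) → ℝ) : Prop :=
  ∃ M : ℝ, ∀ᵐ x ∂(volume.restrict (box d)), |f x| ≤ M

end CopulaEstimation

namespace CEProof
open CopulaEstimation

lemma measurableSet_box (d : ℕ) : MeasurableSet (box d) :=
  MeasurableSet.univ_pi fun _ => measurableSet_Icc

lemma volume_box (d : ℕ) : volume (box d) = 1 := by
  rw [box, volume_pi_pi]
  simp [Real.volume_Icc]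

instance (d : ℕ) : IsFiniteMeasure (volume.restrict (box d)) := by
  constructor
  rw [Measure.restrict_apply_univ, volume_box]
  exact ENNReal.one_lt_top

variable {L : ℝ} {φ ψ : ℝ → ℝ} {d : ℕ}

lemma exists_bound (hφ : Continuous φ) (hψ : Continuous ψ) :
    ∃ M : ℝ, 1 ≤ M ∧ ∀ x ∈ Set.Icc (0:ℝ) L, |φ x| ≤ M ∧ |ψ x| ≤ M := by
  obtain ⟨C1, hC1⟩ := isCompact_Icc.exists_bound_of_continuousOn
    (hφ.continuousOn (s := Set.Icc (0:ℝ) L))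
  obtain ⟨C2, hC2⟩ := isCompact_Icc.exists_bound_of_continuousOn
    (hψ.continuousOn (s := Set.Icc (0:ℝ) L))
  refine ⟨max (max C1 C2) 1, le_max_right _ _, fun x hx => ⟨?_, ?_⟩⟩
  · exact le_trans (hC1 x hx) (le_trans (le_max_left _ _) (le_max_left _ _))
  · exact le_trans (hC2 x hx) (le_trans (le_max_right _ _) (le_max_left _ _))

lemma exists_bound' (hφ : Continuous φ) (hψ : Continuous ψ)
    (h0φ : ∀ x, x ∉ Set.Icc (0:ℝ) L → φ x = 0) (h0ψ : ∀ x, x ∉ Set.Icc (0:ℝ) L → ψ x = 0) :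
    ∃ M : ℝ, 1 ≤ M ∧ ∀ x, |φ x| ≤ M ∧ |ψ x| ≤ M := by
  obtain ⟨M, hM1, hM⟩ := exists_bound (L := L) hφ hψ
  refine ⟨M, hM1, fun x => ?_⟩
  by_cases hx : x ∈ Set.Icc (0:ℝ) L
  · exact hM x hx
  · rw [h0φ x hx, h0ψ x hx]
    simp only [abs_zero]
    constructor <;> linarith

/-- uniform rewriting of the factors of `tensW` -/
lemma tensW_apply (j : ℕ) (ε : Fin d → Bool) (k : Fin d → ℤ) (x : Fin d → ℝ) :
    tensW φ ψ j ε k x = ∏ m, wsc (if ε m then ψ else φ) j (k m) (x m) := by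
  unfold tensW
  refine Finset.prod_congr rfl fun m _ => ?_
  by_cases h : ε m <;> simp [h]

lemma wsc_continuous {h : ℝ → ℝ} (hc : Continuous h) (j : ℕ) (k : ℤ) :
    Continuous (wsc h j k) := by
  unfold wsc
  fun_prop

lemma tensW_continuous (hφ : Continuous φ) (hψ : Continuous ψ) (j : ℕ) (ε : Fin d → Bool)
    (k : Fin d → ℤ) : Continuous (tensW φ ψ j ε k) := by
  simp only [funext (tensW_apply (φ := φ) (ψ := ψ) j ε k)]
  refine continuous_finset_prod _ fun m _ => ?_
  exact (wsc_continuous (by by_cases h : ε m <;> simp [h, hφ, hψ]) j (k m)).comp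
    (continuous_apply m)

lemma wsc_bound {h : ℝ → ℝ} {M : ℝ} (hM : ∀ x, |h x| ≤ M) (j : ℕ) (k : ℤ) (x : ℝ) :
    |wsc h j k x| ≤ (2 : ℝ) ^ ((j : ℝ) / 2) * M := by
  unfold wsc
  rw [abs_mul, abs_of_nonneg (le_of_lt (Real.rpow_pos_of_pos two_pos _))]
  exact mul_le_mul_of_nonneg_left (hM _) (le_of_lt (Real.rpow_pos_of_pos two_pos _))

lemma tensW_bound {M : ℝ} (hM1 : 1 ≤ M) (hMφ : ∀ x, |φ x| ≤ M) (hMψ : ∀ x, |ψ x| ≤ M)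
    (j : ℕ) (ε : Fin d → Bool) (k : Fin d → ℤ) (x : Fin d → ℝ) :
    |tensW φ ψ j ε k x| ≤ ((2 : ℝ) ^ ((j : ℝ) / 2) * M) ^ d := by
  rw [tensW_apply, Finset.abs_prod]
  have : ((2 : ℝ) ^ ((j : ℝ) / 2) * M) ^ d = ∏ _m : Fin d, ((2 : ℝ) ^ ((j : ℝ) / 2) * M) := by
    simp [Finset.prod_const]
  rw [this]
  refine Finset.prod_le_prod (fun m _ => abs_nonneg _) fun m _ => ?_
  exact wsc_bound (by by_cases h : ε m <;> simp [h, hMφ, hMψ]) j (k m) (x m)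

lemma wsc_support {h : ℝ → ℝ} (h0 : ∀ x, x ∉ Set.Icc (0:ℝ) L → h x = 0) {j : ℕ} {k : ℤ}
    {x : ℝ} (hx : wsc h j k x ≠ 0) : (k : ℝ) ≤ 2 ^ j * x ∧ 2 ^ j * x ≤ k + L := by
  by_contra hc
  push_neg at hc
  apply hx
  unfold wsc
  rw [h0 _ ?_, mul_zero]
  intro hmem
  rw [Set.mem_Icc] at hmem
  obtain ⟨h1, h2⟩ := hmem
  have hk : (k : ℝ) ≤ 2 ^ j * x := by linarith
  have := hc hk
  linarith

lemma tensW_support (h0φ : ∀ x, x ∉ Set.Icc (0:ℝ) L → φ x = 0)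
    (h0ψ : ∀ x, x ∉ Set.Icc (0:ℝ) L → ψ x = 0) {j : ℕ} {ε : Fin d → Bool} {k : Fin d → ℤ}
    {x : Fin d → ℝ} (hx : tensW φ ψ j ε k x ≠ 0) (m : Fin d) :
    (k m : ℝ) ≤ 2 ^ j * x m ∧ 2 ^ j * x m ≤ k m + L := by
  rw [tensW_apply] at hx
  have := Finset.prod_ne_zero_iff.1 hx m (Finset.mem_univ m)
  refine wsc_support ?_ this
  by_cases h : ε m
  · rw [if_pos h]; exact h0ψ
  · rw [if_neg h]; exact h0φ

lemma tensW_hasCompactSupport (h0φ : ∀ x, x ∉ Set.Icc (0:ℝ) L → φ x = 0)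
    (h0ψ : ∀ x, x ∉ Set.Icc (0:ℝ) L → ψ x = 0) (j : ℕ) (ε : Fin d → Bool) (k : Fin d → ℤ) :
    HasCompactSupport (tensW φ ψ (d := d) j ε k) := by
  refine HasCompactSupport.intro
    (K := Set.univ.pi fun m => Set.Icc ((k m : ℝ)/2^j) (((k m : ℝ)+L)/2^j))
    (isCompact_univ_pi fun m => isCompact_Icc) ?_
  intro x hx
  by_contra h0
  apply hx
  rw [Set.mem_univ_pi]
  intro m
  obtain ⟨h1, h2⟩ := tensW_support h0φ h0ψ h0 m
  have hp : (0:ℝ) < 2 ^ j := by positivity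
  rw [Set.mem_Icc]
  constructor
  · rw [div_le_iff₀ hp]
    linarith [mul_comm ((2:ℝ)^j) (x m)]
  · rw [le_div_iff₀ hp]
    linarith [mul_comm ((2:ℝ)^j) (x m)]

lemma tensW_memℒp (hφ : Continuous φ) (hψ : Continuous ψ)
    (h0φ : ∀ x, x ∉ Set.Icc (0:ℝ) L → φ x = 0) (h0ψ : ∀ x, x ∉ Set.Icc (0:ℝ) L → ψ x = 0)
    (j : ℕ) (ε : Fin d → Bool) (k : Fin d → ℤ) (p : ℝ≥0∞) :
    MemLp (tensW φ ψ (d := d) j ε k) p volume :=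
  (tensW_continuous hφ hψ j ε k).memLp_of_hasCompactSupport
    (tensW_hasCompactSupport h0φ h0ψ j ε k)

lemma coefW_eq_integral (f : (Fin d → ℝ) → ℝ) (j : ℕ) (k : Fin d → ℤ) (ε : Fin d → Bool) :
    coefW φ ψ f j k ε = ∫ x, (box d).indicator f x * tensW φ ψ j ε k x := by
  rw [coefW, ← integral_indicator (measurableSet_box d)]
  congr 1
  funext x
  exact Set.indicator_mul_left (i := x) (box d) f (tensW φ ψ j ε k)

/-- the finite set of indices `k` for which the coefficient can be nonzero -/
def Kfin (L : ℝ) (d j : ℕ) : Finset (Fin d → ℤ) :=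
  Fintype.piFinset fun _ => Finset.Icc (-(⌈L⌉₊ : ℤ)) (2 ^ j)

lemma coefW_eq_zero (hL : 1 ≤ L)
    (h0φ : ∀ x, x ∉ Set.Icc (0:ℝ) L → φ x = 0) (h0ψ : ∀ x, x ∉ Set.Icc (0:ℝ) L → ψ x = 0)
    (f : (Fin d → ℝ) → ℝ) {j : ℕ} {k : Fin d → ℤ} (ε : Fin d → Bool)
    (hk : k ∉ Kfin L d j) : coefW φ ψ f j k ε = 0 := by
  rw [coefW, setIntegral_congr_fun (measurableSet_box d) (g := fun _ => (0:ℝ)) ?_,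
    integral_zero]
  intro x hx
  suffices h : tensW φ ψ j ε k x = 0 by
    simp only [h, mul_zero]
  by_contra h0
  apply hk
  rw [Kfin, Fintype.mem_piFinset]
  intro m
  obtain ⟨h1, h2⟩ := tensW_support h0φ h0ψ h0 m
  have hxm : 0 ≤ x m ∧ x m ≤ 1 := by
    rw [box, Set.mem_univ_pi] at hx
    exact ⟨(hx m).1, (hx m).2⟩
  have hLceil : L ≤ (⌈L⌉₊ : ℝ) := Nat.le_ceil L
  have hp1 : (1:ℝ) ≤ 2 ^ j := one_le_pow₀ (by norm_num)
  rw [Finset.mem_Icc]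
  constructor
  · by_contra hlt
    push_neg at hlt
    have : (k m : ℝ) + 1 ≤ -(⌈L⌉₊ : ℝ) := by
      have : (k m : ℤ) + 1 ≤ -(⌈L⌉₊ : ℤ) := hlt
      exact_mod_cast this
    have hx2 : (0:ℝ) ≤ 2 ^ j * x m := mul_nonneg (by positivity) hxm.1
    linarith
  · by_contra hlt
    push_neg at hlt
    have : ((2:ℝ)^j) + 1 ≤ (k m : ℝ) := by
      have : (2:ℤ)^j + 1 ≤ k m := hlt
      exact_mod_cast this
    have hx2 : 2 ^ j * x m ≤ (2:ℝ) ^ j := by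
      nlinarith [hxm.1, hxm.2]
    linarith

lemma sum_pow_le {x : ℝ} (hx : 2 ≤ x) : ∀ n : ℕ, ∑ i ∈ Finset.range (n+1), x ^ i ≤ 2 * x ^ n := by
  intro n
  induction n with
  | zero => simp
  | succ n ih =>
    rw [Finset.sum_range_succ]
    have h1 : (0:ℝ) ≤ x ^ n := by positivity
    have h2 : 2 * x ^ n ≤ x * x ^ n := by nlinarith
    rw [pow_succ]
    nlinarith

lemma tsum_ite_pow_le {x D : ℝ} (hx : 2 ≤ x) (hD : 0 ≤ D) (P : ℕ → Prop)
    (hmono : ∀ {i j : ℕ}, i ≤ j → P j → P i)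
    (hle : ∀ j, P j → x ^ j ≤ D) :
    ∑' j : ℕ, (if P j then ENNReal.ofReal (x ^ j) else 0) ≤ ENNReal.ofReal (2 * D) := by
  by_cases hforall : ∀ j, P j
  · exfalso
    obtain ⟨n, hn⟩ := pow_unbounded_of_one_lt D (by linarith : (1:ℝ) < x)
    exact absurd (hle n (hforall n)) (not_le.2 hn)
  · push_neg at hforall
    set N := Nat.find hforall with hN
    have hnotP : ∀ j, N ≤ j → ¬ P j := fun j hj hPj => Nat.find_spec hforall (hmono hj hPj)
    rw [tsum_eq_sum (s := Finset.range N)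
      (fun j hj => by rw [if_neg (hnotP j (by simpa using hj))])]
    rcases Nat.eq_zero_or_pos N with h0 | hpos
    · simp [h0]
    · have hPN : P (N-1) := not_not.1 (Nat.find_min hforall (by omega))
      calc ∑ j ∈ Finset.range N, (if P j then ENNReal.ofReal (x ^ j) else 0)
          ≤ ∑ j ∈ Finset.range N, ENNReal.ofReal (x ^ j) :=
            Finset.sum_le_sum fun j _ => by split <;> simp
        _ = ENNReal.ofReal (∑ j ∈ Finset.range N, x ^ j) :=
            (ENNReal.ofReal_sum_of_nonneg fun j _ => by positivity).symm
        _ ≤ ENNReal.ofReal (2 * x ^ (N-1)) := ENNReal.ofReal_le_ofReal (by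
            have := sum_pow_le hx (N-1)
            have hNN : N - 1 + 1 = N := by omega
            rwa [hNN] at this)
        _ ≤ ENNReal.ofReal (2 * D) := ENNReal.ofReal_le_ofReal (by
            have := hle _ hPN
            linarith)

lemma bad_level_bound {r t E B s lam : ℝ} (hr0 : 0 < r) (hr2 : r < 2)
    (hB : 1 ≤ B) (hlam0 : 0 < lam) (hlam1 : lam ≤ 1) (ht : 0 ≤ t) (hE : 0 ≤ E)
    (hgt : B * lam ^ 2 < s) (hsE : s ≤ E)
    (hsmall : s ≤ B → s ≤ t * (s / B) ^ ((2 - r)/2)) :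
    B * lam ^ r ≤ t + E := by
  have hB0 : (0:ℝ) < B := by linarith
  have hs0 : 0 < s := lt_of_le_of_lt (by positivity) hgt
  by_cases hcase : s ≤ B
  · have h1 := hsmall hcase
    have hX0 : 0 < s ^ ((2-r)/2) := Real.rpow_pos_of_pos hs0 _
    have hY0 : 0 < B ^ ((2-r)/2) := Real.rpow_pos_of_pos hB0 _
    have hXZ : s ^ ((2-r)/2) * s ^ (r/2) = s := by
      rw [← Real.rpow_add hs0, show (2-r)/2 + r/2 = 1 by ring, Real.rpow_one]
    have hYW : B ^ ((2-r)/2) * B ^ (r/2) = B := by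
      rw [← Real.rpow_add hB0, show (2-r)/2 + r/2 = 1 by ring, Real.rpow_one]
    have e2 : (s / B) ^ ((2-r)/2) = s ^ ((2-r)/2) / B ^ ((2-r)/2) :=
      Real.div_rpow hs0.le hB0.le _
    have h1' : s * B ^ ((2-r)/2) ≤ t * s ^ ((2-r)/2) := by
      have h := mul_le_mul_of_nonneg_right h1 hY0.le
      rw [e2] at h
      calc s * B ^ ((2-r)/2) ≤ t * (s ^ ((2-r)/2) / B ^ ((2-r)/2)) * B ^ ((2-r)/2) := h
        _ = t * s ^ ((2-r)/2) := by field_simp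
    have h3 : s ^ (r/2) * B ^ ((2-r)/2) ≤ t := by
      have hmul : s ^ ((2-r)/2) * (s ^ (r/2) * B ^ ((2-r)/2)) ≤ s ^ ((2-r)/2) * t := by
        calc s ^ ((2-r)/2) * (s ^ (r/2) * B ^ ((2-r)/2))
            = (s ^ ((2-r)/2) * s ^ (r/2)) * B ^ ((2-r)/2) := by ring
          _ = s * B ^ ((2-r)/2) := by rw [hXZ]
          _ ≤ t * s ^ ((2-r)/2) := h1'
          _ = s ^ ((2-r)/2) * t := by ring
      exact le_of_mul_le_mul_left hmul hX0
    have hZ : (B * lam ^ 2) ^ (r/2) ≤ s ^ (r/2) :=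
      Real.rpow_le_rpow (by positivity) hgt.le (by positivity)
    have hZW : (B * lam ^ 2) ^ (r/2) = B ^ (r/2) * lam ^ r := by
      rw [Real.mul_rpow hB0.le (by positivity)]
      congr 1
      rw [← Real.rpow_natCast lam 2, ← Real.rpow_mul hlam0.le,
        show ((2:ℕ):ℝ) * (r/2) = r by push_cast; ring]
    have h4 : B * lam ^ r ≤ t := by
      calc B * lam ^ r = (B ^ ((2-r)/2) * B ^ (r/2)) * lam ^ r := by rw [hYW]
        _ = (B ^ (r/2) * lam ^ r) * B ^ ((2-r)/2) := by ring
        _ ≤ s ^ (r/2) * B ^ ((2-r)/2) := by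
            rw [← hZW]
            exact mul_le_mul_of_nonneg_right hZ hY0.le
        _ ≤ t := h3
    linarith
  · push_neg at hcase
    have hlr : lam ^ r ≤ 1 := Real.rpow_le_one hlam0.le hlam1 hr0.le
    have hlr0 : 0 ≤ lam ^ r := Real.rpow_nonneg hlam0.le r
    nlinarith

lemma bessel (hφ : Continuous φ) (hψ : Continuous ψ)
    (h0φ : ∀ x, x ∉ Set.Icc (0:ℝ) L → φ x = 0) (h0ψ : ∀ x, x ∉ Set.Icc (0:ℝ) L → ψ x = 0)
    (hortho : ∀ (j j' : ℕ) (k k' : Fin d → ℤ) (ε ε' : Sd d),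
      ∫ x : Fin d → ℝ, tensW φ ψ j ε.1 k x * tensW φ ψ j' ε'.1 k' x
        = if j = j' ∧ k = k' ∧ ε = ε' then 1 else 0)
    (f : (Fin d → ℝ) → ℝ) (hf : MemLp f 2 (volume.restrict (box d))) (j : ℕ) (ε : Sd d) :
    Summable (fun k : Fin d → ℤ => (coefW φ ψ f j k ε.1) ^ 2) ∧
      ∑' k : Fin d → ℤ, (coefW φ ψ f j k ε.1) ^ 2 ≤ ∫ x, ((box d).indicator f x) ^ 2 := by
  obtain ⟨M, hM1, hM⟩ := exists_bound' hφ hψ h0φ h0ψ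
  set g := (box d).indicator f with hg
  have hgme : MemLp g 2 volume := (memLp_indicator_iff_restrict (measurableSet_box d)).2 hf
  have hgsq : Integrable (fun x => g x ^ 2) volume := hgme.integrable_sq
  have hgint : Integrable g volume := by
    rw [hg, integrable_indicator_iff (measurableSet_box d)]
    exact memLp_one_iff_integrable.1 (hf.mono_exponent (by norm_num))
  set Ψ : (Fin d → ℤ) → (Fin d → ℝ) → ℝ := fun k => tensW φ ψ j ε.1 k with hΨ
  have hΨc : ∀ k, Continuous (Ψ k) := fun k => tensW_continuous hφ hψ j ε.1 k
  have hΨcs : ∀ k, HasCompactSupport (Ψ k) := fun k => tensW_hasCompactSupport h0φ h0ψ j ε.1 k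
  have hΨbd : ∀ k x, ‖Ψ k x‖ ≤ ((2:ℝ) ^ ((j:ℝ)/2) * M) ^ d := fun k x => by
    rw [Real.norm_eq_abs]
    exact tensW_bound hM1 (fun y => (hM y).1) (fun y => (hM y).2) j ε.1 k x
  have hgΨ : ∀ k, Integrable (fun x => g x * Ψ k x) volume := by
    intro k
    have h := hgint.bdd_mul (hΨc k).aestronglyMeasurable (Filter.Eventually.of_forall (hΨbd k))
    simpa only [mul_comm] using h
  have hC : ∀ k, coefW φ ψ f j k ε.1 = ∫ x, g x * Ψ k x := fun k => coefW_eq_integral f j k ε.1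
  have hΨΨ : ∀ k k', Integrable (fun x => Ψ k x * Ψ k' x) volume := fun k k' =>
    ((hΨc k).mul (hΨc k')).integrable_of_hasCompactSupport ((hΨcs k).mul_right)
  have horthoΨ : ∀ k k', ∫ x, Ψ k x * Ψ k' x = if k = k' then (1:ℝ) else 0 := by
    intro k k'
    have h := hortho j j k k' ε ε
    simpa using h
  have key : ∀ F : Finset (Fin d → ℤ), ∑ k ∈ F, (coefW φ ψ f j k ε.1)^2 ≤ ∫ x, g x ^ 2 := by
    intro F
    set c : (Fin d → ℤ) → ℝ := fun k => coefW φ ψ f j k ε.1 with hcdef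
    set h : (Fin d → ℝ) → ℝ := fun x => ∑ k ∈ F, c k * Ψ k x with hh
    have he : (fun x => g x * h x) = fun x => ∑ k ∈ F, c k * (g x * Ψ k x) := by
      funext x
      rw [hh]
      simp only [Finset.mul_sum]
      exact Finset.sum_congr rfl fun k _ => by ring
    have hgh_int : Integrable (fun x => g x * h x) volume := by
      rw [he]
      exact integrable_finset_sum F fun k _ => (hgΨ k).const_mul _
    have hh2eq : (fun x => h x ^ 2)
        = fun x => ∑ k ∈ F, ∑ k' ∈ F, (c k * c k') * (Ψ k x * Ψ k' x) := by
      funext x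
      rw [hh]
      simp only [sq, Finset.sum_mul_sum]
      exact Finset.sum_congr rfl fun k _ => Finset.sum_congr rfl fun k' _ => by ring
    have hh2_int : Integrable (fun x => h x ^ 2) volume := by
      rw [hh2eq]
      exact integrable_finset_sum F fun k _ =>
        integrable_finset_sum F fun k' _ => (hΨΨ k k').const_mul _
    have hgh_val : ∫ x, g x * h x = ∑ k ∈ F, c k ^ 2 := by
      rw [he, integral_finset_sum F fun k _ => (hgΨ k).const_mul _]
      refine Finset.sum_congr rfl fun k _ => ?_
      rw [integral_const_mul _ _, ← hC k, sq]
    have hh2_val : ∫ x, h x ^ 2 = ∑ k ∈ F, c k ^ 2 := by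
      rw [hh2eq, integral_finset_sum F fun k _ =>
        integrable_finset_sum F fun k' _ => (hΨΨ k k').const_mul _]
      refine Finset.sum_congr rfl fun k hk => ?_
      rw [integral_finset_sum F fun k' _ => (hΨΨ k k').const_mul _]
      have hterm : ∀ k' ∈ F, (∫ x, (c k * c k') * (Ψ k x * Ψ k' x))
          = if k = k' then c k ^ 2 else 0 := by
        intro k' _
        rw [integral_const_mul _ _, horthoΨ k k']
        by_cases hkk : k = k'
        · subst hkk; rw [if_pos rfl, if_pos rfl, mul_one, sq]
        · rw [if_neg hkk, if_neg hkk, mul_zero]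
      rw [Finset.sum_congr rfl hterm, Finset.sum_ite_eq F k fun _ => c k ^ 2, if_pos hk]
    have hdiff : Integrable (fun x => g x ^ 2 - 2 * (g x * h x)) volume :=
      hgsq.sub (hgh_int.const_mul 2)
    have h0 : 0 ≤ ∫ x, (g x - h x) ^ 2 := integral_nonneg fun x => sq_nonneg _
    have hexp : ∫ x, (g x - h x) ^ 2 = (∫ x, g x ^ 2) - ∑ k ∈ F, c k ^ 2 := by
      have e : (fun x => (g x - h x) ^ 2)
          = fun x => (g x ^ 2 - 2 * (g x * h x)) + h x ^ 2 := by
        funext x; ring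
      rw [e, integral_add hdiff hh2_int, integral_sub hgsq (hgh_int.const_mul 2),
        integral_const_mul _ _, hgh_val, hh2_val]
      ring
    rw [hexp] at h0
    linarith
  have hsumm : Summable (fun k : Fin d → ℤ => (coefW φ ψ f j k ε.1) ^ 2) :=
    summable_of_sum_le (fun k => sq_nonneg _) key
  exact ⟨hsumm, hsumm.tsum_le_of_sum_le key⟩

set_option maxHeartbeats 2000000 in
theorem part1 {d : ℕ} (hd : 2 ≤ d) {L : ℝ} (hL : 1 ≤ L) {φ ψ : ℝ → ℝ}
    (hwav : IsWaveletBasis d L φ ψ) {r : ℝ} (hr0 : 0 < r) (hr2 : r < 2)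
    (f : (Fin d → ℝ) → ℝ) (hf : MemLp f 2 (volume.restrict (box d)))
    (hG : MemWeakG φ ψ r f) : MemWeakL φ ψ r f := by
  classical
  obtain ⟨hφc1, hψc1, h0φ, h0ψ, hortho, -, -, -⟩ := hwav
  have hφc : Continuous φ := hφc1.continuous
  have hψc : Continuous ψ := hψc1.continuous
  set E := ∫ x, ((box d).indicator f x) ^ 2 with hEdef
  have hE0 : 0 ≤ E := integral_nonneg fun x => sq_nonneg _
  have hbes := fun (j : ℕ) (ε : Sd d) => bessel hφc hψc h0φ h0ψ hortho f hf j ε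
  rw [MemWeakG] at hG
  rw [MemWeakL]
  set T := (⨆ lam ∈ Set.Ioc (0 : ℝ) 1, ENNReal.ofReal (lam ^ (r - 2)) *
      ∑' (j : ℕ) (k : Fin d → ℤ) (ε : Sd d),
        (if (∑' k' : Fin d → ℤ, (coefW φ ψ f j k' ε.1) ^ 2) ≤ (2 : ℝ) ^ (d * j) * lam ^ 2
          then ENNReal.ofReal ((coefW φ ψ f j k ε.1) ^ 2) else 0)) with hTdef
  have hT : T < ⊤ := hG
  set t := T.toReal with htdef
  have ht0 : 0 ≤ t := ENNReal.toReal_nonneg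
  set SG : ℝ → ℝ≥0∞ := fun lam => ∑' (j : ℕ) (k : Fin d → ℤ) (ε : Sd d),
        (if (∑' k' : Fin d → ℤ, (coefW φ ψ f j k' ε.1) ^ 2) ≤ (2 : ℝ) ^ (d * j) * lam ^ 2
          then ENNReal.ofReal ((coefW φ ψ f j k ε.1) ^ 2) else 0) with hSGdef
  have hSGle : ∀ lam : ℝ, 0 < lam → lam ≤ 1 →
      ENNReal.ofReal (lam ^ (r - 2)) * SG lam ≤ T := by
    intro lam h1 h2
    exact le_iSup₂ (f := fun (lam : ℝ) (_ : lam ∈ Set.Ioc (0:ℝ) 1) =>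
      ENNReal.ofReal (lam ^ (r - 2)) * SG lam) lam ⟨h1, h2⟩
  have hSGbound : ∀ lam : ℝ, 0 < lam → lam ≤ 1 →
      SG lam ≤ ENNReal.ofReal (lam ^ (2 - r)) * T := by
    intro lam h1 h2
    have h3 := hSGle lam h1 h2
    have hpos : 0 < lam ^ (r - 2) := Real.rpow_pos_of_pos h1 _
    have hne0 : ENNReal.ofReal (lam ^ (r - 2)) ≠ 0 := by
      simp only [ne_eq, ENNReal.ofReal_eq_zero, not_le]
      exact hpos
    calc SG lam = (ENNReal.ofReal (lam ^ (r-2)))⁻¹ * (ENNReal.ofReal (lam ^ (r-2)) * SG lam) := by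
          rw [← mul_assoc, ENNReal.inv_mul_cancel hne0 ENNReal.ofReal_ne_top, one_mul]
      _ ≤ (ENNReal.ofReal (lam ^ (r-2)))⁻¹ * T := by gcongr
      _ = ENNReal.ofReal (lam ^ (2-r)) * T := by
          rw [show (2-r) = -(r-2) by ring, Real.rpow_neg h1.le,
            ENNReal.ofReal_inv_of_pos hpos]
  -- the key bound on bad levels
  have hbad : ∀ lam : ℝ, 0 < lam → lam ≤ 1 → ∀ (j : ℕ) (ε : Sd d),
      ¬ ((∑' k' : Fin d → ℤ, (coefW φ ψ f j k' ε.1) ^ 2) ≤ (2 : ℝ) ^ (d * j) * lam ^ 2) →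
      (2 : ℝ) ^ (d * j) * lam ^ r ≤ t + E := by
    intro lam h1 h2 j ε hne
    push_neg at hne
    set s := ∑' k' : Fin d → ℤ, (coefW φ ψ f j k' ε.1) ^ 2 with hsdef
    have hB1 : (1:ℝ) ≤ 2 ^ (d * j) := one_le_pow₀ (by norm_num)
    have hB0 : (0:ℝ) < 2 ^ (d * j) := by positivity
    refine bad_level_bound hr0 hr2 hB1 h1 h2 ht0 hE0 hne (hbes j ε).2 ?_
    intro hsB
    have hs0 : 0 < s := lt_of_le_of_lt (by positivity) hne
    set mu := (s / 2 ^ (d * j)) ^ ((1:ℝ)/2) with hmu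
    have hsb0 : 0 < s / 2 ^ (d * j) := div_pos hs0 hB0
    have hmu0 : 0 < mu := Real.rpow_pos_of_pos hsb0 _
    have hmusq : mu ^ 2 = s / 2 ^ (d * j) := by
      rw [hmu, ← Real.rpow_natCast ((s / 2 ^ (d*j)) ^ ((1:ℝ)/2)) 2,
        ← Real.rpow_mul hsb0.le, show (1:ℝ)/2 * ((2:ℕ):ℝ) = 1 by push_cast; ring,
        Real.rpow_one]
    have hmu1 : mu ≤ 1 := by
      rw [hmu]
      exact Real.rpow_le_one hsb0.le ((div_le_one hB0).2 hsB) (by norm_num)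
    have hind : s ≤ (2:ℝ) ^ (d * j) * mu ^ 2 := by
      rw [hmusq]
      field_simp
      norm_num
    have h4 : ENNReal.ofReal s ≤ SG mu := by
      rw [hsdef, ENNReal.ofReal_tsum_of_nonneg (fun k => sq_nonneg _) (hbes j ε).1]
      calc ∑' k, ENNReal.ofReal ((coefW φ ψ f j k ε.1) ^ 2)
          = ∑' k : Fin d → ℤ,
            (if (∑' k' : Fin d → ℤ, (coefW φ ψ f j k' ε.1) ^ 2) ≤ (2:ℝ) ^ (d*j) * mu ^ 2
              then ENNReal.ofReal ((coefW φ ψ f j k ε.1) ^ 2) else 0) := by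
            exact tsum_congr fun k => (if_pos hind).symm
        _ ≤ ∑' (k : Fin d → ℤ) (ε' : Sd d),
            (if (∑' k' : Fin d → ℤ, (coefW φ ψ f j k' ε'.1) ^ 2) ≤ (2:ℝ) ^ (d*j) * mu ^ 2
              then ENNReal.ofReal ((coefW φ ψ f j k ε'.1) ^ 2) else 0) :=
            ENNReal.tsum_le_tsum fun k => ENNReal.le_tsum ε
        _ ≤ SG mu := ENNReal.le_tsum j
    have h5 : s ≤ mu ^ (2 - r) * t := by
      have h6 := h4.trans (hSGbound mu hmu0 hmu1)
      have hne' : ENNReal.ofReal (mu ^ (2-r)) * T ≠ ⊤ :=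
        ENNReal.mul_ne_top ENNReal.ofReal_ne_top hT.ne
      have h7 := (ENNReal.ofReal_le_iff_le_toReal hne').1 h6
      rwa [ENNReal.toReal_mul, ENNReal.toReal_ofReal
        (Real.rpow_nonneg hmu0.le _)] at h7
    have hmupow : mu ^ (2 - r) = (s / 2 ^ (d * j)) ^ ((2 - r)/2) := by
      rw [hmu, ← Real.rpow_mul hsb0.le]
      congr 1
      ring
    rw [hmupow] at h5
    calc s ≤ (s / 2 ^ (d*j)) ^ ((2-r)/2) * t := h5
      _ = t * (s / 2 ^ (d*j)) ^ ((2-r)/2) := by ring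
  -- assembly
  set CL : ℝ := ((⌈L⌉₊ : ℝ) + 2) ^ d with hCLdef
  have hCL0 : 0 ≤ CL := by positivity
  set S0 : ℕ := Fintype.card (Sd d) with hS0def
  set K : ℝ≥0∞ := ENNReal.ofReal ((S0 : ℝ) * (CL * (2 * (t + E)))) with hKdef
  have main : ∀ lam ∈ Set.Ioc (0:ℝ) 1,
      ENNReal.ofReal (lam ^ (r - 2)) *
        ∑' (j : ℕ) (k : Fin d → ℤ) (ε : Sd d),
          (if |coefW φ ψ f j k ε.1| ≤ lam
            then ENNReal.ofReal ((coefW φ ψ f j k ε.1) ^ 2) else 0) ≤ T + K := by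
    rintro lam ⟨h1, h2⟩
    set SB : ℝ≥0∞ := ∑' (j : ℕ) (k : Fin d → ℤ) (ε : Sd d),
        (if (∑' k' : Fin d → ℤ, (coefW φ ψ f j k' ε.1) ^ 2) ≤ (2:ℝ) ^ (d*j) * lam ^ 2
          then 0 else (if |coefW φ ψ f j k ε.1| ≤ lam
            then ENNReal.ofReal ((coefW φ ψ f j k ε.1) ^ 2) else 0)) with hSBdef
    have step1 : (∑' (j : ℕ) (k : Fin d → ℤ) (ε : Sd d),
        (if |coefW φ ψ f j k ε.1| ≤ lam
          then ENNReal.ofReal ((coefW φ ψ f j k ε.1) ^ 2) else 0)) ≤ SG lam + SB := by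
      rw [hSBdef, hSGdef]
      have hsplit : ∀ (j : ℕ) (k : Fin d → ℤ) (ε : Sd d),
          (if |coefW φ ψ f j k ε.1| ≤ lam
            then ENNReal.ofReal ((coefW φ ψ f j k ε.1) ^ 2) else 0)
          ≤ (if (∑' k' : Fin d → ℤ, (coefW φ ψ f j k' ε.1) ^ 2) ≤ (2:ℝ) ^ (d*j) * lam ^ 2
              then ENNReal.ofReal ((coefW φ ψ f j k ε.1) ^ 2) else 0)
            + (if (∑' k' : Fin d → ℤ, (coefW φ ψ f j k' ε.1) ^ 2) ≤ (2:ℝ) ^ (d*j) * lam ^ 2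
                then 0 else (if |coefW φ ψ f j k ε.1| ≤ lam
                  then ENNReal.ofReal ((coefW φ ψ f j k ε.1) ^ 2) else 0)) := by
        intro j k ε
        by_cases hc : (∑' k' : Fin d → ℤ, (coefW φ ψ f j k' ε.1) ^ 2)
            ≤ (2:ℝ) ^ (d*j) * lam ^ 2
        · rw [if_pos hc, if_pos hc, add_zero]
          split
          · exact le_refl _
          · exact zero_le
        · rw [if_neg hc, if_neg hc, zero_add]
      calc (∑' (j : ℕ) (k : Fin d → ℤ) (ε : Sd d),
            (if |coefW φ ψ f j k ε.1| ≤ lam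
              then ENNReal.ofReal ((coefW φ ψ f j k ε.1) ^ 2) else 0))
          ≤ ∑' (j : ℕ) (k : Fin d → ℤ) (ε : Sd d),
            ((if (∑' k' : Fin d → ℤ, (coefW φ ψ f j k' ε.1) ^ 2) ≤ (2:ℝ) ^ (d*j) * lam ^ 2
              then ENNReal.ofReal ((coefW φ ψ f j k ε.1) ^ 2) else 0)
            + (if (∑' k' : Fin d → ℤ, (coefW φ ψ f j k' ε.1) ^ 2) ≤ (2:ℝ) ^ (d*j) * lam ^ 2
                then 0 else (if |coefW φ ψ f j k ε.1| ≤ lam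
                  then ENNReal.ofReal ((coefW φ ψ f j k ε.1) ^ 2) else 0))) :=
            ENNReal.tsum_le_tsum fun j => ENNReal.tsum_le_tsum fun k =>
              ENNReal.tsum_le_tsum fun ε => hsplit j k ε
        _ = _ := by simp only [ENNReal.tsum_add]
    have hSB : SB ≤ ENNReal.ofReal (lam ^ ((2:ℝ) - r)) * K := by
      have hlamr : (0:ℝ) < lam ^ r := Real.rpow_pos_of_pos h1 r
      have hswap : SB = ∑' (j : ℕ) (ε : Sd d) (k : Fin d → ℤ),
          (if (∑' k' : Fin d → ℤ, (coefW φ ψ f j k' ε.1) ^ 2) ≤ (2:ℝ) ^ (d*j) * lam ^ 2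
            then 0 else (if |coefW φ ψ f j k ε.1| ≤ lam
              then ENNReal.ofReal ((coefW φ ψ f j k ε.1) ^ 2) else 0)) :=
        tsum_congr fun j => ENNReal.tsum_comm
      have hinner : ∀ (j : ℕ) (ε : Sd d),
          (∑' k : Fin d → ℤ,
            (if (∑' k' : Fin d → ℤ, (coefW φ ψ f j k' ε.1) ^ 2) ≤ (2:ℝ) ^ (d*j) * lam ^ 2
              then 0 else (if |coefW φ ψ f j k ε.1| ≤ lam
                then ENNReal.ofReal ((coefW φ ψ f j k ε.1) ^ 2) else 0)))
          ≤ (if (2:ℝ) ^ (d*j) * lam ^ r ≤ t + E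
              then ENNReal.ofReal ((CL * 2 ^ (d*j)) * lam ^ 2) else 0) := by
        intro j ε
        by_cases hc : (∑' k' : Fin d → ℤ, (coefW φ ψ f j k' ε.1) ^ 2)
            ≤ (2:ℝ) ^ (d*j) * lam ^ 2
        · simp only [if_pos hc, tsum_zero]
          exact zero_le
        · have hble := hbad lam h1 h2 j ε hc
          rw [if_pos hble]
          have hz : ∀ k ∉ Kfin L d j,
              (if (∑' k' : Fin d → ℤ, (coefW φ ψ f j k' ε.1) ^ 2) ≤ (2:ℝ) ^ (d*j) * lam ^ 2
                then 0 else (if |coefW φ ψ f j k ε.1| ≤ lam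
                  then ENNReal.ofReal ((coefW φ ψ f j k ε.1) ^ 2) else 0)) = 0 := by
            intro k hk
            rw [if_neg hc, coefW_eq_zero hL h0φ h0ψ f ε.1 hk]
            simp
          rw [tsum_eq_sum hz]
          have hcard : ((Kfin L d j).card : ℝ≥0∞) ≤ ENNReal.ofReal (CL * 2 ^ (d*j)) := by
            have hcn : (Kfin L d j).card = (2 ^ j + 1 + ⌈L⌉₊) ^ d := by
              rw [Kfin, Fintype.card_piFinset]
              have : (Finset.Icc (-(⌈L⌉₊ : ℤ)) (2 ^ j)).card = 2 ^ j + 1 + ⌈L⌉₊ := by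
                rw [Int.card_Icc, show ((2:ℤ)^j + 1 - -(⌈L⌉₊:ℤ)) = ((2^j + 1 + ⌈L⌉₊ : ℕ) : ℤ) by
                  push_cast; ring, Int.toNat_natCast]
              simp [this]
            have hle2 : (2 ^ j + 1 + ⌈L⌉₊) ^ d ≤ ((⌈L⌉₊ + 2) * 2 ^ j) ^ d := by
              have h2j : 1 ≤ 2 ^ j := Nat.one_le_two_pow
              exact Nat.pow_le_pow_left (by nlinarith) d
            calc ((Kfin L d j).card : ℝ≥0∞) ≤ ((((⌈L⌉₊ + 2) * 2 ^ j) ^ d : ℕ) : ℝ≥0∞) := by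
                  rw [hcn]; exact_mod_cast hle2
              _ = ENNReal.ofReal ((((⌈L⌉₊ + 2) * 2 ^ j) ^ d : ℕ) : ℝ) :=
                  (ENNReal.ofReal_natCast _).symm
              _ = ENNReal.ofReal (CL * 2 ^ (d*j)) := by
                  congr 1
                  rw [hCLdef]
                  push_cast
                  rw [mul_pow, ← pow_mul, Nat.mul_comm j d]
          calc (∑ k ∈ Kfin L d j,
                (if (∑' k' : Fin d → ℤ, (coefW φ ψ f j k' ε.1) ^ 2) ≤ (2:ℝ) ^ (d*j) * lam ^ 2
                  then 0 else (if |coefW φ ψ f j k ε.1| ≤ lam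
                    then ENNReal.ofReal ((coefW φ ψ f j k ε.1) ^ 2) else 0)))
              ≤ ∑ _k ∈ Kfin L d j, ENNReal.ofReal (lam ^ 2) := by
                refine Finset.sum_le_sum fun k _ => ?_
                rw [if_neg hc]
                split
                · rename_i habs
                  apply ENNReal.ofReal_le_ofReal
                  calc (coefW φ ψ f j k ε.1) ^ 2 = |coefW φ ψ f j k ε.1| ^ 2 := (sq_abs _).symm
                    _ ≤ lam ^ 2 := by nlinarith [abs_nonneg (coefW φ ψ f j k ε.1)]
                · exact zero_le
            _ = ((Kfin L d j).card : ℝ≥0∞) * ENNReal.ofReal (lam ^ 2) := by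
                rw [Finset.sum_const, nsmul_eq_mul]
            _ ≤ ENNReal.ofReal (CL * 2 ^ (d*j)) * ENNReal.ofReal (lam ^ 2) := by
                exact mul_le_mul_left hcard _
            _ = ENNReal.ofReal ((CL * 2 ^ (d*j)) * lam ^ 2) := by
                rw [← ENNReal.ofReal_mul (by positivity)]
      have hgeom : (∑' j : ℕ, (if (2:ℝ) ^ (d*j) * lam ^ r ≤ t + E
          then ENNReal.ofReal ((CL * 2 ^ (d*j)) * lam ^ 2) else 0))
          ≤ ENNReal.ofReal (CL * lam ^ 2) * ENNReal.ofReal (2 * ((t+E)/lam^r)) := by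
        have hrw : ∀ j : ℕ, (if (2:ℝ) ^ (d*j) * lam ^ r ≤ t + E
            then ENNReal.ofReal ((CL * 2 ^ (d*j)) * lam ^ 2) else 0)
            = ENNReal.ofReal (CL * lam ^ 2) *
              (if (2:ℝ) ^ (d*j) * lam ^ r ≤ t + E
                then ENNReal.ofReal (((2:ℝ) ^ d) ^ j) else 0) := by
          intro j
          by_cases hc : (2:ℝ) ^ (d*j) * lam ^ r ≤ t + E
          · rw [if_pos hc, if_pos hc, ← ENNReal.ofReal_mul (by positivity)]
            congr 1
            rw [← pow_mul]
            ring
          · rw [if_neg hc, if_neg hc, mul_zero]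
        rw [tsum_congr hrw, ENNReal.tsum_mul_left]
        refine mul_le_mul_right ?_ _
        refine tsum_ite_pow_le ?_ ?_ _ ?_ ?_
        · calc (2:ℝ) = 2 ^ 1 := (pow_one 2).symm
            _ ≤ 2 ^ d := by
              apply pow_le_pow_right₀ (by norm_num)
              omega
        · positivity
        · intro i j hij hPj
          have hmono2 : (2:ℝ) ^ (d*i) ≤ 2 ^ (d*j) :=
            pow_le_pow_right₀ (by norm_num) (Nat.mul_le_mul_left d hij)
          calc (2:ℝ) ^ (d*i) * lam ^ r ≤ 2 ^ (d*j) * lam ^ r := by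
                exact mul_le_mul_of_nonneg_right hmono2 hlamr.le
            _ ≤ t + E := hPj
        · intro j hPj
          rw [← pow_mul]
          rw [le_div_iff₀ hlamr]
          exact hPj
      have hreal : CL * lam ^ 2 * (2 * ((t+E)/lam^r)) = lam ^ ((2:ℝ)-r) * ((CL * (2*(t+E)))) := by
        rw [Real.rpow_sub h1, ← Real.rpow_natCast lam 2]
        field_simp
        ring
      calc SB = ∑' (j : ℕ) (ε : Sd d) (k : Fin d → ℤ),
            (if (∑' k' : Fin d → ℤ, (coefW φ ψ f j k' ε.1) ^ 2) ≤ (2:ℝ) ^ (d*j) * lam ^ 2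
              then 0 else (if |coefW φ ψ f j k ε.1| ≤ lam
                then ENNReal.ofReal ((coefW φ ψ f j k ε.1) ^ 2) else 0)) := hswap
        _ ≤ ∑' (j : ℕ) (_ε : Sd d), (if (2:ℝ) ^ (d*j) * lam ^ r ≤ t + E
              then ENNReal.ofReal ((CL * 2 ^ (d*j)) * lam ^ 2) else 0) :=
            ENNReal.tsum_le_tsum fun j => ENNReal.tsum_le_tsum fun ε => hinner j ε
        _ = ∑' (j : ℕ), (S0 : ℝ≥0∞) * (if (2:ℝ) ^ (d*j) * lam ^ r ≤ t + E
              then ENNReal.ofReal ((CL * 2 ^ (d*j)) * lam ^ 2) else 0) := by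
            refine tsum_congr fun j => ?_
            rw [tsum_fintype, Finset.sum_const, nsmul_eq_mul, hS0def]
            simp
        _ = (S0 : ℝ≥0∞) * ∑' (j : ℕ), (if (2:ℝ) ^ (d*j) * lam ^ r ≤ t + E
              then ENNReal.ofReal ((CL * 2 ^ (d*j)) * lam ^ 2) else 0) := ENNReal.tsum_mul_left
        _ ≤ (S0 : ℝ≥0∞) * (ENNReal.ofReal (CL * lam ^ 2) * ENNReal.ofReal (2 * ((t+E)/lam^r))) :=
            mul_le_mul_right hgeom _
        _ = ENNReal.ofReal (lam ^ ((2:ℝ)-r)) * K := by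
            rw [← ENNReal.ofReal_mul (by positivity), hreal, hKdef,
              ← ENNReal.ofReal_natCast S0, ← ENNReal.ofReal_mul (by positivity),
              ← ENNReal.ofReal_mul (by positivity)]
            congr 1
            ring
    have hSG2 : SG lam ≤ ENNReal.ofReal (lam ^ ((2:ℝ) - r)) * T := hSGbound lam h1 h2
    calc ENNReal.ofReal (lam ^ (r - 2)) *
          ∑' (j : ℕ) (k : Fin d → ℤ) (ε : Sd d),
            (if |coefW φ ψ f j k ε.1| ≤ lam
              then ENNReal.ofReal ((coefW φ ψ f j k ε.1) ^ 2) else 0)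
        ≤ ENNReal.ofReal (lam ^ (r - 2)) * (SG lam + SB) := mul_le_mul_right step1 _
      _ ≤ ENNReal.ofReal (lam ^ (r - 2)) *
          (ENNReal.ofReal (lam ^ ((2:ℝ)-r)) * T + ENNReal.ofReal (lam ^ ((2:ℝ)-r)) * K) :=
          mul_le_mul_right (add_le_add hSG2 hSB) _
      _ = (ENNReal.ofReal (lam ^ (r - 2)) * ENNReal.ofReal (lam ^ ((2:ℝ)-r))) * (T + K) := by
          ring
      _ = T + K := by
          rw [← ENNReal.ofReal_mul (Real.rpow_nonneg h1.le _), ← Real.rpow_add h1,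
            show r - 2 + ((2:ℝ) - r) = 0 by ring, Real.rpow_zero, ENNReal.ofReal_one, one_mul]
  refine lt_of_le_of_lt (iSup₂_le main) ?_
  exact ENNReal.add_lt_top.2 ⟨hT, ENNReal.ofReal_lt_top⟩

set_option maxHeartbeats 2000000 in
theorem part2 {d : ℕ} (hd : 2 ≤ d) {L : ℝ} (hL : 1 ≤ L) {φ ψ : ℝ → ℝ}
    (hwav : IsWaveletBasis d L φ ψ) {r : ℝ} (hr0 : 0 < r) (hr2 : r < 2) :
    ∃ f : (Fin d → ℝ) → ℝ, MemLp f 2 (volume.restrict (box d)) ∧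
      MemWeakL φ ψ r f ∧ ¬ MemWeakG φ ψ r f := by
  classical
  obtain ⟨hφc1, hψc1, h0φ, h0ψ, hortho, -, -, -⟩ := hwav
  have hφc : Continuous φ := hφc1.continuous
  have hψc : Continuous ψ := hψc1.continuous
  obtain ⟨M, hM1, hM⟩ := exists_bound' hφc hψc h0φ h0ψ
  have hd0 : (0:ℝ) < d := by
    have : (2:ℝ) ≤ d := by exact_mod_cast hd
    linarith
  set a : ℝ := d * (2 - r) / (4 * r) with hadef
  have ha : 0 < a := by
    apply div_pos
    · nlinarith
    · linarith
  obtain ⟨c, hc⟩ := pow_unbounded_of_one_lt (4*L) (by norm_num : (1:ℝ) < 2)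
  have hc1 : 1 ≤ c := by
    rcases Nat.eq_zero_or_pos c with h0 | h
    · exfalso
      rw [h0, pow_zero] at hc
      linarith
    · exact h
  set K0 : ℤ := 2 ^ (c-1) with hK0def
  set kk : Fin d → ℤ := fun _ => K0 with hkkdef
  have hεne : (fun _ : Fin d => true) ≠ fun _ => false := by
    intro h
    have := congrFun h ⟨0, by omega⟩
    simp at this
  set ε₀ : Sd d := ⟨fun _ => true, hεne⟩ with hε₀def
  set γ : ℕ → ℝ := fun n => (2:ℝ) ^ (-(a * n)) with hγdef
  have hγpos : ∀ n, 0 < γ n := fun n => Real.rpow_pos_of_pos two_pos _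
  have hγle1 : ∀ n, γ n ≤ 1 := fun n =>
    Real.rpow_le_one_of_one_le_of_nonpos (by norm_num) (neg_nonpos.2 (by positivity))
  set Ψ : ℕ → (Fin d → ℝ) → ℝ := fun n => tensW φ ψ (n + c) ε₀.1 kk with hΨdef
  set u : ℕ → (Fin d → ℝ) → ℝ := fun n x => γ n * Ψ n x with hudef
  set f : (Fin d → ℝ) → ℝ := fun x => ∑' n, u n x with hfdef
  -- support estimates
  have hsupp : ∀ n x, Ψ n x ≠ 0 →
      ∀ m, (1 ≤ (2:ℝ) ^ (n+1) * x m ∧ (2:ℝ) ^ n * x m < 1) := by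
    intro n x hx m
    obtain ⟨h1, h2⟩ := tensW_support h0φ h0ψ hx m
    have hK0r : ((kk m : ℤ) : ℝ) = 2 ^ (c-1) := by
      rw [hkkdef, hK0def]
      push_cast
      norm_num
    rw [hK0r] at h1 h2
    have hPQ : (2:ℝ) ^ (n+c) = 2 ^ (n+1) * 2 ^ (c-1) := by
      rw [← pow_add]
      congr 1
      omega
    have hQ : (0:ℝ) < 2 ^ (c-1) := by positivity
    have hLQ : L < 2 ^ (c-1) := by
      have h4 : (2:ℝ) ^ c ≤ 4 * 2 ^ (c-1) := by
        rw [show (4:ℝ) = 2 ^ 2 by norm_num, ← pow_add]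
        apply pow_le_pow_right₀ (by norm_num)
        omega
      nlinarith
    rw [hPQ] at h1 h2
    have h2n : (2:ℝ) ^ (n+1) = 2 * 2 ^ n := by
      rw [pow_succ]
      ring
    constructor
    · rw [← mul_le_mul_iff_of_pos_right hQ, one_mul]
      have e1 : (2:ℝ) ^ (n+1) * 2 ^ (c-1) * x m = 2 ^ (n+1) * x m * 2 ^ (c-1) := by ring
      linarith [h1, e1]
    · rw [← mul_lt_mul_iff_of_pos_right hQ, one_mul]
      have e2 : (2:ℝ) ^ (n+1) * 2 ^ (c-1) * x m = 2 * (2 ^ n * x m * 2 ^ (c-1)) := by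
        rw [h2n]; ring
      linarith [h2, e2]
  have hbox : ∀ n x, Ψ n x ≠ 0 → x ∈ box d := by
    intro n x hx
    rw [box, Set.mem_univ_pi]
    intro m
    obtain ⟨hA, hB⟩ := hsupp n x hx m
    have hp1 : (0:ℝ) < 2 ^ (n+1) := by positivity
    have hp0 : (1:ℝ) ≤ 2 ^ n := one_le_pow₀ one_le_two
    rw [Set.mem_Icc]
    constructor
    · by_contra h
      push_neg at h
      nlinarith
    · by_contra h
      push_neg at h
      nlinarith
  have hx0nonneg : ∀ n x, Ψ n x ≠ 0 → 0 ≤ x ⟨0, by omega⟩ := by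
    intro n x hx
    have := hbox n x hx
    rw [box, Set.mem_univ_pi] at this
    exact (this _).1
  have hdisj : ∀ (x : Fin d → ℝ) n n', n < n' → Ψ n x ≠ 0 → Ψ n' x = 0 := by
    intro x n n' hlt hn
    by_contra hn'
    obtain hA := (hsupp n x hn ⟨0, by omega⟩).1
    obtain hB := (hsupp n' x hn' ⟨0, by omega⟩).2
    have hx0 := hx0nonneg n x hn
    have hle : (2:ℝ) ^ (n+1) ≤ 2 ^ n' := pow_le_pow_right₀ one_le_two (by omega)
    nlinarith
  have husingle : ∀ (x : Fin d → ℝ) n n', n ≠ n' → u n x ≠ 0 → u n' x = 0 := by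
    intro x n n' hne hn
    have hΨn : Ψ n x ≠ 0 := by
      intro h
      apply hn
      rw [hudef]
      simp [h]
    rcases lt_or_gt_of_ne hne with h | h
    · rw [hudef]
      simp [hdisj x n n' h hΨn]
    · by_contra hu'
      have hΨn' : Ψ n' x ≠ 0 := by
        intro hz
        apply hu'
        rw [hudef]
        simp [hz]
      have := hdisj x n' n h hΨn'
      exact hΨn this
  have hfx : ∀ x, ∃ n0, f x = u n0 x ∧ (∀ n, n ≠ n0 → u n x = 0) := by
    intro x
    by_cases hx : ∃ n, u n x ≠ 0
    · obtain ⟨n0, hn0⟩ := hx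
      have hz : ∀ n, n ≠ n0 → u n x = 0 := fun n hn => husingle x n0 n (Ne.symm hn) hn0
      exact ⟨n0, by rw [hfdef]; exact tsum_eq_single n0 hz, hz⟩
    · push_neg at hx
      exact ⟨0, by rw [hfdef]; simp [hx], fun n _ => hx n⟩
  -- measurability
  have hΨcont : ∀ n, Continuous (Ψ n) := fun n => tensW_continuous hφc hψc _ _ _
  have hucont : ∀ n, Continuous (u n) := fun n => continuous_const.mul (hΨcont n)
  have hfmeas : StronglyMeasurable f := by
    refine stronglyMeasurable_of_tendsto (u := Filter.atTop)
      (f := fun m x => ∑ n ∈ Finset.range m, u n x)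
      (fun m => (continuous_finset_sum _ fun n _ => hucont n).stronglyMeasurable) ?_
    rw [tendsto_pi_nhds]
    intro x
    obtain ⟨n0, hfx0, hz⟩ := hfx x
    apply tendsto_atTop_of_eventually_const (i₀ := n0 + 1)
    intro m hm
    rw [hfx0]
    exact Finset.sum_eq_single_of_mem n0 (Finset.mem_range.2 (by omega))
      fun b _ hb => hz b hb
  -- support cubes
  set Qset : ℕ → Set (Fin d → ℝ) := fun n =>
    Set.univ.pi fun m : Fin d => Set.Icc ((kk m : ℝ)/2^(n+c)) (((kk m : ℝ)+L)/2^(n+c)) with hQdef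
  have hQmeas : ∀ n, MeasurableSet (Qset n) := fun n =>
    MeasurableSet.univ_pi fun m => measurableSet_Icc
  have hQvol : ∀ n, volume (Qset n) = ENNReal.ofReal (L / 2^(n+c)) ^ d := by
    intro n
    rw [hQdef]
    simp only
    rw [volume_pi_pi]
    have hone : ∀ m : Fin d, volume (Set.Icc ((kk m : ℝ)/2^(n+c)) (((kk m : ℝ)+L)/2^(n+c)))
        = ENNReal.ofReal (L / 2^(n+c)) := by
      intro m
      rw [Real.volume_Icc]
      congr 1
      field_simp
      ring
    rw [Finset.prod_congr rfl fun m _ => hone m, Finset.prod_const, Finset.card_univ,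
      Fintype.card_fin]
  have hmemQ : ∀ n x, Ψ n x ≠ 0 → x ∈ Qset n := by
    intro n x hx
    rw [hQdef, Set.mem_univ_pi]
    intro m
    obtain ⟨h1, h2⟩ := tensW_support h0φ h0ψ hx m
    have hp : (0:ℝ) < 2 ^ (n+c) := by positivity
    rw [Set.mem_Icc]
    constructor
    · rw [div_le_iff₀ hp]
      linarith [mul_comm ((2:ℝ)^(n+c)) (x m)]
    · rw [le_div_iff₀ hp]
      linarith [mul_comm ((2:ℝ)^(n+c)) (x m)]
  have hΨbd : ∀ n x, |Ψ n x| ≤ ((2:ℝ) ^ (((n+c : ℕ):ℝ)/2) * M) ^ d := fun n x =>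
    tensW_bound hM1 (fun y => (hM y).1) (fun y => (hM y).2) _ _ _ x
  have hsq : ∀ j : ℕ, ((2:ℝ) ^ ((j:ℝ)/2)) ^ 2 = 2 ^ j := by
    intro j
    rw [← Real.rpow_natCast ((2:ℝ) ^ ((j:ℝ)/2)) 2, ← Real.rpow_mul (by norm_num),
      show (j:ℝ)/2 * ((2:ℕ):ℝ) = (j:ℝ) by push_cast; ring, Real.rpow_natCast]
  -- geometric facts
  have hγeq : ∀ n : ℕ, γ n = ((2:ℝ) ^ (-a)) ^ n := by
    intro n
    rw [hγdef]
    simp only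
    rw [← Real.rpow_natCast ((2:ℝ) ^ (-a)) n, ← Real.rpow_mul (by norm_num)]
    congr 1
    ring
  have hγsum : Summable γ := by
    refine (summable_congr hγeq).2 ?_
    exact summable_geometric_of_lt_one (Real.rpow_nonneg (by norm_num) _)
      (Real.rpow_lt_one_of_one_lt_of_neg (by norm_num) (by linarith))
  have hγsqeq : ∀ n : ℕ, (γ n)^2 = ((2:ℝ) ^ (-(2*a))) ^ n := by
    intro n
    rw [hγdef]
    simp only
    rw [← Real.rpow_natCast ((2:ℝ) ^ (-(a * n))) 2, ← Real.rpow_mul (by norm_num),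
      ← Real.rpow_natCast ((2:ℝ) ^ (-(2*a))) n, ← Real.rpow_mul (by norm_num)]
    congr 1
    push_cast
    ring
  have hγsqsum : Summable (fun n => (γ n)^2) := by
    refine (summable_congr hγsqeq).2 ?_
    exact summable_geometric_of_lt_one (Real.rpow_nonneg (by norm_num) _)
      (Real.rpow_lt_one_of_one_lt_of_neg (by norm_num) (by linarith))
  -- square integral bound for u n
  have hkey : ∀ n, (∫⁻ x in box d, ((‖u n x‖₊ : ℝ≥0∞)) ^ 2)
      ≤ ENNReal.ofReal ((M^2*L)^d) * ENNReal.ofReal ((γ n)^2) := by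
    intro n
    set P := ((2:ℝ) ^ (((n+c : ℕ):ℝ)/2) * M) ^ d with hPdef
    have hP0 : (0:ℝ) ≤ P := by positivity
    have hub : ∀ x, (‖u n x‖₊ : ℝ≥0∞) ^ 2
        ≤ (Qset n).indicator (fun _ => ENNReal.ofReal ((γ n * P)^2)) x := by
      intro x
      by_cases hx : Ψ n x = 0
      · have hu0 : u n x = 0 := by rw [hudef]; simp [hx]
        simp [hu0]
      · rw [Set.indicator_of_mem (hmemQ n x hx)]
        have habs : |u n x| ≤ γ n * P := by
          rw [hudef]
          simp only
          rw [abs_mul, abs_of_pos (hγpos n)]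
          exact mul_le_mul_of_nonneg_left (hΨbd n x) (hγpos n).le
        calc (‖u n x‖₊ : ℝ≥0∞) ^ 2 = ENNReal.ofReal (|u n x|) ^ 2 := by
              rw [← enorm_eq_nnnorm, Real.enorm_eq_ofReal_abs]
          _ ≤ ENNReal.ofReal (γ n * P) ^ 2 :=
              pow_le_pow_left' (ENNReal.ofReal_le_ofReal habs) 2
          _ = ENNReal.ofReal ((γ n * P)^2) := by
              rw [← ENNReal.ofReal_pow (by positivity)]
    calc (∫⁻ x in box d, ((‖u n x‖₊ : ℝ≥0∞)) ^ 2)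
        ≤ ∫⁻ x, (Qset n).indicator (fun _ => ENNReal.ofReal ((γ n * P)^2)) x :=
          lintegral_mono' Measure.restrict_le_self hub
      _ = ENNReal.ofReal ((γ n * P)^2) * volume (Qset n) :=
          lintegral_indicator_const (hQmeas n) _
      _ = ENNReal.ofReal ((γ n * P)^2) * ENNReal.ofReal (L / 2^(n+c)) ^ d := by rw [hQvol n]
      _ = ENNReal.ofReal ((γ n * P)^2 * (L / 2^(n+c))^d) := by
          rw [← ENNReal.ofReal_pow (by positivity), ← ENNReal.ofReal_mul (by positivity)]
      _ = ENNReal.ofReal ((M^2*L)^d) * ENNReal.ofReal ((γ n)^2) := by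
          rw [← ENNReal.ofReal_mul (by positivity)]
          congr 1
          have hP2 : P^2 = ((2:ℝ)^(n+c) * M^2)^d := by
            rw [hPdef, ← pow_mul, show d*2 = 2*d from Nat.mul_comm d 2, pow_mul, mul_pow,
              hsq (n+c)]
          have h2p : (0:ℝ) < 2^(n+c) := by positivity
          rw [mul_pow (γ n) P 2, hP2, mul_assoc, ← mul_pow]
          have hbase : (2:ℝ)^(n+c) * M^2 * (L / 2^(n+c)) = M^2 * L := by
            field_simp
          rw [hbase]
          ring
  -- f is in L²
  have hmemf : MemLp f 2 (volume.restrict (box d)) := by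
    rw [memLp_two_iff_integrable_sq hfmeas.aestronglyMeasurable]
    have hsm : StronglyMeasurable (fun x => f x ^ 2) := by
      simp_rw [sq]
      exact hfmeas.mul hfmeas
    refine ⟨hsm.aestronglyMeasurable, ?_⟩
    rw [HasFiniteIntegral]
    calc ∫⁻ x in box d, (‖f x ^ 2‖₊ : ℝ≥0∞)
        = ∫⁻ x in box d, ∑' n, (‖u n x‖₊ : ℝ≥0∞)^2 := by
          refine lintegral_congr fun x => ?_
          rw [nnnorm_pow, ENNReal.coe_pow]
          obtain ⟨n0, he, hz⟩ := hfx x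
          rw [he, tsum_eq_single n0 fun n hn => by rw [hz n hn]; simp]
      _ = ∑' n, ∫⁻ x in box d, (‖u n x‖₊ : ℝ≥0∞)^2 :=
          lintegral_tsum fun n =>
            (((hucont n).measurable.nnnorm.coe_nnreal_ennreal).pow_const 2).aemeasurable
      _ ≤ ∑' n, ENNReal.ofReal ((M^2*L)^d) * ENNReal.ofReal ((γ n)^2) :=
          ENNReal.tsum_le_tsum hkey
      _ = ENNReal.ofReal ((M^2*L)^d) * ∑' n, ENNReal.ofReal ((γ n)^2) := ENNReal.tsum_mul_left
      _ < ⊤ := by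
          rw [← ENNReal.ofReal_tsum_of_nonneg (fun n => sq_nonneg _) hγsqsum]
          exact ENNReal.mul_lt_top ENNReal.ofReal_lt_top ENNReal.ofReal_lt_top
  -- the wavelet coefficients of f
  have hcoef : ∀ (j : ℕ) (k : Fin d → ℤ) (ε : Sd d),
      coefW φ ψ f j k ε.1 = if c ≤ j ∧ k = kk ∧ ε = ε₀ then γ (j - c) else 0 := by
    intro j k ε
    have hfweq : (fun x => f x * tensW φ ψ j ε.1 k x)
        = fun x => ∑' n, u n x * tensW φ ψ j ε.1 k x := by
      funext x
      rw [hfdef]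
      exact tsum_mul_right.symm
    have hmeas : ∀ n : ℕ, AEStronglyMeasurable (fun x => u n x * tensW φ ψ j ε.1 k x)
        (volume.restrict (box d)) :=
      fun n => ((hucont n).mul (tensW_continuous hφc hψc j ε.1 k)).aestronglyMeasurable
    set PJ := ((2:ℝ) ^ ((j:ℝ)/2) * M) ^ d with hPJdef
    have hPJ0 : (0:ℝ) ≤ PJ := by positivity
    have hsummable : (∑' n : ℕ, ∫⁻ x in box d, (‖u n x * tensW φ ψ j ε.1 k x‖₊ : ℝ≥0∞)) ≠ ⊤ := by
      have hb : ∀ n, (∫⁻ x in box d, (‖u n x * tensW φ ψ j ε.1 k x‖₊ : ℝ≥0∞))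
          ≤ ENNReal.ofReal ((M*L)^d * PJ) * ENNReal.ofReal (γ n) := by
        intro n
        set Pn := ((2:ℝ) ^ (((n+c : ℕ):ℝ)/2) * M) ^ d with hPndef
        have hPn0 : (0:ℝ) ≤ Pn := by positivity
        have hub : ∀ x, (‖u n x * tensW φ ψ j ε.1 k x‖₊ : ℝ≥0∞)
            ≤ (Qset n).indicator (fun _ => ENNReal.ofReal (γ n * Pn * PJ)) x := by
          intro x
          by_cases hx : Ψ n x = 0
          · have hu0 : u n x = 0 := by rw [hudef]; simp [hx]
            simp [hu0]
          · rw [Set.indicator_of_mem (hmemQ n x hx), ← enorm_eq_nnnorm, Real.enorm_eq_ofReal_abs]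
            apply ENNReal.ofReal_le_ofReal
            rw [abs_mul]
            have h1 : |u n x| ≤ γ n * Pn := by
              rw [hudef]
              simp only
              rw [abs_mul, abs_of_pos (hγpos n)]
              exact mul_le_mul_of_nonneg_left (hΨbd n x) (hγpos n).le
            have h2 : |tensW φ ψ j ε.1 k x| ≤ PJ :=
              tensW_bound hM1 (fun y => (hM y).1) (fun y => (hM y).2) _ _ _ x
            exact mul_le_mul h1 h2 (abs_nonneg _) (by positivity)
        have hrineq : γ n * Pn * PJ * (L/2^(n+c))^d ≤ (M*L)^d * PJ * γ n := by
          have hs : (2:ℝ) ^ (((n+c : ℕ):ℝ)/2) ≤ 2^(n+c) := by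
            rw [← Real.rpow_natCast 2 (n+c)]
            apply Real.rpow_le_rpow_of_exponent_le (by norm_num)
            have : (0:ℝ) ≤ ((n+c : ℕ):ℝ) := Nat.cast_nonneg _
            linarith
          have h2p : (0:ℝ) < 2^(n+c) := by positivity
          have hM0 : (0:ℝ) ≤ M := by linarith
          have hL0 : (0:ℝ) ≤ L := by linarith
          have hPnL : Pn * (L/2^(n+c))^d ≤ (M*L)^d := by
            rw [hPndef, ← mul_pow]
            apply pow_le_pow_left₀ (by positivity)
            calc (2:ℝ) ^ (((n+c : ℕ):ℝ)/2) * M * (L/2^(n+c))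
                ≤ 2^(n+c) * M * (L / 2^(n+c)) := by
                  apply mul_le_mul_of_nonneg_right
                    (mul_le_mul_of_nonneg_right hs hM0) (by positivity)
              _ = M * L := by field_simp
          calc γ n * Pn * PJ * (L/2^(n+c))^d = (Pn * (L/2^(n+c))^d) * PJ * γ n := by ring
            _ ≤ (M*L)^d * PJ * γ n :=
                mul_le_mul_of_nonneg_right (mul_le_mul_of_nonneg_right hPnL hPJ0) (hγpos n).le
        calc (∫⁻ x in box d, (‖u n x * tensW φ ψ j ε.1 k x‖₊ : ℝ≥0∞))
            ≤ ∫⁻ x, (Qset n).indicator (fun _ => ENNReal.ofReal (γ n * Pn * PJ)) x :=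
              lintegral_mono' Measure.restrict_le_self hub
          _ = ENNReal.ofReal (γ n * Pn * PJ) * volume (Qset n) :=
              lintegral_indicator_const (hQmeas n) _
          _ = ENNReal.ofReal (γ n * Pn * PJ * (L/2^(n+c))^d) := by
              rw [hQvol n, ← ENNReal.ofReal_pow (by positivity),
                ← ENNReal.ofReal_mul (by positivity)]
          _ ≤ ENNReal.ofReal ((M*L)^d * PJ * γ n) := ENNReal.ofReal_le_ofReal hrineq
          _ = ENNReal.ofReal ((M*L)^d * PJ) * ENNReal.ofReal (γ n) := by
              rw [← ENNReal.ofReal_mul (by positivity)]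
      refine ne_top_of_le_ne_top ?_ ((ENNReal.tsum_le_tsum hb).trans_eq ENNReal.tsum_mul_left)
      rw [← ENNReal.ofReal_tsum_of_nonneg (fun n => (hγpos n).le) hγsum]
      exact (ENNReal.mul_lt_top ENNReal.ofReal_lt_top ENNReal.ofReal_lt_top).ne
    have hval : ∀ n, (∫ x in box d, u n x * tensW φ ψ j ε.1 k x)
        = γ n * (if n + c = j ∧ kk = k ∧ ε₀ = ε then 1 else 0) := by
      intro n
      have e : (fun x => u n x * tensW φ ψ j ε.1 k x)
          = fun x => γ n * (Ψ n x * tensW φ ψ j ε.1 k x) := by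
        funext x
        simp only [hudef]
        ring
      rw [e, integral_const_mul _ _]
      congr 1
      have hzero : ∀ x ∉ box d, Ψ n x * tensW φ ψ j ε.1 k x = 0 := by
        intro x hx
        have hz : Ψ n x = 0 := by
          by_contra h
          exact hx (hbox n x h)
        rw [hz, zero_mul]
      rw [setIntegral_eq_integral_of_forall_compl_eq_zero hzero]
      exact hortho (n+c) j kk k ε₀ ε
    rw [coefW, hfweq, integral_tsum hmeas hsummable, tsum_congr hval]
    by_cases hcond : c ≤ j ∧ k = kk ∧ ε = ε₀
    · obtain ⟨hcj, hk, hε⟩ := hcond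
      rw [if_pos ⟨hcj, hk, hε⟩, tsum_eq_single (j - c) ?_]
      · rw [if_pos ⟨by omega, hk.symm, hε.symm⟩, mul_one]
      · intro n hn
        rw [if_neg, mul_zero]
        rintro ⟨h1, -, -⟩
        exact hn (by omega)
    · rw [if_neg hcond]
      have hzz : ∀ n : ℕ, γ n * (if n + c = j ∧ kk = k ∧ ε₀ = ε then 1 else 0) = 0 := by
        intro n
        rw [if_neg, mul_zero]
        rintro ⟨h1, h2, h3⟩
        exact hcond ⟨by omega, h2.symm, h3.symm⟩
      rw [tsum_congr hzz, tsum_zero]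
  -- geometric constant
  set q : ℝ := (2:ℝ) ^ (-(a*r)) with hqdef
  have hq0 : 0 ≤ q := Real.rpow_nonneg (by norm_num) _
  have hq1 : q < 1 := Real.rpow_lt_one_of_one_lt_of_neg (by norm_num)
    (by rw [neg_lt, neg_zero]; positivity)
  have hqsum : Summable (fun n : ℕ => q ^ n) := summable_geometric_of_lt_one hq0 hq1
  have hγr : ∀ n : ℕ, (γ n) ^ r = q ^ n := by
    intro n
    rw [hγdef, hqdef]
    simp only
    rw [← Real.rpow_natCast ((2:ℝ)^(-(a*r))) n, ← Real.rpow_mul (by norm_num),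
      ← Real.rpow_mul (by norm_num)]
    congr 1
    ring
  -- f is in the local weak Besov space
  have hWL : MemWeakL φ ψ r f := by
    rw [MemWeakL]
    have main : ∀ lam ∈ Set.Ioc (0:ℝ) 1, ENNReal.ofReal (lam ^ (r - 2)) *
        ∑' (j : ℕ) (k : Fin d → ℤ) (ε : Sd d),
          (if |coefW φ ψ f j k ε.1| ≤ lam
            then ENNReal.ofReal ((coefW φ ψ f j k ε.1) ^ 2) else 0)
        ≤ ENNReal.ofReal ((1-q)⁻¹) := by
      rintro lam ⟨h1, h2⟩
      have hinnerk : ∀ j : ℕ, (∑' (k : Fin d → ℤ) (ε : Sd d),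
          (if |coefW φ ψ f j k ε.1| ≤ lam
            then ENNReal.ofReal ((coefW φ ψ f j k ε.1) ^ 2) else 0))
          = (if c ≤ j then (if γ (j-c) ≤ lam then ENNReal.ofReal ((γ (j-c))^2) else 0)
              else 0) := by
        intro j
        have hε : ∀ k : Fin d → ℤ, (∑' ε : Sd d,
            (if |coefW φ ψ f j k ε.1| ≤ lam
              then ENNReal.ofReal ((coefW φ ψ f j k ε.1) ^ 2) else 0))
            = (if |coefW φ ψ f j k ε₀.1| ≤ lam
              then ENNReal.ofReal ((coefW φ ψ f j k ε₀.1) ^ 2) else 0) := by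
          intro k
          apply tsum_eq_single
          intro ε' hε'
          have hcz : coefW φ ψ f j k ε'.1 = 0 := by
            rw [hcoef j k ε']
            exact if_neg (by rintro ⟨-, -, h⟩; exact hε' h)
          rw [hcz]
          simp
        rw [tsum_congr hε, tsum_eq_single kk ?_]
        · have hckk : coefW φ ψ f j kk ε₀.1 = if c ≤ j then γ (j-c) else 0 := by
            rw [hcoef j kk ε₀]
            by_cases hcj : c ≤ j
            · rw [if_pos ⟨hcj, rfl, rfl⟩, if_pos hcj]
            · rw [if_neg (by rintro ⟨h, -, -⟩; exact hcj h), if_neg hcj]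
          rw [hckk]
          by_cases hcj : c ≤ j
          · rw [if_pos hcj, abs_of_pos (hγpos _), if_pos hcj]
          · rw [if_neg hcj, if_neg hcj]
            simp
        · intro k hk
          have hcz : coefW φ ψ f j k ε₀.1 = 0 := by
            rw [hcoef j k ε₀]
            exact if_neg (by rintro ⟨-, h, -⟩; exact hk h)
          rw [hcz]
          simp
      have hshift : (∑' j : ℕ, (if c ≤ j then
            (if γ (j-c) ≤ lam then ENNReal.ofReal ((γ (j-c))^2) else 0) else 0))
          = ∑' n : ℕ, (if γ n ≤ lam then ENNReal.ofReal ((γ n)^2) else 0) := by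
        have hinj : Function.Injective (fun n : ℕ => n + c) := fun x y h => by
          simpa using h
        have hsupp2 : Function.support (fun j => (if c ≤ j then
            (if γ (j-c) ≤ lam then ENNReal.ofReal ((γ (j-c))^2) else 0) else 0))
            ⊆ Set.range (fun n : ℕ => n + c) := by
          intro j hj
          rcases le_or_gt c j with h | h
          · exact ⟨j - c, by simp; omega⟩
          · exact absurd (by simp only [if_neg (show ¬ c ≤ j from by omega)]) hj
        rw [← Function.Injective.tsum_eq hinj hsupp2]
        refine tsum_congr fun n => ?_
        have hnc : n + c - c = n := by omega
        rw [if_pos (by omega : c ≤ n + c), hnc]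
      have hbound : (∑' n : ℕ, (if γ n ≤ lam then ENNReal.ofReal ((γ n)^2) else 0))
          ≤ ENNReal.ofReal (lam ^ ((2:ℝ) - r)) * ENNReal.ofReal ((1-q)⁻¹) := by
        have hpt : ∀ n : ℕ, (if γ n ≤ lam then ENNReal.ofReal ((γ n)^2) else 0)
            ≤ ENNReal.ofReal (lam ^ ((2:ℝ)-r)) * ENNReal.ofReal (q ^ n) := by
          intro n
          split
          · rename_i hγlam
            rw [← ENNReal.ofReal_mul (Real.rpow_nonneg h1.le _)]
            apply ENNReal.ofReal_le_ofReal
            have e1 : (γ n)^2 = (γ n)^((2:ℝ)-r) * (γ n)^r := by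
              rw [← Real.rpow_add (hγpos n), show (2:ℝ)-r+r = 2 by ring, Real.rpow_two]
            rw [e1, hγr n]
            apply mul_le_mul_of_nonneg_right ?_ (pow_nonneg hq0 n)
            exact Real.rpow_le_rpow (hγpos n).le hγlam (by linarith)
          · exact zero_le
        calc (∑' n : ℕ, (if γ n ≤ lam then ENNReal.ofReal ((γ n)^2) else 0))
            ≤ ∑' n : ℕ, ENNReal.ofReal (lam ^ ((2:ℝ)-r)) * ENNReal.ofReal (q ^ n) :=
              ENNReal.tsum_le_tsum hpt
          _ = ENNReal.ofReal (lam ^ ((2:ℝ)-r)) * ∑' n : ℕ, ENNReal.ofReal (q ^ n) :=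
              ENNReal.tsum_mul_left
          _ = ENNReal.ofReal (lam ^ ((2:ℝ)-r)) * ENNReal.ofReal ((1-q)⁻¹) := by
              rw [← ENNReal.ofReal_tsum_of_nonneg (fun n => pow_nonneg hq0 n) hqsum,
                tsum_geometric_of_lt_one hq0 hq1]
      calc ENNReal.ofReal (lam ^ (r - 2)) *
            ∑' (j : ℕ) (k : Fin d → ℤ) (ε : Sd d),
              (if |coefW φ ψ f j k ε.1| ≤ lam
                then ENNReal.ofReal ((coefW φ ψ f j k ε.1) ^ 2) else 0)
          = ENNReal.ofReal (lam ^ (r - 2)) *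
            ∑' n : ℕ, (if γ n ≤ lam then ENNReal.ofReal ((γ n)^2) else 0) := by
            rw [tsum_congr hinnerk, hshift]
        _ ≤ ENNReal.ofReal (lam ^ (r - 2)) *
            (ENNReal.ofReal (lam ^ ((2:ℝ)-r)) * ENNReal.ofReal ((1-q)⁻¹)) :=
            mul_le_mul_right hbound _
        _ = (ENNReal.ofReal (lam ^ (r - 2)) * ENNReal.ofReal (lam ^ ((2:ℝ)-r)))
            * ENNReal.ofReal ((1-q)⁻¹) := by ring
        _ = ENNReal.ofReal ((1-q)⁻¹) := by
            rw [← ENNReal.ofReal_mul (Real.rpow_nonneg h1.le _), ← Real.rpow_add h1,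
              show r - 2 + ((2:ℝ) - r) = 0 by ring, Real.rpow_zero, ENNReal.ofReal_one,
              one_mul]
    exact lt_of_le_of_lt (iSup₂_le main) ENNReal.ofReal_lt_top
  -- f is not in the global weak Besov space
  have hWG : ¬ MemWeakG φ ψ r f := by
    rw [MemWeakG]
    intro hG
    set lamN : ℕ → ℝ := fun n => (2:ℝ) ^ (-(a*(n:ℝ)) - ((d*(n+c) : ℕ) : ℝ)/2) with hlamNdef
    have hlamN0 : ∀ n, 0 < lamN n := fun n => Real.rpow_pos_of_pos two_pos _
    have hlamN1 : ∀ n, lamN n ≤ 1 := by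
      intro n
      apply Real.rpow_le_one_of_one_le_of_nonpos (by norm_num)
      have h1 : (0:ℝ) ≤ a * n := by positivity
      have h2 : (0:ℝ) ≤ ((d*(n+c) : ℕ) : ℝ) := Nat.cast_nonneg _
      linarith
    have hprod : ∀ n, (2:ℝ)^(d*(n+c)) * (lamN n)^2 = (γ n)^2 := by
      intro n
      have h1 : (lamN n)^2 = (2:ℝ) ^ ((-(a*(n:ℝ)) - ((d*(n+c):ℕ):ℝ)/2) * 2) := by
        rw [hlamNdef]
        simp only
        rw [← Real.rpow_natCast ((2:ℝ) ^ (-(a*(n:ℝ)) - ((d*(n+c):ℕ):ℝ)/2)) 2,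
          ← Real.rpow_mul (by norm_num)]
        norm_num
      have h2 : (2:ℝ)^(d*(n+c)) = (2:ℝ) ^ ((d*(n+c):ℕ):ℝ) := (Real.rpow_natCast 2 _).symm
      have h3 : (γ n)^2 = (2:ℝ) ^ (-(a*(n:ℝ)) * 2) := by
        rw [hγdef]
        simp only
        rw [← Real.rpow_natCast ((2:ℝ) ^ (-(a*(n:ℝ)))) 2, ← Real.rpow_mul (by norm_num)]
        norm_num
      rw [h1, h2, h3, ← Real.rpow_add (by norm_num : (0:ℝ) < 2)]
      congr 1
      ring
    have htsum : ∀ n, (∑' k' : Fin d → ℤ, (coefW φ ψ f (n+c) k' ε₀.1)^2) = (γ n)^2 := by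
      intro n
      rw [tsum_eq_single kk ?_]
      · rw [hcoef (n+c) kk ε₀, if_pos ⟨by omega, rfl, rfl⟩]
        have hnc : n + c - c = n := by omega
        rw [hnc]
      · intro k' hk'
        rw [hcoef (n+c) k' ε₀, if_neg (by rintro ⟨-, h, -⟩; exact hk' h)]
        simp
    have hper : ∀ n : ℕ, ENNReal.ofReal ((lamN n) ^ (r-2) * (γ n)^2)
        ≤ (⨆ lam ∈ Set.Ioc (0 : ℝ) 1, ENNReal.ofReal (lam ^ (r - 2)) *
          ∑' (j : ℕ) (k : Fin d → ℤ) (ε : Sd d),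
            (if (∑' k' : Fin d → ℤ, (coefW φ ψ f j k' ε.1) ^ 2)
                ≤ (2 : ℝ) ^ (d * j) * lam ^ 2
              then ENNReal.ofReal ((coefW φ ψ f j k ε.1) ^ 2) else 0)) := by
      intro n
      have hcond : (∑' k' : Fin d → ℤ, (coefW φ ψ f (n+c) k' ε₀.1) ^ 2)
          ≤ (2 : ℝ) ^ (d * (n+c)) * (lamN n) ^ 2 := by
        rw [htsum n]
        exact le_of_eq (hprod n).symm
      have hterm : ENNReal.ofReal ((γ n)^2)
          ≤ ∑' (j : ℕ) (k : Fin d → ℤ) (ε : Sd d),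
            (if (∑' k' : Fin d → ℤ, (coefW φ ψ f j k' ε.1) ^ 2)
                ≤ (2 : ℝ) ^ (d * j) * (lamN n) ^ 2
              then ENNReal.ofReal ((coefW φ ψ f j k ε.1) ^ 2) else 0) := by
        have hv : ENNReal.ofReal ((γ n)^2)
            = (if (∑' k' : Fin d → ℤ, (coefW φ ψ f (n+c) k' ε₀.1) ^ 2)
                ≤ (2 : ℝ) ^ (d * (n+c)) * (lamN n) ^ 2
              then ENNReal.ofReal ((coefW φ ψ f (n+c) kk ε₀.1) ^ 2) else 0) := by
          rw [if_pos hcond, hcoef (n+c) kk ε₀, if_pos ⟨by omega, rfl, rfl⟩]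
          have hnc : n + c - c = n := by omega
          rw [hnc]
        rw [hv]
        calc (if (∑' k' : Fin d → ℤ, (coefW φ ψ f (n+c) k' ε₀.1) ^ 2)
                ≤ (2 : ℝ) ^ (d * (n+c)) * (lamN n) ^ 2
              then ENNReal.ofReal ((coefW φ ψ f (n+c) kk ε₀.1) ^ 2) else 0)
            ≤ ∑' (ε : Sd d), (if (∑' k' : Fin d → ℤ, (coefW φ ψ f (n+c) k' ε.1) ^ 2)
                ≤ (2 : ℝ) ^ (d * (n+c)) * (lamN n) ^ 2
              then ENNReal.ofReal ((coefW φ ψ f (n+c) kk ε.1) ^ 2) else 0) :=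
              ENNReal.le_tsum ε₀
          _ ≤ ∑' (k : Fin d → ℤ) (ε : Sd d),
              (if (∑' k' : Fin d → ℤ, (coefW φ ψ f (n+c) k' ε.1) ^ 2)
                ≤ (2 : ℝ) ^ (d * (n+c)) * (lamN n) ^ 2
              then ENNReal.ofReal ((coefW φ ψ f (n+c) k ε.1) ^ 2) else 0) :=
              ENNReal.le_tsum kk
          _ ≤ ∑' (j : ℕ) (k : Fin d → ℤ) (ε : Sd d),
              (if (∑' k' : Fin d → ℤ, (coefW φ ψ f j k' ε.1) ^ 2)
                ≤ (2 : ℝ) ^ (d * j) * (lamN n) ^ 2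
              then ENNReal.ofReal ((coefW φ ψ f j k ε.1) ^ 2) else 0) :=
              ENNReal.le_tsum (n+c)
      calc ENNReal.ofReal ((lamN n) ^ (r-2) * (γ n)^2)
          = ENNReal.ofReal ((lamN n) ^ (r-2)) * ENNReal.ofReal ((γ n)^2) :=
            ENNReal.ofReal_mul (Real.rpow_nonneg (hlamN0 n).le _)
        _ ≤ ENNReal.ofReal ((lamN n) ^ (r-2)) *
            ∑' (j : ℕ) (k : Fin d → ℤ) (ε : Sd d),
              (if (∑' k' : Fin d → ℤ, (coefW φ ψ f j k' ε.1) ^ 2)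
                  ≤ (2 : ℝ) ^ (d * j) * (lamN n) ^ 2
                then ENNReal.ofReal ((coefW φ ψ f j k ε.1) ^ 2) else 0) :=
            mul_le_mul_right hterm _
        _ ≤ _ := le_iSup₂ (f := fun (lam : ℝ) (_ : lam ∈ Set.Ioc (0:ℝ) 1) =>
            ENNReal.ofReal (lam ^ (r - 2)) *
            ∑' (j : ℕ) (k : Fin d → ℤ) (ε : Sd d),
              (if (∑' k' : Fin d → ℤ, (coefW φ ψ f j k' ε.1) ^ 2)
                  ≤ (2 : ℝ) ^ (d * j) * lam ^ 2
                then ENNReal.ofReal ((coefW φ ψ f j k ε.1) ^ 2) else 0))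
            (lamN n) ⟨hlamN0 n, hlamN1 n⟩
    -- derive a contradiction
    have hexp : ∀ n : ℕ, (lamN n) ^ (r-2) * (γ n)^2
        = (2:ℝ) ^ (((d:ℝ)*(2-r)/4) * n + ((d:ℝ)*c/2)*(2-r)) := by
      intro n
      have h1 : (lamN n) ^ (r-2)
          = (2:ℝ) ^ ((-(a*(n:ℝ)) - ((d*(n+c):ℕ):ℝ)/2) * (r-2)) := by
        rw [hlamNdef]
        simp only
        rw [← Real.rpow_mul (by norm_num)]
      have h3 : (γ n)^2 = (2:ℝ) ^ (-(a*(n:ℝ)) * 2) := by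
        rw [hγdef]
        simp only
        rw [← Real.rpow_natCast ((2:ℝ) ^ (-(a*(n:ℝ)))) 2, ← Real.rpow_mul (by norm_num)]
        norm_num
      rw [h1, h3, ← Real.rpow_add (by norm_num : (0:ℝ) < 2)]
      congr 1
      rw [hadef]
      push_cast
      field_simp
      ring
    have hβ : (0:ℝ) < (d:ℝ)*(2-r)/4 := by nlinarith
    have hβ2 : (1:ℝ) < (2:ℝ) ^ ((d:ℝ)*(2-r)/4) := by
      rw [show (1:ℝ) = (2:ℝ) ^ (0:ℝ) from (Real.rpow_zero 2).symm]
      exact Real.rpow_lt_rpow_of_exponent_lt one_lt_two hβ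
    have hTne : (⨆ lam ∈ Set.Ioc (0 : ℝ) 1, ENNReal.ofReal (lam ^ (r - 2)) *
          ∑' (j : ℕ) (k : Fin d → ℤ) (ε : Sd d),
            (if (∑' k' : Fin d → ℤ, (coefW φ ψ f j k' ε.1) ^ 2)
                ≤ (2 : ℝ) ^ (d * j) * lam ^ 2
              then ENNReal.ofReal ((coefW φ ψ f j k ε.1) ^ 2) else 0)) ≠ ⊤ := hG.ne
    obtain ⟨n, hn⟩ := pow_unbounded_of_one_lt
      ((⨆ lam ∈ Set.Ioc (0 : ℝ) 1, ENNReal.ofReal (lam ^ (r - 2)) *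
          ∑' (j : ℕ) (k : Fin d → ℤ) (ε : Sd d),
            (if (∑' k' : Fin d → ℤ, (coefW φ ψ f j k' ε.1) ^ 2)
                ≤ (2 : ℝ) ^ (d * j) * lam ^ 2
              then ENNReal.ofReal ((coefW φ ψ f j k ε.1) ^ 2) else 0)).toReal) hβ2
    have hreal := (ENNReal.ofReal_le_iff_le_toReal hTne).1 (hper n)
    rw [hexp n] at hreal
    have hchain : ((2:ℝ) ^ ((d:ℝ)*(2-r)/4)) ^ n
        ≤ (2:ℝ) ^ (((d:ℝ)*(2-r)/4) * n + ((d:ℝ)*c/2)*(2-r)) := by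
      rw [← Real.rpow_natCast ((2:ℝ) ^ ((d:ℝ)*(2-r)/4)) n, ← Real.rpow_mul (by norm_num)]
      apply Real.rpow_le_rpow_of_exponent_le (by norm_num)
      have hκ0 : (0:ℝ) ≤ (d:ℝ)*c/2 := by positivity
      nlinarith
    linarith [hn, hchain.trans hreal]
  exact ⟨f, hmemf, hWL, hWG⟩

end CEProof

open CopulaEstimation in
/-- Proposition `linclus`: for `0 < r < 2`, the global weak Besov space
`W_G(r)` is strictly included in the local weak Besov space `W_L(r)`. -/
theorem weak_besov_strict_inclusion
    (d : ℕ) (hd : 2 ≤ d) (L : ℝ) (hL : 1 ≤ L) (φ ψ : ℝ → ℝ)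
    (hwav : IsWaveletBasis d L φ ψ) (r : ℝ) (hr0 : 0 < r) (hr2 : r < 2) :
    (∀ f : (Fin d → ℝ) → ℝ, MemLp f 2 (volume.restrict (box d)) →
      MemWeakG φ ψ r f → MemWeakL φ ψ r f) ∧
    ∃ f : (Fin d → ℝ) → ℝ, MemLp f 2 (volume.restrict (box d)) ∧
      MemWeakL φ ψ r f ∧ ¬ MemWeakG φ ψ r f :=
  ⟨fun f hf hG => CEProof.part1 hd hL hwav hr0 hr2 f hf hG,
    CEProof.part2 hd hL hwav hr0 hr2⟩
end
end

section
/- Let d ≥ 1 be an integer, s > 0, and let α be a real with d/2 ≤ α < s + d/2. Let (c^ε_{j,k}) be any family of reals, indexed by j ∈ ℕ, k ∈ {0,…,2^j − 1}^d and ε ∈ S_d = {0,1}^d \ {0}, such that for each j and each ε exactly ⌊2^{(2dα/(2s+d)) j}⌋ of the coefficients (c^ε_{j,k})_k are equal to (2^d − 1)^{-1} 2^{-αj} and all the others are 0. Then: (i) sup_{0 < λ ≤ 1} λ^{2d/(2s+d)} Σ_{j,k,ε} 1{|c^ε_{j,k}| > λ} < ∞; (ii) sup_{J ≥ 0} 2^{2J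 ds/(2s+d)} Σ_{j > J} Σ_{k,ε} (c^ε_{j,k})² < ∞; and (iii) sup_{0 < λ ≤ 1} λ^{2d/(2s+d)} Σ_{j ≥ 0} 2^{dj} Σ_ε 1{Σ_k (c^ε_{j,k})² > 2^{dj} λ²} = ∞. In other words, the coefficient array satisfies the defining conditions of the local weak Besov space W_L(2d/(2s+d)) and of the Besov space B^{ds/(2s+d)}_{2∞}, but fails the defining condition of the global weak Besov space W_G(2d/(2s+d)). -/
open Set

open scoped ENNReal

noncomputable section

attribute [local instance] Classical.propDecidable

set_option maxHeartbeats 1000000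

namespace SparseArray

/-- The index set `S_d = {0,1}^d \ {(0,…,0)}`. -/
def Sd (d : ℕ) : Type := {ε : Fin d → Bool // ε ≠ fun _ => false}

instance (d : ℕ) : Fintype (Sd d) := by unfold Sd; infer_instance

end SparseArray

/-- reindexing equivalence for tail sums -/
def tailEquiv (J : ℕ) : ℕ ≃ {j : ℕ // J < j} where
  toFun i := ⟨J + 1 + i, by omega⟩
  invFun j := j.1 - (J + 1)
  left_inv i := by show J + 1 + i - (J + 1) = i; omega
  right_inv j := Subtype.ext (by show J + 1 + (j.1 - (J + 1)) = j.1; have := j.2; omega)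

open SparseArray in
/-- a sparse coefficient array with, at each level `j` and sign `ε`,
exactly `⌊2^{(2dα/(2s+d))j}⌋` coefficients equal to `(2^d − 1)^{-1} 2^{-αj}` and the rest
equal to `0`, satisfies the defining conditions of `W_L(2d/(2s+d))` and of
`B^{ds/(2s+d)}_{2∞}`, but fails the defining condition of `W_G(2d/(2s+d))`. -/
theorem sparse_array_local_not_global
    (d : ℕ) (hd : 1 ≤ d) (s α : ℝ) (hs : 0 < s)
    (hα1 : (d : ℝ) / 2 ≤ α) (hα2 : α < s + d / 2)
    (c : ℕ → (Fin d → ℕ) → Sd d → ℝ)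
    (hrange : ∀ j k ε, c j k ε ≠ 0 → ∀ m, k m < 2 ^ j)
    (hval : ∀ j k ε, c j k ε = 0 ∨
      c j k ε = ((2 : ℝ) ^ d - 1)⁻¹ * (2 : ℝ) ^ (-(α * j)))
    (hcard : ∀ j ε,
      Set.ncard {k | c j k ε ≠ 0} = ⌊(2 : ℝ) ^ (2 * d * α / (2 * s + d) * j)⌋₊) :
    ((⨆ lam ∈ Set.Ioc (0 : ℝ) 1, ENNReal.ofReal (lam ^ (2 * d / (2 * s + d))) *
        ∑' (j : ℕ) (k : Fin d → ℕ) (ε : Sd d),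
          (if lam < |c j k ε| then (1 : ℝ≥0∞) else 0)) < ⊤) ∧
    ((⨆ J : ℕ, ENNReal.ofReal ((2 : ℝ) ^ (2 * (J : ℝ) * (d * s / (2 * s + d)))) *
        ∑' (j : {j : ℕ // J < j}) (k : Fin d → ℕ) (ε : Sd d),
          ENNReal.ofReal ((c j.1 k ε) ^ 2)) < ⊤) ∧
    (⨆ lam ∈ Set.Ioc (0 : ℝ) 1, ENNReal.ofReal (lam ^ (2 * d / (2 * s + d))) *
        ∑' j : ℕ, (2 : ℝ≥0∞) ^ (d * j) * ∑ ε : Sd d,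
          (if (2 : ℝ) ^ (d * j) * lam ^ 2 < ∑' k : Fin d → ℕ, (c j k ε) ^ 2
            then (1 : ℝ≥0∞) else 0)) = ⊤ := by
  have hd1 : (1 : ℝ) ≤ (d : ℝ) := by exact_mod_cast hd
  have hsd : (0 : ℝ) < 2 * s + d := by linarith
  have hα0 : (0 : ℝ) < α := by linarith
  set r : ℝ := 2 * d / (2 * s + d) with hr_def
  set β : ℝ := 2 * d * α / (2 * s + d) with hβ_def
  have hr0 : 0 < r := by rw [hr_def]; positivity
  have hβ0 : 0 < β := by rw [hβ_def]; positivity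
  have hβr : β = r * α := by rw [hβ_def, hr_def]; field_simp
  have hβ2α : β ≤ 2 * α := by
    rw [hβ_def]
    rw [div_le_iff₀ hsd]
    nlinarith
  have h2d : (2 : ℝ) ≤ 2 ^ d := by
    calc (2:ℝ) = 2 ^ 1 := by norm_num
    _ ≤ 2 ^ d := by apply pow_le_pow_right₀ (by norm_num) hd
  have hA1 : (1 : ℝ) ≤ (2:ℝ) ^ d - 1 := by linarith
  -- the common value
  set v : ℕ → ℝ := fun j => ((2 : ℝ) ^ d - 1)⁻¹ * (2 : ℝ) ^ (-(α * j)) with hv_def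
  have hv_pos : ∀ j, 0 < v j := fun j => by
    apply mul_pos (inv_pos.2 (by linarith)) (Real.rpow_pos_of_pos (by norm_num) _)
  have hv_le : ∀ j : ℕ, v j ≤ (2 : ℝ) ^ (-(α * j)) := fun j => by
    rw [hv_def]
    calc ((2 : ℝ) ^ d - 1)⁻¹ * (2 : ℝ) ^ (-(α * j)) ≤ 1 * (2 : ℝ) ^ (-(α * j)) := by
          apply mul_le_mul_of_nonneg_right _ (Real.rpow_nonneg (by norm_num) _)
          rw [inv_le_one_iff₀]; right; exact hA1
    _ = (2 : ℝ) ^ (-(α * j)) := one_mul _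
  have hv_ge : ∀ j : ℕ, (2 : ℝ) ^ (-(d : ℝ) + -(α * j)) ≤ v j := fun j => by
    rw [Real.rpow_add (by norm_num), hv_def]
    apply mul_le_mul_of_nonneg_right _ (Real.rpow_nonneg (by norm_num) _)
    rw [Real.rpow_neg (by norm_num), Real.rpow_natCast]
    apply inv_anti₀ (by linarith) (by linarith)
  -- the number of nonzero coefficients per level
  set nn : ℕ → ℕ := fun j => ⌊(2 : ℝ) ^ (β * j)⌋₊ with hnn_def
  have hrpow_pos : ∀ t : ℝ, (0:ℝ) < 2 ^ t := fun t => Real.rpow_pos_of_pos (by norm_num) t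
  have hone_le : ∀ j : ℕ, (1:ℝ) ≤ 2 ^ (β * (j:ℝ)) := fun j => by
    rw [show (1:ℝ) = 2 ^ (0:ℝ) from (Real.rpow_zero 2).symm]
    apply Real.rpow_le_rpow_of_exponent_le (by norm_num); positivity
  have hnn_le : ∀ j : ℕ, (nn j : ℝ) ≤ 2 ^ (β * (j:ℝ)) := fun j => Nat.floor_le (by positivity)
  have hnn_ge1 : ∀ j : ℕ, 1 ≤ nn j := fun j => Nat.le_floor (by simpa using hone_le j)
  have hnn_ge : ∀ j : ℕ, (2:ℝ) ^ (β * (j:ℝ)) / 2 ≤ (nn j : ℝ) := fun j => by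
    rcases le_or_gt 2 ((2:ℝ) ^ (β * (j:ℝ))) with h | h
    · have h3 := Nat.sub_one_lt_floor ((2:ℝ) ^ (β * (j:ℝ)))
      simp only [hnn_def]
      linarith
    · have h1 := hnn_ge1 j
      have : (1:ℝ) ≤ (nn j : ℝ) := by exact_mod_cast h1
      linarith
  -- supports are finite with cardinality nn j
  have hsupfin : ∀ j ε, {k | c j k ε ≠ 0}.Finite := by
    intro j ε
    apply Set.Finite.subset (Set.Finite.pi (fun _ : Fin d => Set.finite_Iio (2^j)))
    intro k hk
    simp only [Set.mem_pi, Set.mem_univ, Set.mem_Iio, forall_true_left]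
    intro m
    exact hrange j k ε hk m
  have hFcard : ∀ j ε, (hsupfin j ε).toFinset.card = nn j := fun j ε => by
    rw [← Set.ncard_eq_toFinset_card _ (hsupfin j ε)]
    exact hcard j ε
  -- cardinality of Sd d
  have hcardSd : (Fintype.card (Sd d) : ℝ≥0∞) ≤ (2:ℝ≥0∞) ^ d := by
    have h1 : Fintype.card (Sd d) ≤ Fintype.card (Fin d → Bool) :=
      Fintype.card_le_of_injective (fun e => e.1) (fun a b h => Subtype.ext h)
    have h2 : Fintype.card (Sd d) ≤ 2 ^ d := by simpa using h1
    calc (Fintype.card (Sd d) : ℝ≥0∞) ≤ ((2^d : ℕ) : ℝ≥0∞) := by exact_mod_cast h2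
    _ = (2:ℝ≥0∞) ^ d := by push_cast; ring
  -- the key counting bound for sums over k
  have hbound : ∀ (j : ℕ) (ε : Sd d) (g : (Fin d → ℕ) → ℝ≥0∞) (w : ℝ≥0∞),
      (∀ k, c j k ε = 0 → g k = 0) → (∀ k, g k ≤ w) →
      ∑' k, g k ≤ (nn j : ℝ≥0∞) * w := by
    intro j ε g w h0 hw
    calc ∑' k, g k ≤ ∑' k, Set.indicator {k | c j k ε ≠ 0} (fun _ => w) k := by
          apply ENNReal.tsum_le_tsum
          intro k
          by_cases h : c j k ε = 0
          · rw [h0 k h]; exact zero_le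
          · rw [Set.indicator_of_mem (show k ∈ {k' | c j k' ε ≠ 0} from h)]; exact hw k
    _ = ∑ k ∈ (hsupfin j ε).toFinset, Set.indicator {k | c j k ε ≠ 0} (fun _ => w) k := by
          apply tsum_eq_sum
          intro k hk
          exact Set.indicator_of_notMem (by simpa using hk) _
    _ = ∑ _k ∈ (hsupfin j ε).toFinset, w := by
          apply Finset.sum_congr rfl
          intro k hk
          exact Set.indicator_of_mem (show k ∈ {k' | c j k' ε ≠ 0} by simpa using hk) _
    _ = ((hsupfin j ε).toFinset.card : ℝ≥0∞) * w := by
          rw [Finset.sum_const, nsmul_eq_mul]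
    _ = (nn j : ℝ≥0∞) * w := by rw [hFcard]
  have hofReal_nn : ∀ j : ℕ, (nn j : ℝ≥0∞) ≤ ENNReal.ofReal ((2:ℝ) ^ (β * (j:ℝ))) := fun j => by
    rw [← ENNReal.ofReal_natCast]
    exact ENNReal.ofReal_le_ofReal (hnn_le j)
  have sq_rpow : ∀ t : ℝ, ((2:ℝ) ^ t) ^ (2:ℕ) = (2:ℝ) ^ (2 * t) := fun t => by
    rw [← Real.rpow_natCast ((2:ℝ) ^ t) 2, ← Real.rpow_mul (by norm_num)]
    norm_num [mul_comm]
  refine ⟨?_, ?_, ?_⟩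
  · -- (i) local weak Besov condition
    have hx1 : (1:ℝ) < 2 ^ β :=
      Real.one_lt_rpow_iff_of_pos (by norm_num) |>.2 (Or.inl ⟨by norm_num, hβ0⟩)
    have hCtop : (2:ℝ≥0∞) ^ d * ENNReal.ofReal ((2:ℝ) ^ β / ((2:ℝ) ^ β - 1)) < ⊤ :=
      ENNReal.mul_lt_top (ENNReal.pow_lt_top (by norm_num)) ENNReal.ofReal_lt_top
    refine lt_of_le_of_lt (iSup₂_le fun lam hlam => ?_) hCtop
    obtain ⟨hl0, hl1⟩ := hlam
    set L : ℝ := Real.logb 2 lam⁻¹ / α with hL_def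
    have hL0 : 0 ≤ L := by
      apply div_nonneg _ hα0.le
      apply Real.logb_nonneg (by norm_num)
      exact one_le_inv_iff₀.2 ⟨hl0, hl1⟩
    set N : ℕ := ⌈L⌉₊ with hN_def
    have hA : ∀ j : ℕ, (∑' (k : Fin d → ℕ) (ε : Sd d), if lam < |c j k ε| then (1:ℝ≥0∞) else 0)
        ≤ if j < N then (2:ℝ≥0∞) ^ d * ENNReal.ofReal ((2:ℝ) ^ (β * (j:ℝ))) else 0 := by
      intro j
      by_cases hj : j < N
      · rw [if_pos hj, ENNReal.tsum_comm, tsum_fintype]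
        calc ∑ ε : Sd d, ∑' k, (if lam < |c j k ε| then (1:ℝ≥0∞) else 0)
            ≤ ∑ _ε : Sd d, (nn j : ℝ≥0∞) * 1 := by
              apply Finset.sum_le_sum
              intro ε _
              apply hbound j ε _ 1
              · intro k hk; rw [hk, abs_zero, if_neg (not_lt.2 hl0.le)]
              · intro k; split <;> simp
          _ = (Fintype.card (Sd d) : ℝ≥0∞) * ((nn j : ℝ≥0∞) * 1) := by
              rw [Finset.sum_const, nsmul_eq_mul, Finset.card_univ]
          _ ≤ (2:ℝ≥0∞) ^ d * ENNReal.ofReal ((2:ℝ) ^ (β * (j:ℝ))) := by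
              rw [mul_one]
              exact mul_le_mul' hcardSd (hofReal_nn j)
      · rw [if_neg hj]
        have hz : ∀ (k : Fin d → ℕ) (ε : Sd d),
            (if lam < |c j k ε| then (1:ℝ≥0∞) else 0) = 0 := by
          intro k ε
          rw [if_neg]
          intro hlt
          have hcne : c j k ε ≠ 0 := by
            intro h; rw [h, abs_zero] at hlt; linarith
          have hcv : c j k ε = v j := (hval j k ε).resolve_left hcne
          have h2 : lam < (2:ℝ) ^ (-(α*(j:ℝ))) := by
            rw [hcv, abs_of_pos (hv_pos j)] at hlt
            exact lt_of_lt_of_le hlt (hv_le j)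
          have h3 : Real.logb 2 lam < -(α*(j:ℝ)) := by
            calc Real.logb 2 lam < Real.logb 2 ((2:ℝ) ^ (-(α*(j:ℝ)))) :=
                  Real.logb_lt_logb (by norm_num) hl0 h2
            _ = -(α*(j:ℝ)) := Real.logb_rpow (by norm_num) (by norm_num)
          have h4 : α * j < Real.logb 2 lam⁻¹ := by rw [Real.logb_inv]; linarith
          have h5 : (j:ℝ) < L := by rw [hL_def, lt_div_iff₀ hα0]; linarith
          exact absurd (Nat.lt_ceil.2 h5) hj
        simp [hz]
    have hT : (∑' (j : ℕ) (k : Fin d → ℕ) (ε : Sd d), if lam < |c j k ε| then (1:ℝ≥0∞) else 0)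
        ≤ (2:ℝ≥0∞) ^ d * ENNReal.ofReal (∑ j ∈ Finset.range N, (2:ℝ) ^ (β*(j:ℝ))) := by
      calc (∑' (j : ℕ) (k : Fin d → ℕ) (ε : Sd d), if lam < |c j k ε| then (1:ℝ≥0∞) else 0)
          ≤ ∑' j : ℕ, (if j < N then (2:ℝ≥0∞) ^ d * ENNReal.ofReal ((2:ℝ) ^ (β*(j:ℝ))) else 0) := ENNReal.tsum_le_tsum hA
        _ = ∑ j ∈ Finset.range N, (if j < N then (2:ℝ≥0∞) ^ d * ENNReal.ofReal ((2:ℝ) ^ (β*(j:ℝ))) else 0) := tsum_eq_sum (fun j hj => if_neg (by simpa using hj))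
        _ = ∑ j ∈ Finset.range N, (2:ℝ≥0∞) ^ d * ENNReal.ofReal ((2:ℝ) ^ (β*(j:ℝ))) :=
            Finset.sum_congr rfl (fun j hj => if_pos (Finset.mem_range.1 hj))
        _ = (2:ℝ≥0∞) ^ d * ∑ j ∈ Finset.range N, ENNReal.ofReal ((2:ℝ) ^ (β*(j:ℝ))) := by
            rw [← Finset.mul_sum]
        _ = (2:ℝ≥0∞) ^ d * ENNReal.ofReal (∑ j ∈ Finset.range N, (2:ℝ) ^ (β*(j:ℝ))) := by
            rw [ENNReal.ofReal_sum_of_nonneg (fun j _ => (hrpow_pos _).le)]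
    have hreal : lam ^ r * (∑ j ∈ Finset.range N, (2:ℝ) ^ (β*(j:ℝ)))
        ≤ (2:ℝ) ^ β / ((2:ℝ) ^ β - 1) := by
      have hb1 : (0:ℝ) < 2 ^ β - 1 := by linarith
      have hlr : (0:ℝ) < lam ^ r := Real.rpow_pos_of_pos hl0 r
      have hsum : (∑ j ∈ Finset.range N, (2:ℝ) ^ (β*(j:ℝ))) ≤ 2 ^ (β*(N:ℝ)) / (2^β - 1) := by
        have h1 : ∀ j ∈ Finset.range N, (2:ℝ) ^ (β*(j:ℝ)) = ((2:ℝ) ^ β) ^ j := by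
          intro j _
          rw [Real.rpow_mul (by norm_num : (0:ℝ) ≤ 2), Real.rpow_natCast]
        have h2 : ((2:ℝ) ^ β) ^ N = 2 ^ (β*(N:ℝ)) := by
          rw [Real.rpow_mul (by norm_num : (0:ℝ) ≤ 2), Real.rpow_natCast]
        rw [Finset.sum_congr rfl h1, geom_sum_eq (ne_of_gt hx1), h2]
        gcongr
        linarith [hrpow_pos (β*(N:ℝ))]
      have hxN : (2:ℝ) ^ (β*(N:ℝ)) ≤ 2 ^ β * (lam⁻¹) ^ r := by
        have hN_le : (N:ℝ) ≤ L + 1 := (Nat.ceil_lt_add_one hL0).le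
        calc (2:ℝ) ^ (β*(N:ℝ)) ≤ (2:ℝ) ^ (β*(L+1)) :=
              Real.rpow_le_rpow_of_exponent_le (by norm_num) (by nlinarith)
        _ = 2 ^ β * 2 ^ (β*L) := by
            rw [mul_add, mul_one, Real.rpow_add (by norm_num)]; ring
        _ = 2 ^ β * (lam⁻¹) ^ r := by
            congr 1
            have hαL : α * L = Real.logb 2 lam⁻¹ := by rw [hL_def]; field_simp
            have hb : β * L = Real.logb 2 lam⁻¹ * r := by
              rw [hβr, ← hαL]; ring
            rw [hb, Real.rpow_mul (by norm_num : (0:ℝ) ≤ 2),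
              Real.rpow_logb (by norm_num) (by norm_num) (inv_pos.2 hl0)]
      calc lam ^ r * (∑ j ∈ Finset.range N, (2:ℝ) ^ (β*(j:ℝ)))
          ≤ lam ^ r * ((2 ^ β * (lam⁻¹) ^ r) / (2^β - 1)) := by
            apply mul_le_mul_of_nonneg_left _ hlr.le
            refine le_trans hsum ?_
            gcongr
        _ = (2:ℝ) ^ β / ((2:ℝ) ^ β - 1) := by
            rw [Real.inv_rpow hl0.le]
            field_simp
    calc ENNReal.ofReal (lam ^ r) *
          (∑' (j : ℕ) (k : Fin d → ℕ) (ε : Sd d), if lam < |c j k ε| then (1:ℝ≥0∞) else 0)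
        ≤ ENNReal.ofReal (lam ^ r) * ((2:ℝ≥0∞) ^ d *
            ENNReal.ofReal (∑ j ∈ Finset.range N, (2:ℝ) ^ (β*(j:ℝ)))) := mul_le_mul_right hT _
      _ = (2:ℝ≥0∞) ^ d * (ENNReal.ofReal (lam ^ r) *
            ENNReal.ofReal (∑ j ∈ Finset.range N, (2:ℝ) ^ (β*(j:ℝ)))) := by ring
      _ = (2:ℝ≥0∞) ^ d * ENNReal.ofReal (lam ^ r * ∑ j ∈ Finset.range N, (2:ℝ) ^ (β*(j:ℝ))) := by
          rw [← ENNReal.ofReal_mul (Real.rpow_nonneg hl0.le _)]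
      _ ≤ (2:ℝ≥0∞) ^ d * ENNReal.ofReal ((2:ℝ) ^ β / ((2:ℝ) ^ β - 1)) :=
          mul_le_mul_right (ENNReal.ofReal_le_ofReal hreal) _
  · -- (ii) Besov condition
    set γ : ℝ := 4 * α * s / (2 * s + d) with hγ_def
    have hγ0 : 0 < γ := by rw [hγ_def]; positivity
    have hβ2γ : β - 2*α = -γ := by rw [hβ_def, hγ_def]; field_simp; ring
    set q : ℝ≥0∞ := ENNReal.ofReal ((2:ℝ) ^ (-γ)) with hq_def
    have hq1 : q < 1 := ENNReal.ofReal_lt_one.2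
      (Real.rpow_lt_one_of_one_lt_of_neg (by norm_num) (by linarith))
    have hqtop : (1 - q)⁻¹ < ⊤ := ENNReal.inv_lt_top.2 (tsub_pos_of_lt hq1)
    have hCtop : (2:ℝ≥0∞) ^ d * (1 - q)⁻¹ < ⊤ :=
      ENNReal.mul_lt_top (ENNReal.pow_lt_top (by norm_num)) hqtop
    refine lt_of_le_of_lt (iSup_le fun J => ?_) hCtop
    have hA2 : ∀ j : ℕ, (∑' (k : Fin d → ℕ) (ε : Sd d), ENNReal.ofReal ((c j k ε)^2))
        ≤ (2:ℝ≥0∞) ^ d * ENNReal.ofReal ((2:ℝ) ^ (-(γ*(j:ℝ)))) := by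
      intro j
      rw [ENNReal.tsum_comm, tsum_fintype]
      calc ∑ ε : Sd d, ∑' k, ENNReal.ofReal ((c j k ε)^2)
          ≤ ∑ _ε : Sd d, (nn j : ℝ≥0∞) * ENNReal.ofReal ((v j)^2) := by
            apply Finset.sum_le_sum
            intro ε _
            apply hbound j ε _ _
            · intro k hk; rw [hk]; simp
            · intro k
              rcases hval j k ε with h | h
              · rw [h]; simp
              · rw [h]
        _ = (Fintype.card (Sd d) : ℝ≥0∞) * ((nn j : ℝ≥0∞) * ENNReal.ofReal ((v j)^2)) := by
            rw [Finset.sum_const, nsmul_eq_mul, Finset.card_univ]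
        _ ≤ (2:ℝ≥0∞) ^ d * (ENNReal.ofReal ((2:ℝ)^(β*(j:ℝ))) *
              ENNReal.ofReal ((2:ℝ)^(2*(-(α*(j:ℝ)))))) := by
            apply mul_le_mul' hcardSd
            apply mul_le_mul' (hofReal_nn j)
            apply ENNReal.ofReal_le_ofReal
            calc (v j)^2 ≤ ((2:ℝ)^(-(α*(j:ℝ))))^2 :=
                  pow_le_pow_left₀ (hv_pos j).le (hv_le j) 2
            _ = (2:ℝ)^(2*(-(α*(j:ℝ)))) := sq_rpow _
        _ = (2:ℝ≥0∞) ^ d * ENNReal.ofReal ((2:ℝ) ^ (-(γ*(j:ℝ)))) := by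
            rw [← ENNReal.ofReal_mul (by positivity), ← Real.rpow_add (by norm_num)]
            have hexp : β*(j:ℝ) + 2*(-(α*(j:ℝ))) = -(γ*(j:ℝ)) := by
              linear_combination (j:ℝ) * hβ2γ
            rw [hexp]
    have hγ2 : 2*((d:ℝ)*s/(2*s+d)) ≤ γ := by
      rw [hγ_def]
      calc 2*((d:ℝ)*s/(2*s+d)) = (2*d*s)/(2*s+d) := by ring
      _ ≤ (4*α*s)/(2*s+d) := (div_le_div_iff_of_pos_right hsd).2 (by nlinarith)
    have hJ0 : (0:ℝ) ≤ (J:ℝ) := Nat.cast_nonneg J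
    have h6 : 2*(J:ℝ)*((d:ℝ)*s/(2*s+d)) ≤ γ*(J:ℝ) := by
      have := mul_le_mul_of_nonneg_left hγ2 hJ0
      nlinarith
    have hE : 2*(J:ℝ)*((d:ℝ)*s/(2*s+d)) + (-(γ*((J:ℝ)+1))) ≤ 0 := by linarith
    have hterm : ∀ i : ℕ, ENNReal.ofReal ((2:ℝ) ^ (-(γ*(((J+1+i : ℕ)):ℝ))))
        = ENNReal.ofReal ((2:ℝ) ^ (-(γ*((J:ℝ)+1)))) * q ^ i := by
      intro i
      have h1 : (-(γ*(((J+1+i : ℕ)):ℝ))) = (-(γ*((J:ℝ)+1))) + (-γ)*(i:ℝ) := by push_cast; ring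
      rw [h1, Real.rpow_add (by norm_num), ENNReal.ofReal_mul (by positivity)]
      congr 1
      rw [Real.rpow_mul (by norm_num : (0:ℝ) ≤ 2), Real.rpow_natCast,
        ENNReal.ofReal_pow (by positivity)]
    calc ENNReal.ofReal ((2:ℝ) ^ (2*(J:ℝ)*((d:ℝ)*s/(2*s+d)))) *
          ∑' (j : {j : ℕ // J < j}) (k : Fin d → ℕ) (ε : Sd d), ENNReal.ofReal ((c j.1 k ε)^2)
        ≤ ENNReal.ofReal ((2:ℝ) ^ (2*(J:ℝ)*((d:ℝ)*s/(2*s+d)))) *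
          ∑' (j : {j : ℕ // J < j}), ((2:ℝ≥0∞) ^ d * ENNReal.ofReal ((2:ℝ) ^ (-(γ*(j.1:ℝ))))) :=
          by apply mul_le_mul_right; exact ENNReal.tsum_le_tsum fun j => hA2 j.1
      _ = ENNReal.ofReal ((2:ℝ) ^ (2*(J:ℝ)*((d:ℝ)*s/(2*s+d)))) *
          ∑' i : ℕ, ((2:ℝ≥0∞) ^ d * ENNReal.ofReal ((2:ℝ) ^ (-(γ*(((J+1+i : ℕ)):ℝ))))) := by
          rw [← Equiv.tsum_eq (tailEquiv J)
            (fun j => (2:ℝ≥0∞) ^ d * ENNReal.ofReal ((2:ℝ) ^ (-(γ*(j.1:ℝ)))))]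
          rfl
      _ = ENNReal.ofReal ((2:ℝ) ^ (2*(J:ℝ)*((d:ℝ)*s/(2*s+d)))) *
          ((2:ℝ≥0∞) ^ d * ENNReal.ofReal ((2:ℝ) ^ (-(γ*((J:ℝ)+1)))) * ∑' i : ℕ, q ^ i) := by
          simp only [hterm, ← mul_assoc]
          rw [ENNReal.tsum_mul_left]
          ring
      _ = ((2:ℝ≥0∞) ^ d * (1 - q)⁻¹) * (ENNReal.ofReal ((2:ℝ) ^ (2*(J:ℝ)*((d:ℝ)*s/(2*s+d)))) *
            ENNReal.ofReal ((2:ℝ) ^ (-(γ*((J:ℝ)+1))))) := by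
          rw [ENNReal.tsum_geometric]
          ring
      _ ≤ ((2:ℝ≥0∞) ^ d * (1 - q)⁻¹) * 1 := by
          apply mul_le_mul_right
          rw [← ENNReal.ofReal_mul (by positivity), ← Real.rpow_add (by norm_num)]
          exact ENNReal.ofReal_le_one.2 (Real.rpow_le_one_of_one_le_of_nonpos (by norm_num) hE)
      _ = (2:ℝ≥0∞) ^ d * (1 - q)⁻¹ := mul_one _

  · -- (iii) global weak Besov condition fails
    set ε₀ : Sd d := ⟨fun _ => true, fun h => by have := congrFun h ⟨0, hd⟩; simp at this⟩
      with hε0_def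
    set η : ℝ := (r/2)*(β - 2*α - d) + d with hη_def
    have hd0 : (0:ℝ) < (d:ℝ) := by linarith
    have hη0 : 0 < η := by
      have hkey : η = 2*s*(d:ℝ)*(2*s + d - 2*α) / (2*s+d)^2 := by
        rw [hη_def, hr_def, hβ_def]; field_simp; ring
      rw [hkey]
      have h1 : 0 < 2*s + (d:ℝ) - 2*α := by linarith
      exact div_pos (mul_pos (mul_pos (mul_pos two_pos hs) hd0) h1) (pow_pos hsd 2)
    set X : ℝ := (2:ℝ)^η with hX_def
    have hX1 : 1 < X := Real.one_lt_rpow_iff_of_pos (by norm_num) |>.2 (Or.inl ⟨by norm_num, hη0⟩)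
    have hmain : ∀ j : ℕ, ∃ lam ∈ Set.Ioc (0:ℝ) 1,
        ENNReal.ofReal ((2:ℝ)^(-(((d:ℝ)+1)*r)) * X ^ j) ≤
          ENNReal.ofReal (lam ^ r) * ∑' j' : ℕ, (2 : ℝ≥0∞) ^ (d * j') * ∑ ε : Sd d,
            (if (2 : ℝ) ^ (d * j') * lam ^ 2 < ∑' k : Fin d → ℕ, (c j' k ε) ^ 2
              then (1 : ℝ≥0∞) else 0) := by
      intro j
      have hfin := hsupfin j ε₀
      have hcardF : hfin.toFinset.card = nn j := hFcard j ε₀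
      have hAj : ∑' k : Fin d → ℕ, (c j k ε₀)^2 = (nn j : ℝ) * (v j)^2 := by
        rw [tsum_eq_sum (s := hfin.toFinset) (fun k hk => by
          have h0 : c j k ε₀ = 0 := by simpa using hk
          rw [h0]; ring)]
        rw [Finset.sum_congr rfl (fun k hk => by
          have hcne : c j k ε₀ ≠ 0 := by simpa using hk
          rw [(hval j k ε₀).resolve_left hcne])]
        rw [Finset.sum_const, hcardF, nsmul_eq_mul]
      set lam : ℝ := Real.sqrt ((nn j : ℝ) * (v j)^2 / (2 * 2^(d*j))) with hlam_def
      have hpow_pos : (0:ℝ) < 2^(d*j) := by positivity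
      have hnpos : (0:ℝ) < (nn j : ℝ) := by exact_mod_cast hnn_ge1 j
      have hvsq : (0:ℝ) < (v j)^2 := pow_pos (hv_pos j) 2
      have harg_pos : 0 < (nn j : ℝ) * (v j)^2 / (2 * 2^(d*j)) :=
        div_pos (mul_pos hnpos hvsq) (by positivity)
      have hlam0 : 0 < lam := Real.sqrt_pos.2 harg_pos
      have hlamsq : lam^2 = (nn j : ℝ) * (v j)^2 / (2 * 2^(d*j)) := Real.sq_sqrt harg_pos.le
      have hnv1 : (nn j : ℝ) * (v j)^2 ≤ 1 := by
        calc (nn j : ℝ) * (v j)^2 ≤ 2^(β*(j:ℝ)) * ((2:ℝ)^(-(α*(j:ℝ))))^2 :=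
              mul_le_mul (hnn_le j) (pow_le_pow_left₀ (hv_pos j).le (hv_le j) 2)
                (by positivity) (by positivity)
        _ = (2:ℝ)^(β*(j:ℝ) + 2*(-(α*(j:ℝ)))) := by
              rw [sq_rpow, ← Real.rpow_add (by norm_num)]
        _ ≤ 1 := by
              apply Real.rpow_le_one_of_one_le_of_nonpos (by norm_num)
              nlinarith [mul_nonneg (sub_nonneg.2 hβ2α) (Nat.cast_nonneg j : (0:ℝ) ≤ (j:ℝ))]
      have hone_le_pow : (1:ℝ) ≤ 2^(d*j) := one_le_pow₀ (by norm_num)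
      have hlam1 : lam ≤ 1 := by
        rw [hlam_def]
        rw [Real.sqrt_le_one]
        rw [div_le_one (by positivity)]
        nlinarith
      refine ⟨lam, ⟨hlam0, hlam1⟩, ?_⟩
      have hind : (if (2:ℝ)^(d*j) * lam^2 < ∑' k : Fin d → ℕ, (c j k ε₀)^2
          then (1:ℝ≥0∞) else 0) = 1 := by
        rw [if_pos]
        rw [hAj, hlamsq]
        rw [show (2:ℝ)^(d*j) * ((nn j:ℝ)*(v j)^2/(2*2^(d*j))) = (nn j:ℝ)*(v j)^2/2 from by
          field_simp]
        nlinarith [mul_pos hnpos hvsq]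
      have hsumε : (1:ℝ≥0∞) ≤ ∑ ε : Sd d,
          (if (2:ℝ)^(d*j) * lam^2 < ∑' k : Fin d → ℕ, (c j k ε)^2 then (1:ℝ≥0∞) else 0) := by
        exact le_trans (le_of_eq hind.symm)
          (Finset.single_le_sum (f := fun ε : Sd d => (if (2:ℝ)^(d*j) * lam^2 <
            ∑' k : Fin d → ℕ, (c j k ε)^2 then (1:ℝ≥0∞) else 0))
            (fun ε _ => zero_le) (Finset.mem_univ ε₀))
      have hsumj : (2:ℝ≥0∞)^(d*j) * 1 ≤ ∑' j' : ℕ, (2 : ℝ≥0∞) ^ (d * j') * ∑ ε : Sd d,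
          (if (2 : ℝ) ^ (d * j') * lam ^ 2 < ∑' k : Fin d → ℕ, (c j' k ε) ^ 2
            then (1 : ℝ≥0∞) else 0) := by
        refine le_trans ?_ (ENNReal.le_tsum j)
        exact mul_le_mul_right hsumε _
      -- the real estimate
      have hl2 : lam ^ r = (lam^2) ^ (r/2) := by
        rw [← Real.rpow_natCast lam 2, ← Real.rpow_mul hlam0.le]
        push_cast
        rw [show (2:ℝ) * (r/2) = r from by ring]
      have harg_lb : (2:ℝ) ^ ((β - 2*α - (d:ℝ))*(j:ℝ) - (2*(d:ℝ) + 2)) ≤ lam^2 := by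
        rw [hlamsq]
        have hn' : (2:ℝ)^(β*(j:ℝ) - 1) ≤ (nn j : ℝ) := by
          rw [Real.rpow_sub (by norm_num), Real.rpow_one]; exact hnn_ge j
        have hv' : (2:ℝ)^(2*(-(d:ℝ) + -(α*(j:ℝ)))) ≤ (v j)^2 := by
          rw [← sq_rpow]; exact pow_le_pow_left₀ (by positivity) (hv_ge j) 2
        have hden : (2:ℝ) * 2^(d*j) = 2^((d:ℝ)*(j:ℝ) + 1) := by
          rw [Real.rpow_add (by norm_num), Real.rpow_one, ← Real.rpow_natCast 2 (d*j)]
          push_cast; ring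
        calc (2:ℝ) ^ ((β - 2*α - (d:ℝ))*(j:ℝ) - (2*(d:ℝ) + 2))
            = (2:ℝ)^(β*(j:ℝ) - 1) * (2:ℝ)^(2*(-(d:ℝ) + -(α*(j:ℝ)))) / 2^((d:ℝ)*(j:ℝ) + 1) := by
              rw [← Real.rpow_add (by norm_num), ← Real.rpow_sub (by norm_num)]
              congr 1
              ring
        _ ≤ (nn j : ℝ) * (v j)^2 / (2 * 2^(d*j)) := by
              rw [hden]
              exact div_le_div₀ (by positivity)
                (mul_le_mul hn' hv' (by positivity) (by positivity))
                (hrpow_pos _) le_rfl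
      have h7 : (2:ℝ)^(((β - 2*α - (d:ℝ))*(j:ℝ) - (2*(d:ℝ) + 2)) * (r/2)) ≤ (lam^2)^(r/2) := by
        rw [Real.rpow_mul (by norm_num : (0:ℝ) ≤ 2)]
        exact Real.rpow_le_rpow (by positivity) harg_lb (by positivity)
      have hdj : (2:ℝ)^((d:ℝ)*(j:ℝ)) = 2^(d*j) := by
        rw [← Real.rpow_natCast 2 (d*j)]
        congr 1
        push_cast; ring
      have hlam_lb : (2:ℝ)^(-(((d:ℝ)+1)*r)) * X ^ j ≤ lam ^ r * 2^(d*j) := by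
        have hXj : X ^ j = (2:ℝ)^(η*(j:ℝ)) := by
          rw [hX_def, Real.rpow_mul (by norm_num : (0:ℝ) ≤ 2), Real.rpow_natCast]
        calc (2:ℝ)^(-(((d:ℝ)+1)*r)) * X ^ j
            = (2:ℝ)^((((β - 2*α - (d:ℝ))*(j:ℝ) - (2*(d:ℝ) + 2)) * (r/2)) + (d:ℝ)*(j:ℝ)) := by
              rw [hXj, ← Real.rpow_add (by norm_num)]
              congr 1
              rw [hη_def]; ring
        _ = (2:ℝ)^((((β - 2*α - (d:ℝ))*(j:ℝ) - (2*(d:ℝ) + 2)) * (r/2))) * (2:ℝ)^((d:ℝ)*(j:ℝ)) := by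
              rw [← Real.rpow_add (by norm_num)]
        _ ≤ (lam^2)^(r/2) * (2:ℝ)^((d:ℝ)*(j:ℝ)) :=
              mul_le_mul_of_nonneg_right h7 (by positivity)
        _ = lam ^ r * 2^(d*j) := by rw [← hl2, hdj]
      calc ENNReal.ofReal ((2:ℝ)^(-(((d:ℝ)+1)*r)) * X ^ j)
          ≤ ENNReal.ofReal (lam ^ r * 2^(d*j)) := ENNReal.ofReal_le_ofReal hlam_lb
        _ = ENNReal.ofReal (lam ^ r) * ENNReal.ofReal ((2:ℝ)^(d*j)) :=
            ENNReal.ofReal_mul (Real.rpow_nonneg hlam0.le r)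
        _ = ENNReal.ofReal (lam ^ r) * (2:ℝ≥0∞)^(d*j) := by
            rw [ENNReal.ofReal_pow (by norm_num : (0:ℝ) ≤ 2), ENNReal.ofReal_ofNat]
        _ ≤ ENNReal.ofReal (lam ^ r) * ∑' j' : ℕ, (2 : ℝ≥0∞) ^ (d * j') * ∑ ε : Sd d,
            (if (2 : ℝ) ^ (d * j') * lam ^ 2 < ∑' k : Fin d → ℕ, (c j' k ε) ^ 2
              then (1 : ℝ≥0∞) else 0) := by
            apply mul_le_mul_right
            simpa using hsumj
    by_contra hne
    obtain ⟨m, hm⟩ := ENNReal.exists_nat_gt hne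
    obtain ⟨j, hj⟩ := pow_unbounded_of_one_lt ((m:ℝ) / ((2:ℝ)^(-(((d:ℝ)+1)*r)))) hX1
    obtain ⟨lam, hlam, hle⟩ := hmain j
    have h1 : (m:ℝ≥0∞) ≤ ENNReal.ofReal ((2:ℝ)^(-(((d:ℝ)+1)*r)) * X ^ j) := by
      rw [← ENNReal.ofReal_natCast]
      apply ENNReal.ofReal_le_ofReal
      rw [div_lt_iff₀ (hrpow_pos _)] at hj
      nlinarith
    have h2 : (m:ℝ≥0∞) ≤ ⨆ lam ∈ Set.Ioc (0 : ℝ) 1, ENNReal.ofReal (lam ^ r) *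
        ∑' j : ℕ, (2 : ℝ≥0∞) ^ (d * j) * ∑ ε : Sd d,
          (if (2 : ℝ) ^ (d * j) * lam ^ 2 < ∑' k : Fin d → ℕ, (c j k ε) ^ 2
            then (1 : ℝ≥0∞) else 0) :=
      le_trans h1 (le_trans hle (le_iSup₂_of_le lam hlam (le_refl _)))
    exact absurd (lt_of_lt_of_le hm h2) (lt_irrefl _)
end
end

section
/- Let δ > 0. There exists a constant K₁ > 0 such that for every integer n with n log n ≥ 2 (δ^{-1} ∨ 1), every level j ∈ ℕ with 2^j ≤ (1/3) (2n / (δ log n))^{1/2}, every m ∈ {1,…,d}, every k ∈ ℤ^d and every ε ∈ S_d: P(N_j(m) > (L+3) n 2^{-j}) ≤ K₁ n^{-δ} and P(N_j > d (L+3) n 2^{-j}) ≤ K₁ n^{-δ}. -/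
open MeasureTheory ProbabilityTheory Real Set
open scoped ENNReal NNReal

noncomputable section

attribute [local instance] Classical.propDecidable

namespace CopulaEstimation

variable {Ω : Type} [MeasureSpace Ω]

/-- The sampling model: `X` is an i.i.d. sequence of `ℝ^d`-valued random vectors defined on a
probability space, with continuous marginal distribution functions `F_1, …, F_d`, such that the
law of `(F_1(X^1), …, F_d(X^d))` has density `c ∈ L²([0,1]^d)` (the copula density) with respect
to Lebesgue measure on `[0,1]^d`. -/
def IsCopulaModel {Ω : Type} [MeasureSpace Ω] (d : ℕ) (X : ℕ → Ω → Fin d → ℝ)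
    (F : Fin d → ℝ → ℝ) (c : (Fin d → ℝ) → ℝ) : Prop :=
  IsProbabilityMeasure (ℙ : Measure Ω) ∧
  (∀ i, Measurable (X i)) ∧
  (∀ i, Measure.map (X i) ℙ = Measure.map (X 0) ℙ) ∧
  iIndepFun X ℙ ∧
  (∀ m t, F m t = (ℙ {ω | X 0 ω m ≤ t}).toReal) ∧
  (∀ m, Continuous (F m)) ∧
  MemLp c 2 (volume.restrict (box d)) ∧
  (∀ x, x ∉ box d → c x = 0) ∧
  Measure.map (fun ω m => F m (X 0 ω m)) ℙ
    = (volume.restrict (box d)).withDensity fun x => ENNReal.ofReal (c x)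

/-- The rank `R_i^p` of `X_i^p` in the sample of size `n`. -/
def rnk {d : ℕ} (X : ℕ → Ω → Fin d → ℝ) (n i : ℕ) (ω : Ω) (p : Fin d) : ℕ :=
  ((Finset.range n).filter fun l => X l ω p < X i ω p).card

/-- Rank-based empirical scaling coefficient `c̃_{j,k}`. -/
def empS (φ : ℝ → ℝ) {d : ℕ} (X : ℕ → Ω → Fin d → ℝ) (n j : ℕ) (k : Fin d → ℤ)
    (ω : Ω) : ℝ :=
  (n : ℝ)⁻¹ * ∑ i ∈ Finset.range n, tensS φ j k fun p => (rnk X n i ω p : ℝ) / n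

/-- Rank-based empirical wavelet coefficient `c̃^ε_{j,k}`. -/
def empW (φ ψ : ℝ → ℝ) {d : ℕ} (X : ℕ → Ω → Fin d → ℝ) (n j : ℕ) (k : Fin d → ℤ)
    (ε : Fin d → Bool) (ω : Ω) : ℝ :=
  (n : ℝ)⁻¹ * ∑ i ∈ Finset.range n, tensW φ ψ j ε k fun p => (rnk X n i ω p : ℝ) / n

/-- Direct-observation empirical scaling coefficient `ĉ_{j,k}`. -/
def dirS (φ : ℝ → ℝ) {d : ℕ} (X : ℕ → Ω → Fin d → ℝ) (F : Fin d → ℝ → ℝ) (n j : ℕ)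
    (k : Fin d → ℤ) (ω : Ω) : ℝ :=
  (n : ℝ)⁻¹ * ∑ i ∈ Finset.range n, tensS φ j k fun p => F p (X i ω p)

/-- Direct-observation empirical wavelet coefficient `ĉ^ε_{j,k}`. -/
def dirW (φ ψ : ℝ → ℝ) {d : ℕ} (X : ℕ → Ω → Fin d → ℝ) (F : Fin d → ℝ → ℝ) (n j : ℕ)
    (k : Fin d → ℤ) (ε : Fin d → Bool) (ω : Ω) : ℝ :=
  (n : ℝ)⁻¹ * ∑ i ∈ Finset.range n, tensW φ ψ j ε k fun p => F p (X i ω p)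

/-- Generic linear wavelet reconstruction at level `j_n` from coefficients `aS`. -/
def estLin (φ : ℝ → ℝ) {d : ℕ} (aS : ℕ → (Fin d → ℤ) → Ω → ℝ) (jn : ℕ) (ω : Ω)
    (x : Fin d → ℝ) : ℝ :=
  ∑' k : Fin d → ℤ, aS jn k ω * tensS φ jn k x

/-- Generic hard local thresholding estimator built from coefficients `aS`, `aW`. -/
def estHLgen (φ ψ : ℝ → ℝ) {d : ℕ} (aS : ℕ → (Fin d → ℤ) → Ω → ℝ)
    (aW : ℕ → (Fin d → ℤ) → (Fin d → Bool) → Ω → ℝ) (jn Jn : ℕ) (lam : ℝ) (ω : Ω)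
    (x : Fin d → ℝ) : ℝ :=
  (∑' k : Fin d → ℤ, aS jn k ω * tensS φ jn k x)
    + ∑ j ∈ Finset.Icc jn Jn, ∑' k : Fin d → ℤ, ∑ ε : Sd d,
        (if lam < |aW j k ε.1 ω| then aW j k ε.1 ω else 0) * tensW φ ψ j ε.1 k x

/-- Generic hard global thresholding estimator built from coefficients `aS`, `aW`. -/
def estHGgen (φ ψ : ℝ → ℝ) {d : ℕ} (L : ℝ) (aS : ℕ → (Fin d → ℤ) → Ω → ℝ)
    (aW : ℕ → (Fin d → ℤ) → (Fin d → Bool) → Ω → ℝ) (jn Jn : ℕ) (lam : ℝ) (ω : Ω)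
    (x : Fin d → ℝ) : ℝ :=
  (∑' k : Fin d → ℤ, aS jn k ω * tensS φ jn k x)
    + ∑ j ∈ Finset.Icc jn Jn, ∑' k : Fin d → ℤ, ∑ ε : Sd d,
        (if L ^ d * 2 ^ (d * j) * lam ^ 2 < ∑' k' : Fin d → ℤ, (aW j k' ε.1 ω) ^ 2
          then aW j k ε.1 ω else 0) * tensW φ ψ j ε.1 k x

/-- Hard local thresholding estimator `c̃_HL` from the rank-based coefficients. -/
def estHL (φ ψ : ℝ → ℝ) {d : ℕ} (X : ℕ → Ω → Fin d → ℝ) (n jn Jn : ℕ) (lam : ℝ) :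
    Ω → (Fin d → ℝ) → ℝ :=
  estHLgen φ ψ (fun j k => empS φ X n j k) (fun j k ε => empW φ ψ X n j k ε) jn Jn lam

/-- Hard global thresholding estimator `c̃_HG` from the rank-based coefficients. -/
def estHG (φ ψ : ℝ → ℝ) {d : ℕ} (L : ℝ) (X : ℕ → Ω → Fin d → ℝ) (n jn Jn : ℕ)
    (lam : ℝ) : Ω → (Fin d → ℝ) → ℝ :=
  estHGgen φ ψ L (fun j k => empS φ X n j k) (fun j k ε => empW φ ψ X n j k ε) jn Jn lam

/-- Expected squared `L²([0,1]^d)` error `E‖est − c‖²` of an estimator. -/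
def risk {d : ℕ} (est : Ω → (Fin d → ℝ) → ℝ) (c : (Fin d → ℝ) → ℝ) : ℝ≥0∞ :=
  ∫⁻ ω, ∫⁻ x in box d, ENNReal.ofReal ((est ω x - c x) ^ 2) ∂volume ∂ℙ

/-- The tuning condition `2^{j_n − 1} < (log n)^{1/d} ≤ 2^{j_n}`. -/
def TuneJlo (d : ℕ) (jn : ℕ → ℕ) : Prop :=
  ∀ n : ℕ, 2 ≤ n →
    (2 : ℝ) ^ (jn n) < 2 * (Real.log n) ^ ((d : ℝ)⁻¹) ∧
    (Real.log n) ^ ((d : ℝ)⁻¹) ≤ (2 : ℝ) ^ (jn n)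

/-- The tuning condition `2^{J_n − 1} < (n / log n)^{1/d} ≤ 2^{J_n}`. -/
def TuneJhi (d : ℕ) (Jn : ℕ → ℕ) : Prop :=
  ∀ n : ℕ, 2 ≤ n →
    (2 : ℝ) ^ (Jn n) < 2 * ((n : ℝ) / Real.log n) ^ ((d : ℝ)⁻¹) ∧
    ((n : ℝ) / Real.log n) ^ ((d : ℝ)⁻¹) ≤ (2 : ℝ) ^ (Jn n)

/-- The threshold `λ_n = √(κ log n / n)`. -/
def thresh (κ : ℝ) (n : ℕ) : ℝ := Real.sqrt (κ * Real.log n / n)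

/-- The normalized rate factor `(n / log n)^{2s/(2s+d)}`. -/
def rateFactor (d : ℕ) (s : ℝ) (n : ℕ) : ℝ≥0∞ :=
  ENNReal.ofReal (((n : ℝ) / Real.log n) ^ (2 * s / (2 * s + d)))

end CopulaEstimation
namespace CopulaEstimation

/-- The (left-continuous) empirical distribution function of the `m`-th coordinates. -/
def edf {Ω : Type} {d : ℕ} (X : ℕ → Ω → Fin d → ℝ) (n : ℕ) (m : Fin d) (ω : Ω)
    (x : ℝ) : ℝ :=
  (((Finset.range n).filter fun l => X l ω m < x).card : ℝ) / n

/-- The count `N_j(m)` of sample points where `ψ_{j,k_m}` evaluated at the empirical and the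
true marginal distribution function differ. -/
def Ncount1 (ψ : ℝ → ℝ) {Ω : Type} {d : ℕ} (X : ℕ → Ω → Fin d → ℝ)
    (F : Fin d → ℝ → ℝ) (n j : ℕ) (k : Fin d → ℤ) (m : Fin d) (ω : Ω) : ℕ :=
  ((Finset.range n).filter fun i =>
    wsc ψ j (k m) (edf X n m ω (X i ω m)) ≠ wsc ψ j (k m) (F m (X i ω m))).card

/-- The count `N_j` of sample points where `ψ^ε_{j,k}` evaluated at the empirical and the
true marginal distribution functions differ. -/
def NcountD (φ ψ : ℝ → ℝ) {Ω : Type} {d : ℕ} (X : ℕ → Ω → Fin d → ℝ)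
    (F : Fin d → ℝ → ℝ) (n j : ℕ) (k : Fin d → ℤ) (ε : Fin d → Bool) (ω : Ω) : ℕ :=
  ((Finset.range n).filter fun i =>
    tensW φ ψ j ε k (fun p => edf X n p ω (X i ω p))
      ≠ tensW φ ψ j ε k fun p => F p (X i ω p)).card

end CopulaEstimation

lemma aux_exp_quad {x : ℝ} (h0 : 0 ≤ x) (h1 : x ≤ 1) : Real.exp x ≤ 1 + x + x ^ 2 := by
  have h := Real.exp_bound (x := x) (by rwa [abs_of_nonneg h0]) (n := 2) (by norm_num)
  rw [abs_of_nonneg h0] at h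
  have h2 : ∑ i ∈ Finset.range 2, x ^ i / (Nat.factorial i) = 1 + x := by
    simp [Finset.sum_range_succ]
  rw [h2] at h
  have h3 := (abs_le.mp h).2
  norm_num [Nat.factorial] at h3
  nlinarith [sq_nonneg x]

lemma aux_chernoff {Ω : Type} [MeasureSpace Ω] [IsProbabilityMeasure (ℙ : Measure Ω)]
    (V : ℕ → Ω → ℝ) (hVmeas : ∀ i, Measurable (V i))
    (hVindep : ProbabilityTheory.iIndepFun V ℙ)
    (S : Set ℝ) (hS : MeasurableSet S)
    (hVid : ∀ i, ℙ (V i ⁻¹' S) = ℙ (V 0 ⁻¹' S))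
    (n : ℕ) (hn : 0 < n) (x s : ℝ) (hx : 0 < x) (hxn : x ≤ n)
    (hs : (n : ℝ) * (ℙ (V 0 ⁻¹' S)).toReal + x ≤ s) :
    ℙ {ω | s ≤ (((Finset.range n).filter fun i => V i ω ∈ S).card : ℝ)}
      ≤ ENNReal.ofReal (Real.exp (-(x ^ 2) / (4 * n))) := by
  classical
  have hn0 : (0:ℝ) < n := by exact_mod_cast hn
  set q : ℝ := (ℙ (V 0 ⁻¹' S)).toReal with hq
  have hq0 : 0 ≤ q := ENNReal.toReal_nonneg
  have hq1 : q ≤ 1 := by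
    have h1 : ℙ (V 0 ⁻¹' S) ≤ 1 := prob_le_one
    simpa using ENNReal.toReal_mono (by simp) h1
  set lam : ℝ := x / (2 * n) with hlam
  have hlam0 : 0 < lam := by positivity
  have hlam1 : lam ≤ 1 := by
    rw [hlam, div_le_one (by positivity)]; linarith
  set Y : ℕ → Ω → ℝ := fun i ω => Set.indicator S (fun _ => (1:ℝ)) (V i ω) with hYdef
  have hYmeas : ∀ i, Measurable (Y i) := fun i =>
    (measurable_const.indicator hS).comp (hVmeas i)
  have hYindep : ProbabilityTheory.iIndepFun Y ℙ :=
    hVindep.comp (fun _ => Set.indicator S (fun _ => (1:ℝ)))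
      (fun _ => measurable_const.indicator hS)
  have hY01 : ∀ i ω, 0 ≤ Y i ω ∧ Y i ω ≤ 1 := by
    intro i ω
    by_cases h : V i ω ∈ S <;>
      simp [hYdef, Set.indicator_of_mem, Set.indicator_of_notMem, h]
  set W : Ω → ℝ := ∑ i ∈ Finset.range n, Y i with hWdef
  have hWapp : ∀ ω, W ω = ∑ i ∈ Finset.range n, Y i ω := by
    intro ω; rw [hWdef]; simp
  have hWmeas : Measurable W := by
    have : W = fun ω => ∑ i ∈ Finset.range n, Y i ω := funext hWapp
    rw [this]; exact Finset.measurable_sum _ (fun i _ => hYmeas i)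
  have hWle : ∀ ω, W ω ≤ n := by
    intro ω
    rw [hWapp]
    calc ∑ i ∈ Finset.range n, Y i ω ≤ ∑ _i ∈ Finset.range n, (1:ℝ) :=
          Finset.sum_le_sum (fun i _ => (hY01 i ω).2)
      _ = n := by simp
  have hint : Integrable (fun ω => Real.exp (lam * W ω)) ℙ := by
    refine (integrable_const (Real.exp (lam * n))).mono'
      ((hWmeas.const_mul lam).exp.aestronglyMeasurable) (ae_of_all _ fun ω => ?_)
    rw [Real.norm_eq_abs, abs_of_pos (Real.exp_pos _)]
    exact Real.exp_le_exp.mpr (mul_le_mul_of_nonneg_left (hWle ω) hlam0.le)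
  have hmgf : ∀ i, ProbabilityTheory.mgf (Y i) ℙ lam = 1 + q * (Real.exp lam - 1) := by
    intro i
    have hA : MeasurableSet (V i ⁻¹' S) := hVmeas i hS
    have heq : (fun ω => Real.exp (lam * Y i ω))
        = fun ω => Set.indicator (V i ⁻¹' S) (fun _ => Real.exp lam - 1) ω + 1 := by
      funext ω
      by_cases h : V i ω ∈ S
      · simp [hYdef, Set.indicator_of_mem, h, Set.indicator_of_mem (show ω ∈ V i ⁻¹' S from h)]
      · simp [hYdef, Set.indicator_of_notMem, h,
          Set.indicator_of_notMem (show ω ∉ V i ⁻¹' S from h)]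
    rw [ProbabilityTheory.mgf, heq,
      integral_add ((integrable_const _).indicator hA) (integrable_const 1),
      integral_indicator hA, setIntegral_const, integral_const]
    simp only [measureReal_def, measure_univ, ENNReal.toReal_one, smul_eq_mul, one_mul, hVid i, ← hq]
    ring
  have hmgfW : ProbabilityTheory.mgf W ℙ lam = (1 + q * (Real.exp lam - 1)) ^ n := by
    rw [hWdef, hYindep.mgf_sum hYmeas (Finset.range n)]
    simp [hmgf]
  have hcher := ProbabilityTheory.measure_ge_le_exp_mul_mgf (X := W) (μ := ℙ) s hlam0.le hint
  have hev : {ω | s ≤ (((Finset.range n).filter fun i => V i ω ∈ S).card : ℝ)}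
      = {ω | s ≤ W ω} := by
    ext ω
    simp only [Set.mem_setOf_eq]
    have : (((Finset.range n).filter fun i => V i ω ∈ S).card : ℝ) = W ω := by
      rw [Finset.natCast_card_filter, hWapp]
      exact Finset.sum_congr rfl fun i _ => by
        by_cases h : V i ω ∈ S <;>
          simp [hYdef, Set.indicator_of_mem, Set.indicator_of_notMem, h]
    rw [this]
  rw [hev, ENNReal.le_ofReal_iff_toReal_le (measure_ne_top _ _) (Real.exp_pos _).le]
  refine hcher.trans ?_
  rw [hmgfW]
  have hE1 : (1:ℝ) ≤ Real.exp lam := by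
    have := Real.add_one_le_exp lam; linarith
  have h1 : (0:ℝ) ≤ 1 + q * (Real.exp lam - 1) := by nlinarith
  have h2 : (1 + q * (Real.exp lam - 1)) ^ n ≤ Real.exp ((n : ℝ) * (q * (Real.exp lam - 1))) := by
    rw [Real.exp_nat_mul]
    exact pow_le_pow_left₀ h1 (by linarith [Real.add_one_le_exp (q * (Real.exp lam - 1))]) n
  calc Real.exp (-lam * s) * (1 + q * (Real.exp lam - 1)) ^ n
      ≤ Real.exp (-lam * s) * Real.exp ((n : ℝ) * (q * (Real.exp lam - 1))) :=
        mul_le_mul_of_nonneg_left h2 (Real.exp_pos _).le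
    _ = Real.exp (-lam * s + (n : ℝ) * (q * (Real.exp lam - 1))) := (Real.exp_add _ _).symm
    _ ≤ Real.exp (-(x ^ 2) / (4 * n)) := by
        apply Real.exp_le_exp.mpr
        have hE := aux_exp_quad hlam0.le hlam1
        have hls : lam * ((n : ℝ) * q + x) ≤ lam * s := mul_le_mul_of_nonneg_left hs hlam0.le
        have e2 : q * (Real.exp lam - 1) ≤ q * (lam + lam ^ 2) :=
          mul_le_mul_of_nonneg_left (by linarith) hq0
        have e3 : q * lam ^ 2 ≤ lam ^ 2 := mul_le_of_le_one_left (sq_nonneg lam) hq1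
        have e4 : q * (Real.exp lam - 1) ≤ q * lam + lam ^ 2 := by nlinarith
        have hEq : (n : ℝ) * (q * (Real.exp lam - 1)) ≤ (n : ℝ) * q * lam + (n : ℝ) * lam ^ 2 := by
          nlinarith [mul_le_mul_of_nonneg_left e4 hn0.le]
        have hfin : -(lam * x) + (n : ℝ) * lam ^ 2 = -(x ^ 2) / (4 * n) := by
          rw [hlam]; field_simp; ring
        linarith [hls, hEq, hfin]

section CdfFacts

variable {Ω : Type} [MeasureSpace Ω] [IsProbabilityMeasure (ℙ : Measure Ω)]
  {Z : Ω → ℝ} {G : ℝ → ℝ}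

lemma aux_cdf_mono (hG : ∀ t, G t = (ℙ {ω | Z ω ≤ t}).toReal) : Monotone G := by
  intro u v huv
  rw [hG, hG]
  exact ENNReal.toReal_mono (measure_ne_top _ _)
    (measure_mono fun ω (h : Z ω ≤ u) => le_trans h huv)

lemma aux_cdf_nonneg (hG : ∀ t, G t = (ℙ {ω | Z ω ≤ t}).toReal) (t : ℝ) : 0 ≤ G t := by
  rw [hG]; exact ENNReal.toReal_nonneg

lemma aux_prob_toReal_le_one (A : Set Ω) : (ℙ A).toReal ≤ 1 := by
  simpa using ENNReal.toReal_mono (by simp) (prob_le_one (μ := ℙ) (s := A))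

lemma aux_cdf_le_one (hG : ∀ t, G t = (ℙ {ω | Z ω ≤ t}).toReal) (t : ℝ) : G t ≤ 1 := by
  rw [hG]; exact aux_prob_toReal_le_one _

lemma aux_exists_lt_cdf (hZ : Measurable Z) (hG : ∀ t, G t = (ℙ {ω | Z ω ≤ t}).toReal)
    {z : ℝ} (hz : z < 1) : ∃ s, z < G s := by
  by_contra hcon
  push_neg at hcon
  have hz0 : 0 ≤ z := le_trans (aux_cdf_nonneg hG 0) (hcon 0)
  set A : ℕ → Set Ω := fun m => {ω | Z ω ≤ (m : ℝ)} with hA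
  have hmono : Monotone A := by
    intro u v huv ω (h : Z ω ≤ u)
    exact le_trans h (by exact_mod_cast huv)
  have hUnion : (⋃ m, A m) = Set.univ := by
    ext ω
    simp only [Set.mem_iUnion, Set.mem_univ, iff_true]
    obtain ⟨m, hm⟩ := exists_nat_ge (Z ω)
    exact ⟨m, hm⟩
  have htend := tendsto_measure_iUnion_atTop (μ := ℙ) hmono
  rw [hUnion, measure_univ] at htend
  have hle : ∀ m : ℕ, ℙ (A m) ≤ ENNReal.ofReal z := by
    intro m
    rw [ENNReal.le_ofReal_iff_toReal_le (measure_ne_top _ _) hz0]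
    rw [← hG]
    exact hcon _
  have : (1 : ℝ≥0∞) ≤ ENNReal.ofReal z :=
    le_of_tendsto' htend (fun m => hle m)
  exact absurd (lt_of_le_of_lt this (ENNReal.ofReal_lt_one.mpr hz)) (lt_irrefl _)

lemma aux_exists_cdf_lt (hZ : Measurable Z) (hG : ∀ t, G t = (ℙ {ω | Z ω ≤ t}).toReal)
    {z : ℝ} (hz : 0 < z) : ∃ s, G s < z := by
  by_contra hcon
  push_neg at hcon
  set A : ℕ → Set Ω := fun m => {ω | Z ω ≤ -(m : ℝ)} with hA
  have hanti : Antitone A := by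
    intro u v huv ω (h : Z ω ≤ -(v : ℝ))
    refine le_trans h (by simp; exact_mod_cast huv)
  have hInter : (⋂ m, A m) = ∅ := by
    ext ω
    simp only [Set.mem_iInter, Set.mem_empty_iff_false, iff_false, not_forall]
    obtain ⟨m, hm⟩ := exists_nat_gt (-(Z ω))
    exact ⟨m, by simp only [hA, Set.mem_setOf_eq]; push_neg; linarith⟩
  have htend := tendsto_measure_iInter_atTop (μ := ℙ)
    (fun m => ((measurableSet_le hZ measurable_const)).nullMeasurableSet)
    hanti ⟨0, measure_ne_top _ _⟩
  rw [hInter, measure_empty] at htend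
  have hge : ∀ m : ℕ, ENNReal.ofReal z ≤ ℙ (A m) := by
    intro m
    exact ENNReal.ofReal_le_of_le_toReal (by rw [← hG]; exact hcon _)
  have : ENNReal.ofReal z ≤ 0 := ge_of_tendsto' htend hge
  have : z ≤ 0 := ENNReal.ofReal_eq_zero.mp (le_antisymm this zero_le)
  linarith

lemma aux_prob_cdf_le (hZ : Measurable Z) (hG : ∀ t, G t = (ℙ {ω | Z ω ≤ t}).toReal)
    (hGc : Continuous G) {y : ℝ} (h0 : 0 ≤ y) (h1 : y ≤ 1) :
    (ℙ {ω | G (Z ω) ≤ y}).toReal ≤ y := by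
  rcases eq_or_lt_of_le h1 with h1e | h1l
  · rw [h1e]; exact aux_prob_toReal_le_one _
  set T : Set ℝ := {s | G s ≤ y} with hT
  by_cases hne : T.Nonempty
  · have hbdd : BddAbove T := by
      by_contra hb
      rw [not_bddAbove_iff] at hb
      have hall : ∀ r, G r ≤ y := by
        intro r
        obtain ⟨s, hsT, hrs⟩ := hb r
        exact le_trans (aux_cdf_mono hG hrs.le) hsT
      obtain ⟨s, hs⟩ := aux_exists_lt_cdf hZ hG h1l
      exact absurd (hall s) (not_le.mpr hs)
    have hclosed : IsClosed T := IsClosed.preimage hGc isClosed_Iic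
    have hmem : sSup T ∈ T := hclosed.csSup_mem hne hbdd
    have hsub : {ω | G (Z ω) ≤ y} ⊆ {ω | Z ω ≤ sSup T} := by
      intro ω hω
      exact le_csSup hbdd hω
    calc (ℙ {ω | G (Z ω) ≤ y}).toReal
        ≤ (ℙ {ω | Z ω ≤ sSup T}).toReal :=
          ENNReal.toReal_mono (measure_ne_top _ _) (measure_mono hsub)
      _ = G (sSup T) := (hG _).symm
      _ ≤ y := hmem
  · have hsub : {ω | G (Z ω) ≤ y} ⊆ (∅ : Set Ω) := by
      intro ω hω
      exact absurd ⟨Z ω, hω⟩ hne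
    calc (ℙ {ω | G (Z ω) ≤ y}).toReal
        ≤ (ℙ (∅ : Set Ω)).toReal := ENNReal.toReal_mono (measure_ne_top _ _) (measure_mono hsub)
      _ = 0 := by simp
      _ ≤ y := h0

lemma aux_prob_lt_cdf (hZ : Measurable Z) (hG : ∀ t, G t = (ℙ {ω | Z ω ≤ t}).toReal)
    (hGc : Continuous G) {y : ℝ} (h0 : 0 ≤ y) (h1 : y ≤ 1) :
    y ≤ (ℙ {ω | G (Z ω) < y}).toReal := by
  rcases eq_or_lt_of_le h0 with h0e | h0l
  · rw [← h0e]; exact ENNReal.toReal_nonneg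
  refine le_of_forall_lt fun z hz => ?_
  rcases lt_or_ge z 0 with hz0 | hz0
  · exact lt_of_lt_of_le hz0 ENNReal.toReal_nonneg
  set w : ℝ := (z + y) / 2 with hw
  have hw0 : 0 < w := by rw [hw]; linarith
  have hw1 : w < 1 := by rw [hw]; nlinarith
  have hwz : z < w := by rw [hw]; linarith
  have hwy : w < y := by rw [hw]; linarith
  obtain ⟨slo, hlo⟩ := aux_exists_cdf_lt hZ hG hw0
  obtain ⟨shi, hhi⟩ := aux_exists_lt_cdf hZ hG hw1
  have hlohi : slo ≤ shi := by
    by_contra hcs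
    push_neg at hcs
    exact absurd (aux_cdf_mono hG hcs.le) (not_le.mpr (lt_trans hlo hhi))
  have hivt := intermediate_value_Icc hlohi (hGc.continuousOn (s := Set.Icc slo shi))
  obtain ⟨s, _, hGs⟩ := hivt ⟨hlo.le, hhi.le⟩
  have hsub : {ω | Z ω ≤ s} ⊆ {ω | G (Z ω) < y} := by
    intro ω hω
    exact lt_of_le_of_lt (le_trans (aux_cdf_mono hG hω) (le_of_eq hGs)) hwy
  calc z < w := hwz
    _ = G s := hGs.symm
    _ = (ℙ {ω | Z ω ≤ s}).toReal := hG s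
    _ ≤ (ℙ {ω | G (Z ω) < y}).toReal :=
        ENNReal.toReal_mono (measure_ne_top _ _) (measure_mono hsub)

end CdfFacts

namespace CopulaEstimation


lemma aux_wsc_ne_mem {L : ℝ} {h : ℝ → ℝ} (hsupp : ∀ x, x ∉ Set.Icc (0:ℝ) L → h x = 0)
    (j : ℕ) (κ : ℤ) {u v : ℝ} (hne : wsc h j κ u ≠ wsc h j κ v) :
    u ∈ Set.Icc ((κ:ℝ) * ((2:ℝ)^j)⁻¹) (((κ:ℝ) + L) * ((2:ℝ)^j)⁻¹) ∨
    v ∈ Set.Icc ((κ:ℝ) * ((2:ℝ)^j)⁻¹) (((κ:ℝ) + L) * ((2:ℝ)^j)⁻¹) := by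
  by_contra hcon
  push_neg at hcon
  have h2j : (0:ℝ) < 2^j := by positivity
  have hz : ∀ w : ℝ, w ∉ Set.Icc ((κ:ℝ)*((2:ℝ)^j)⁻¹) (((κ:ℝ)+L)*((2:ℝ)^j)⁻¹) →
      wsc h j κ w = 0 := by
    intro w hw
    have hmem : (2:ℝ)^j * w - κ ∉ Set.Icc (0:ℝ) L := by
      intro hmem
      apply hw
      obtain ⟨hm1, hm2⟩ := hmem
      constructor
      · rw [← div_eq_mul_inv, div_le_iff₀ h2j]; nlinarith
      · rw [← div_eq_mul_inv, le_div_iff₀ h2j]; nlinarith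
    rw [wsc, hsupp _ hmem, mul_zero]
  exact hne (by rw [hz u hcon.1, hz v hcon.2])

set_option maxHeartbeats 1000000 in
lemma aux_key {Ω : Type} [MeasureSpace Ω] [IsProbabilityMeasure (ℙ : Measure Ω)]
    {d : ℕ} (X : ℕ → Ω → Fin d → ℝ) (hmeas : ∀ i, Measurable (X i))
    (hid : ∀ i, Measure.map (X i) ℙ = Measure.map (X 0) ℙ)
    (hindep : ProbabilityTheory.iIndepFun X ℙ)
    (F : Fin d → ℝ → ℝ) (hF : ∀ m t, F m t = (ℙ {ω | X 0 ω m ≤ t}).toReal)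
    (hFc : ∀ m, Continuous (F m))
    (L : ℝ) (hL : 1 ≤ L) (p : Fin d) (κ : ℤ) (n : ℕ) (hn2 : 2 ≤ n)
    (t : ℝ) (ht0 : 0 < t) (ht1 : t ≤ 1) :
    ℙ {ω | (L + 3) * n * t < (((Finset.range n).filter fun i =>
        edf X n p ω (X i ω p) ∈ Set.Icc ((κ:ℝ) * t) (((κ:ℝ) + L) * t) ∨
        F p (X i ω p) ∈ Set.Icc ((κ:ℝ) * t) (((κ:ℝ) + L) * t)).card : ℝ)}
      ≤ ENNReal.ofReal (3 * Real.exp (-(((n:ℝ) * t) ^ 2) / (4 * n))) := by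
  classical
  have hn0 : 0 < n := by omega
  have hn0R : (0:ℝ) < n := by exact_mod_cast hn0
  set a : ℝ := (κ:ℝ) * t with ha
  set b : ℝ := ((κ:ℝ) + L) * t with hb
  set c : ℝ := a - t with hc
  set dd : ℝ := b + t with hdd
  have hba : b = a + L * t := by rw [ha, hb]; ring
  have hLt0 : 0 < (L + 3) * n * t := by positivity
  set V : ℕ → Ω → ℝ := fun i ω => F p (X i ω p) with hV
  have hg : Measurable (fun v : Fin d → ℝ => F p (v p)) :=
    (hFc p).measurable.comp (measurable_pi_apply p)
  have hVmeas : ∀ i, Measurable (V i) := fun i => hg.comp (hmeas i)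
  have hVindep : ProbabilityTheory.iIndepFun V ℙ :=
    hindep.comp (fun _ => fun v : Fin d → ℝ => F p (v p)) (fun _ => hg)
  have hVid : ∀ (S : Set ℝ), MeasurableSet S → ∀ i, ℙ (V i ⁻¹' S) = ℙ (V 0 ⁻¹' S) := by
    intro S hS i
    have h1 : Measure.map (V i) ℙ = Measure.map (V 0) ℙ := by
      have e : ∀ l, V l = (fun v : Fin d → ℝ => F p (v p)) ∘ X l := fun l => rfl
      rw [e i, e 0, ← Measure.map_map hg (hmeas i), hid i, Measure.map_map hg (hmeas 0)]
    rw [← Measure.map_apply (hVmeas i) hS, ← Measure.map_apply (hVmeas 0) hS, h1]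
  have hZ : Measurable (fun ω => X 0 ω p) := (measurable_pi_apply p).comp (hmeas 0)
  have hGF : ∀ s : ℝ, F p s = (ℙ {ω | (fun ω => X 0 ω p) ω ≤ s}).toReal := hF p
  have hFmono : Monotone (F p) := aux_cdf_mono hGF
  have hV0 : ∀ i ω, 0 ≤ V i ω := by
    intro i ω; rw [hV]; simp only; rw [hF p]; exact ENNReal.toReal_nonneg
  have hV1 : ∀ i ω, V i ω ≤ 1 := by
    intro i ω; rw [hV]; simp only; rw [hF p]; exact aux_prob_toReal_le_one _
  by_cases hbneg : b < 0
  · have hsub0 : {ω | (L + 3) * n * t < (((Finset.range n).filter fun i =>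
        edf X n p ω (X i ω p) ∈ Set.Icc a b ∨
        F p (X i ω p) ∈ Set.Icc a b).card : ℝ)} ⊆ (∅ : Set Ω) := by
      intro ω hω
      simp only [Set.mem_setOf_eq] at hω
      exfalso
      have hflt : (((Finset.range n).filter fun i =>
          edf X n p ω (X i ω p) ∈ Set.Icc a b ∨ F p (X i ω p) ∈ Set.Icc a b)).card = 0 := by
        rw [Finset.card_eq_zero, Finset.filter_eq_empty_iff]
        intro i _
        rintro (hm | hm)
        · have h1 : 0 ≤ edf X n p ω (X i ω p) := by
            rw [edf]; positivity
          linarith [hm.2]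
        · linarith [hm.2, hV0 i ω]
      rw [hflt] at hω
      norm_num at hω
      linarith
    refine le_trans (measure_mono hsub0) ?_
    rw [measure_empty]; exact zero_le
  by_cases haover : 1 < a
  · have hsub0 : {ω | (L + 3) * n * t < (((Finset.range n).filter fun i =>
        edf X n p ω (X i ω p) ∈ Set.Icc a b ∨
        F p (X i ω p) ∈ Set.Icc a b).card : ℝ)} ⊆ (∅ : Set Ω) := by
      intro ω hω
      simp only [Set.mem_setOf_eq] at hω
      exfalso
      have hflt : (((Finset.range n).filter fun i =>
          edf X n p ω (X i ω p) ∈ Set.Icc a b ∨ F p (X i ω p) ∈ Set.Icc a b)).card = 0 := by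
        rw [Finset.card_eq_zero, Finset.filter_eq_empty_iff]
        intro i _
        rintro (hm | hm)
        · have h1 : edf X n p ω (X i ω p) ≤ 1 := by
            rw [edf, div_le_one hn0R]
            exact_mod_cast le_trans (Finset.card_filter_le _ _) (le_of_eq (Finset.card_range n))
          linarith [hm.1]
        · linarith [hm.1, hV1 i ω]
      rw [hflt] at hω
      norm_num at hω
      linarith
    refine le_trans (measure_mono hsub0) ?_
    rw [measure_empty]; exact zero_le
  push_neg at hbneg haover
  have hc1 : c ≤ 1 := by rw [hc]; linarith
  have hdd0 : 0 ≤ dd := by rw [hdd]; linarith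
  have hcdd : c < dd := by rw [hc, hdd, hba]; nlinarith
  set E0 : Set Ω := {ω | (L + 3) * n * t ≤
    (((Finset.range n).filter fun i => V i ω ∈ Set.Icc c dd).card : ℝ)} with hE0
  set E1 : Set Ω := {ω | ((n:ℝ) * (1 - b) ≤
    (((Finset.range n).filter fun l => V l ω ∈ Set.Ici dd).card : ℝ)) ∧ dd ≤ 1} with hE1
  set E2 : Set Ω := {ω | ((n:ℝ) * a ≤
    (((Finset.range n).filter fun l => V l ω ∈ Set.Iio c).card : ℝ)) ∧ 0 ≤ c} with hE2
  have hincl : {ω | (L + 3) * n * t < (((Finset.range n).filter fun i =>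
        edf X n p ω (X i ω p) ∈ Set.Icc a b ∨
        F p (X i ω p) ∈ Set.Icc a b).card : ℝ)} ⊆ E0 ∪ E1 ∪ E2 := by
    intro ω hω
    simp only [Set.mem_setOf_eq] at hω
    by_cases h1 : ω ∈ E1
    · exact Or.inl (Or.inr h1)
    by_cases h2 : ω ∈ E2
    · exact Or.inr h2
    refine Or.inl (Or.inl ?_)
    have hsub : ((Finset.range n).filter fun i =>
        edf X n p ω (X i ω p) ∈ Set.Icc a b ∨ F p (X i ω p) ∈ Set.Icc a b) ⊆
        ((Finset.range n).filter fun i => V i ω ∈ Set.Icc c dd) := by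
      intro i hi
      rw [Finset.mem_filter] at hi ⊢
      refine ⟨hi.1, ?_⟩
      rcases hi.2 with hedf | hU
      swap
      · exact Set.mem_Icc.mpr ⟨by linarith [hU.1], by linarith [hU.2]⟩
      have hedf' : a ≤ (((Finset.range n).filter fun l => X l ω p < X i ω p).card : ℝ) / n ∧
          (((Finset.range n).filter fun l => X l ω p < X i ω p).card : ℝ) / n ≤ b := by
        simpa [edf, Set.mem_Icc] using hedf
      set Rc := (((Finset.range n).filter fun l => X l ω p < X i ω p).card) with hRc
      have hnaR : (n:ℝ) * a ≤ Rc := by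
        have h := hedf'.1
        rw [le_div_iff₀ hn0R] at h
        linarith
      have hRb : (Rc:ℝ) ≤ n * b := by
        have h := hedf'.2
        rw [div_le_iff₀ hn0R] at h
        linarith
      constructor
      · by_contra hlt
        push_neg at hlt
        apply h2
        rw [hE2, Set.mem_setOf_eq]
        constructor
        · have hss : (Finset.range n).filter (fun l => X l ω p < X i ω p) ⊆
              (Finset.range n).filter (fun l => V l ω ∈ Set.Iio c) := by
            intro l hl
            rw [Finset.mem_filter] at hl ⊢
            exact ⟨hl.1, Set.mem_Iio.mpr (lt_of_le_of_lt (hFmono hl.2.le) hlt)⟩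
          have hcard := Finset.card_le_card hss
          calc (n:ℝ) * a ≤ Rc := hnaR
            _ ≤ _ := by exact_mod_cast hcard
        · linarith [hV0 i ω]
      · by_contra hgt
        push_neg at hgt
        apply h1
        rw [hE1, Set.mem_setOf_eq]
        constructor
        · have hss : (Finset.range n).filter (fun l => ¬ (V l ω ∈ Set.Ici dd)) ⊆
              (Finset.range n).filter (fun l => X l ω p < X i ω p) := by
            intro l hl
            rw [Finset.mem_filter] at hl ⊢
            refine ⟨hl.1, ?_⟩
            have hVl : V l ω < dd := by
              have := hl.2
              simpa [Set.mem_Ici, not_le] using this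
            by_contra hge
            push_neg at hge
            have := hFmono hge
            simp only [hV] at hVl hgt
            linarith [this]
          have hcard := Finset.card_le_card hss
          have hsplit : ((Finset.range n).filter (fun l => V l ω ∈ Set.Ici dd)).card
              + ((Finset.range n).filter (fun l => ¬ (V l ω ∈ Set.Ici dd))).card = n := by
            rw [Finset.card_filter_add_card_filter_not, Finset.card_range]
          have hnegR : ((((Finset.range n).filter
              (fun l => ¬ (V l ω ∈ Set.Ici dd))).card : ℝ)) ≤ (Rc : ℝ) := by
            exact_mod_cast hcard
          have hsplitR : (((Finset.range n).filter (fun l => V l ω ∈ Set.Ici dd)).card : ℝ)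
              + (((Finset.range n).filter (fun l => ¬ (V l ω ∈ Set.Ici dd))).card : ℝ)
              = (n : ℝ) := by
            exact_mod_cast hsplit
          nlinarith [hRb, hnegR, hsplitR]
        · linarith [hV1 i ω]
    have hcard2 := Finset.card_le_card hsub
    rw [hE0, Set.mem_setOf_eq]
    refine le_of_lt (lt_of_lt_of_le hω ?_)
    exact_mod_cast hcard2
  have hexp3 : (0:ℝ) ≤ Real.exp (-(((n:ℝ) * t) ^ 2) / (4 * n)) := (Real.exp_pos _).le
  have hxpos : (0:ℝ) < (n:ℝ) * t := by positivity
  have hxn : (n:ℝ) * t ≤ n := by nlinarith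
  have hbound0 : ℙ E0 ≤ ENNReal.ofReal (Real.exp (-(((n:ℝ) * t) ^ 2) / (4 * n))) := by
    rw [hE0]
    have hq0le : (ℙ (V 0 ⁻¹' Set.Icc c dd)).toReal ≤ dd - c := by
      have hdisj : Disjoint (V 0 ⁻¹' Set.Icc c dd) (V 0 ⁻¹' Set.Iio c) := by
        rw [Set.disjoint_left]
        intro ω h1 h2
        exact absurd h1.1 (not_le.mpr h2)
      have hunion : (V 0 ⁻¹' Set.Icc c dd) ∪ (V 0 ⁻¹' Set.Iio c) ⊆ V 0 ⁻¹' Set.Iic dd := by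
        rintro ω (h | h)
        · exact h.2
        · exact le_of_lt (lt_trans h hcdd)
      have hm : ℙ (V 0 ⁻¹' Set.Icc c dd) + ℙ (V 0 ⁻¹' Set.Iio c) ≤ ℙ (V 0 ⁻¹' Set.Iic dd) := by
        rw [← measure_union hdisj ((hVmeas 0) measurableSet_Iio)]
        exact measure_mono hunion
      have hmr : (ℙ (V 0 ⁻¹' Set.Icc c dd)).toReal + (ℙ (V 0 ⁻¹' Set.Iio c)).toReal
          ≤ (ℙ (V 0 ⁻¹' Set.Iic dd)).toReal := by
        rw [← ENNReal.toReal_add (measure_ne_top _ _) (measure_ne_top _ _)]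
        exact ENNReal.toReal_mono (measure_ne_top _ _) hm
      have hub : (ℙ (V 0 ⁻¹' Set.Iic dd)).toReal ≤ dd := by
        by_cases hdd1 : dd ≤ 1
        · have := aux_prob_cdf_le hZ hGF (hFc p) hdd0 hdd1
          exact this
        · exact le_trans (aux_prob_toReal_le_one _) (by linarith)
      have hlb : c ≤ (ℙ (V 0 ⁻¹' Set.Iio c)).toReal := by
        by_cases hc0 : 0 ≤ c
        · exact aux_prob_lt_cdf hZ hGF (hFc p) hc0 hc1
        · exact le_trans (by linarith) ENNReal.toReal_nonneg
      linarith
    have hs0 : (n : ℝ) * (ℙ (V 0 ⁻¹' Set.Icc c dd)).toReal + (n:ℝ) * t ≤ (L + 3) * n * t := by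
      have : dd - c = (L + 2) * t := by rw [hc, hdd, hba]; ring
      nlinarith [hq0le]
    have hch := aux_chernoff V hVmeas hVindep (Set.Icc c dd) measurableSet_Icc
      (hVid _ measurableSet_Icc) n hn0 ((n:ℝ) * t) ((L + 3) * n * t) hxpos hxn hs0
    convert hch using 9
  have hbound1 : ℙ E1 ≤ ENNReal.ofReal (Real.exp (-(((n:ℝ) * t) ^ 2) / (4 * n))) := by
    by_cases hdd1 : dd ≤ 1
    · have hsub1 : E1 ⊆ {ω | (n:ℝ) * (1 - b) ≤
          (((Finset.range n).filter fun l => V l ω ∈ Set.Ici dd).card : ℝ)} :=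
        fun ω hω => hω.1
      refine le_trans (measure_mono hsub1) ?_
      have hcompl : (V 0 ⁻¹' Set.Ici dd) = (V 0 ⁻¹' Set.Iio dd)ᶜ := by
        rw [← Set.preimage_compl, Set.compl_Iio]
      have hq1 : (ℙ (V 0 ⁻¹' Set.Ici dd)).toReal = 1 - (ℙ (V 0 ⁻¹' Set.Iio dd)).toReal := by
        rw [hcompl, prob_compl_eq_one_sub ((hVmeas 0) measurableSet_Iio),
          ENNReal.toReal_sub_of_le prob_le_one ENNReal.one_ne_top, ENNReal.toReal_one]
      have hlb : dd ≤ (ℙ (V 0 ⁻¹' Set.Iio dd)).toReal :=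
        aux_prob_lt_cdf hZ hGF (hFc p) hdd0 hdd1
      have hs1 : (n : ℝ) * (ℙ (V 0 ⁻¹' Set.Ici dd)).toReal + (n:ℝ) * t ≤ (n:ℝ) * (1 - b) := by
        rw [hq1]
        have : dd = b + t := hdd
        nlinarith
      have hch := aux_chernoff V hVmeas hVindep (Set.Ici dd) measurableSet_Ici
        (hVid _ measurableSet_Ici) n hn0 ((n:ℝ) * t) ((n:ℝ) * (1 - b)) hxpos hxn hs1
      exact hch
    · refine le_trans (measure_mono (fun ω hω => absurd hω.2 hdd1 : _ ⊆ (∅ : Set Ω))) ?_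
      rw [measure_empty]; exact zero_le
  have hbound2 : ℙ E2 ≤ ENNReal.ofReal (Real.exp (-(((n:ℝ) * t) ^ 2) / (4 * n))) := by
    by_cases hc0 : 0 ≤ c
    · have hsub2 : E2 ⊆ {ω | (n:ℝ) * a ≤
          (((Finset.range n).filter fun l => V l ω ∈ Set.Iio c).card : ℝ)} :=
        fun ω hω => hω.1
      refine le_trans (measure_mono hsub2) ?_
      have hub : (ℙ (V 0 ⁻¹' Set.Iio c)).toReal ≤ c := by
        refine le_trans (ENNReal.toReal_mono (measure_ne_top _ _)
          (measure_mono fun ω (hω : V 0 ω < c) => le_of_lt hω)) ?_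
        exact aux_prob_cdf_le hZ hGF (hFc p) hc0 hc1
      have hs2 : (n : ℝ) * (ℙ (V 0 ⁻¹' Set.Iio c)).toReal + (n:ℝ) * t ≤ (n:ℝ) * a := by
        have : c = a - t := hc
        nlinarith
      have hch := aux_chernoff V hVmeas hVindep (Set.Iio c) measurableSet_Iio
        (hVid _ measurableSet_Iio) n hn0 ((n:ℝ) * t) ((n:ℝ) * a) hxpos hxn hs2
      exact hch
    · refine le_trans (measure_mono (fun ω hω => absurd hω.2 hc0 : _ ⊆ (∅ : Set Ω))) ?_
      rw [measure_empty]; exact zero_le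
  calc ℙ {ω | (L + 3) * n * t < (((Finset.range n).filter fun i =>
        edf X n p ω (X i ω p) ∈ Set.Icc a b ∨
        F p (X i ω p) ∈ Set.Icc a b).card : ℝ)}
      ≤ ℙ (E0 ∪ E1 ∪ E2) := measure_mono hincl
    _ ≤ ℙ (E0 ∪ E1) + ℙ E2 := measure_union_le _ _
    _ ≤ ℙ E0 + ℙ E1 + ℙ E2 := add_le_add (measure_union_le _ _) le_rfl
    _ ≤ ENNReal.ofReal (Real.exp (-(((n:ℝ) * t) ^ 2) / (4 * n)))
        + ENNReal.ofReal (Real.exp (-(((n:ℝ) * t) ^ 2) / (4 * n)))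
        + ENNReal.ofReal (Real.exp (-(((n:ℝ) * t) ^ 2) / (4 * n))) :=
        add_le_add (add_le_add hbound0 hbound1) hbound2
    _ = ENNReal.ofReal (3 * Real.exp (-(((n:ℝ) * t) ^ 2) / (4 * n))) := by
        rw [← ENNReal.ofReal_add hexp3 hexp3, ← ENNReal.ofReal_add (by linarith) hexp3]
        congr 1
        ring

end CopulaEstimation

set_option maxHeartbeats 1000000 in
open CopulaEstimation in
/-- Lemma `triboulnix`: with high probability, at most of order `n 2^{-j}`
sample points are affected by replacing the true marginal distribution functions by the
empirical ones inside a wavelet at level `j`. -/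
theorem count_of_perturbed_points
    (d : ℕ) (hd : 2 ≤ d) (L : ℝ) (hL : 1 ≤ L) (φ ψ : ℝ → ℝ)
    (hwav : IsWaveletBasis d L φ ψ)
    (Ω : Type) [MeasureSpace Ω] [IsProbabilityMeasure (ℙ : Measure Ω)]
    (X : ℕ → Ω → Fin d → ℝ) (hmeas : ∀ i, Measurable (X i))
    (hid : ∀ i, Measure.map (X i) ℙ = Measure.map (X 0) ℙ)
    (hindep : ProbabilityTheory.iIndepFun X ℙ)
    (F : Fin d → ℝ → ℝ)
    (hF : ∀ m t, F m t = (ℙ {ω | X 0 ω m ≤ t}).toReal)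
    (hFc : ∀ m, Continuous (F m))
    (δ : ℝ) (hδ : 0 < δ) :
    ∃ K₁ > 0, ∀ n : ℕ, 2 * (δ⁻¹ ⊔ 1) ≤ (n : ℝ) * Real.log n → ∀ j : ℕ,
      (2 : ℝ) ^ j ≤ (1 / 3) * Real.sqrt (2 * n / (δ * Real.log n)) →
      ∀ (m : Fin d) (k : Fin d → ℤ) (ε : Sd d),
        (ℙ {ω : Ω | (L + 3) * n * (2 : ℝ) ^ (-(j : ℝ)) < Ncount1 ψ X F n j k m ω}
            ≤ ENNReal.ofReal (K₁ * (n : ℝ) ^ (-δ))) ∧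
        ℙ {ω : Ω | d * (L + 3) * n * (2 : ℝ) ^ (-(j : ℝ)) < NcountD φ ψ X F n j k ε.1 ω}
          ≤ ENNReal.ofReal (K₁ * (n : ℝ) ^ (-δ)) := by
  classical
  have hd0R : (0:ℝ) < d := by exact_mod_cast (by omega : 0 < d)
  refine ⟨3 * d, by nlinarith, ?_⟩
  intro n hn j hj m k ε
  have hnlog2 : (2:ℝ) ≤ (n:ℝ) * Real.log n :=
    le_trans (by nlinarith [le_max_right δ⁻¹ (1:ℝ)]) hn
  have hn1R : (1:ℝ) < (n:ℝ) := by
    by_contra hcon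
    push_neg at hcon
    have h1 : Real.log n ≤ 0 := Real.log_nonpos (by positivity) hcon
    nlinarith [mul_nonneg (Nat.cast_nonneg (α := ℝ) n) (neg_nonneg.mpr h1)]
  have hn2 : 2 ≤ n := by
    have : 1 < n := by exact_mod_cast hn1R
    omega
  have hlogpos : 0 < Real.log n := Real.log_pos hn1R
  have hn0R : (0:ℝ) < n := by linarith
  set t : ℝ := ((2:ℝ) ^ j)⁻¹ with ht
  have h2jpos : (0:ℝ) < 2 ^ j := by positivity
  have ht0 : 0 < t := by rw [ht]; positivity
  have ht1 : t ≤ 1 := by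
    rw [ht]
    exact inv_le_one_of_one_le₀ (one_le_pow₀ (by norm_num))
  have htpow : (2:ℝ) ^ (-(j:ℝ)) = t := by
    rw [ht, ← Real.rpow_natCast 2 j, ← Real.rpow_neg (by norm_num : (0:ℝ) ≤ 2)]
  set R : ℝ := 2 * n / (δ * Real.log n) with hR
  have hRpos : 0 < R := by rw [hR]; positivity
  have hsqrtpos : 0 < Real.sqrt R := Real.sqrt_pos.mpr hRpos
  have hjt : 3 / Real.sqrt R ≤ t := by
    have h2 := one_div_le_one_div_of_le h2jpos hj
    have h3 : 1 / (1 / 3 * Real.sqrt R) = 3 / Real.sqrt R := by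
      field_simp
    rw [h3] at h2
    rw [ht, ← one_div]
    exact h2
  have hkey : δ * Real.log n ≤ (n:ℝ) * t ^ 2 / 4 := by
    have h1 : (3 / Real.sqrt R) ^ 2 ≤ t ^ 2 := pow_le_pow_left₀ (by positivity) hjt 2
    have h2 : (3 / Real.sqrt R) ^ 2 = 9 / R := by
      rw [div_pow, Real.sq_sqrt hRpos.le]; norm_num
    have h3 : 9 / R = 9 * (δ * Real.log n) / (2 * n) := by
      rw [hR, div_div_eq_mul_div]
    have h4 : 9 * (δ * Real.log n) / (2 * n) ≤ t ^ 2 := by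
      rw [← h3, ← h2]; exact h1
    have h5 := mul_le_mul_of_nonneg_left h4 hn0R.le
    have h6 : (n:ℝ) * (9 * (δ * Real.log n) / (2 * n)) = 9 * (δ * Real.log n) / 2 := by
      field_simp
    rw [h6] at h5
    nlinarith [mul_pos hδ hlogpos]
  have hexpnn : (0:ℝ) ≤ Real.exp (-(((n:ℝ) * t) ^ 2) / (4 * n)) := (Real.exp_pos _).le
  have hexple : Real.exp (-(((n:ℝ) * t) ^ 2) / (4 * n)) ≤ (n:ℝ) ^ (-δ) := by
    rw [Real.rpow_def_of_pos hn0R]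
    apply Real.exp_le_exp.mpr
    have harg : -(((n:ℝ) * t) ^ 2) / (4 * n) = -((n:ℝ) * t ^ 2 / 4) := by
      field_simp
    rw [harg]
    nlinarith [hkey]
  have hrpnn : (0:ℝ) ≤ (n:ℝ) ^ (-δ) := Real.rpow_nonneg hn0R.le _
  have hdR : (2:ℝ) ≤ (d:ℝ) := by exact_mod_cast hd
  constructor
  · have hsub : {ω : Ω | (L + 3) * ↑n * (2:ℝ) ^ (-(j:ℝ)) < (Ncount1 ψ X F n j k m ω : ℝ)} ⊆
        {ω : Ω | (L + 3) * ↑n * t < (((Finset.range n).filter fun i =>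
          edf X n m ω (X i ω m) ∈ Set.Icc ((k m : ℝ) * t) (((k m : ℝ) + L) * t) ∨
          F m (X i ω m) ∈ Set.Icc ((k m : ℝ) * t) (((k m : ℝ) + L) * t)).card : ℝ)} := by
      intro ω hω
      simp only [Set.mem_setOf_eq, Ncount1] at hω ⊢
      rw [htpow] at hω
      refine lt_of_lt_of_le hω ?_
      have hsubf : ((Finset.range n).filter fun i =>
          wsc ψ j (k m) (edf X n m ω (X i ω m)) ≠ wsc ψ j (k m) (F m (X i ω m))) ⊆
          ((Finset.range n).filter fun i =>
          edf X n m ω (X i ω m) ∈ Set.Icc ((k m : ℝ) * t) (((k m : ℝ) + L) * t) ∨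
          F m (X i ω m) ∈ Set.Icc ((k m : ℝ) * t) (((k m : ℝ) + L) * t)) := by
        intro i hi
        rw [Finset.mem_filter] at hi ⊢
        refine ⟨hi.1, ?_⟩
        have hor := aux_wsc_ne_mem hwav.2.2.2.1 j (k m) hi.2
        rw [← ht] at hor
        exact hor
      exact_mod_cast Finset.card_le_card hsubf
    calc ℙ {ω : Ω | (L + 3) * ↑n * (2:ℝ) ^ (-(j:ℝ)) < (Ncount1 ψ X F n j k m ω : ℝ)}
        ≤ ℙ {ω : Ω | (L + 3) * ↑n * t < (((Finset.range n).filter fun i =>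
            edf X n m ω (X i ω m) ∈ Set.Icc ((k m : ℝ) * t) (((k m : ℝ) + L) * t) ∨
            F m (X i ω m) ∈ Set.Icc ((k m : ℝ) * t) (((k m : ℝ) + L) * t)).card : ℝ)} :=
          measure_mono hsub
      _ ≤ ENNReal.ofReal (3 * Real.exp (-(((n:ℝ) * t) ^ 2) / (4 * n))) :=
          aux_key X hmeas hid hindep F hF hFc L hL m (k m) n hn2 t ht0 ht1
      _ ≤ ENNReal.ofReal (3 * ↑d * (n:ℝ) ^ (-δ)) := by
          apply ENNReal.ofReal_le_ofReal
          nlinarith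
  · have hsub : {ω : Ω | ↑d * (L + 3) * ↑n * (2:ℝ) ^ (-(j:ℝ)) < (NcountD φ ψ X F n j k ε.1 ω : ℝ)} ⊆
        ⋃ p : Fin d, {ω : Ω | (L + 3) * ↑n * t < (((Finset.range n).filter fun i =>
          edf X n p ω (X i ω p) ∈ Set.Icc ((k p : ℝ) * t) (((k p : ℝ) + L) * t) ∨
          F p (X i ω p) ∈ Set.Icc ((k p : ℝ) * t) (((k p : ℝ) + L) * t)).card : ℝ)} := by
      intro ω hω
      simp only [Set.mem_setOf_eq, NcountD] at hω
      rw [htpow] at hω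
      simp only [Set.mem_iUnion, Set.mem_setOf_eq]
      by_contra hall
      push_neg at hall
      have hsubf : ((Finset.range n).filter fun i =>
          tensW φ ψ j ε.1 k (fun p => edf X n p ω (X i ω p))
            ≠ tensW φ ψ j ε.1 k fun p => F p (X i ω p)) ⊆
          Finset.univ.biUnion (fun p : Fin d => (Finset.range n).filter fun i =>
            edf X n p ω (X i ω p) ∈ Set.Icc ((k p : ℝ) * t) (((k p : ℝ) + L) * t) ∨
            F p (X i ω p) ∈ Set.Icc ((k p : ℝ) * t) (((k p : ℝ) + L) * t)) := by
        intro i hi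
        rw [Finset.mem_filter] at hi
        rw [Finset.mem_biUnion]
        by_contra hnone
        push_neg at hnone
        apply hi.2
        simp only [tensW]
        apply Finset.prod_congr rfl
        intro p _
        have hnp := hnone p (Finset.mem_univ p)
        rw [Finset.mem_filter] at hnp
        push_neg at hnp
        have hnotor := hnp hi.1
        by_cases hee : ε.1 p
        · simp only [hee, if_true]
          by_contra hneq
          rcases aux_wsc_ne_mem hwav.2.2.2.1 j (k p) hneq with h | h <;> rw [← ht] at h
          · exact hnotor.1 h
          · exact hnotor.2 h
        · simp only [hee, if_false]
          by_contra hneq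
          rcases aux_wsc_ne_mem hwav.2.2.1 j (k p) hneq with h | h <;> rw [← ht] at h
          · exact hnotor.1 h
          · exact hnotor.2 h
      have hcard1 := Finset.card_le_card hsubf
      have hcard2 := le_trans hcard1 (Finset.card_biUnion_le (s := Finset.univ)
        (t := fun p : Fin d => (Finset.range n).filter fun i =>
          edf X n p ω (X i ω p) ∈ Set.Icc ((k p : ℝ) * t) (((k p : ℝ) + L) * t) ∨
          F p (X i ω p) ∈ Set.Icc ((k p : ℝ) * t) (((k p : ℝ) + L) * t)))
      have hcardR : ((((Finset.range n).filter fun i =>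
          tensW φ ψ j ε.1 k (fun p => edf X n p ω (X i ω p))
            ≠ tensW φ ψ j ε.1 k fun p => F p (X i ω p)).card : ℝ))
          ≤ ∑ p : Fin d, ((((Finset.range n).filter fun i =>
            edf X n p ω (X i ω p) ∈ Set.Icc ((k p : ℝ) * t) (((k p : ℝ) + L) * t) ∨
            F p (X i ω p) ∈ Set.Icc ((k p : ℝ) * t) (((k p : ℝ) + L) * t)).card : ℝ)) := by
        exact_mod_cast hcard2
      have hsum : (∑ p : Fin d, ((((Finset.range n).filter fun i =>
          edf X n p ω (X i ω p) ∈ Set.Icc ((k p : ℝ) * t) (((k p : ℝ) + L) * t) ∨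
          F p (X i ω p) ∈ Set.Icc ((k p : ℝ) * t) (((k p : ℝ) + L) * t)).card : ℝ)))
          ≤ ∑ _p : Fin d, (L + 3) * ↑n * t :=
        Finset.sum_le_sum (fun p _ => (hall p))
      have hconst : (∑ _p : Fin d, (L + 3) * ↑n * t) = ↑d * ((L + 3) * ↑n * t) := by
        rw [Finset.sum_const, Finset.card_univ, Fintype.card_fin, nsmul_eq_mul]
      rw [hconst] at hsum
      have := lt_of_lt_of_le hω (le_trans hcardR hsum)
      linarith
    calc ℙ {ω : Ω | ↑d * (L + 3) * ↑n * (2:ℝ) ^ (-(j:ℝ)) < (NcountD φ ψ X F n j k ε.1 ω : ℝ)}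
        ≤ ℙ (⋃ p : Fin d, {ω : Ω | (L + 3) * ↑n * t < (((Finset.range n).filter fun i =>
            edf X n p ω (X i ω p) ∈ Set.Icc ((k p : ℝ) * t) (((k p : ℝ) + L) * t) ∨
            F p (X i ω p) ∈ Set.Icc ((k p : ℝ) * t) (((k p : ℝ) + L) * t)).card : ℝ)}) :=
          measure_mono hsub
      _ ≤ ∑' p : Fin d, ℙ {ω : Ω | (L + 3) * ↑n * t < (((Finset.range n).filter fun i =>
            edf X n p ω (X i ω p) ∈ Set.Icc ((k p : ℝ) * t) (((k p : ℝ) + L) * t) ∨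
            F p (X i ω p) ∈ Set.Icc ((k p : ℝ) * t) (((k p : ℝ) + L) * t)).card : ℝ)} :=
          measure_iUnion_le _
      _ ≤ ∑' _p : Fin d, ENNReal.ofReal (3 * Real.exp (-(((n:ℝ) * t) ^ 2) / (4 * n))) :=
          ENNReal.tsum_le_tsum (fun p =>
            aux_key X hmeas hid hindep F hF hFc L hL p (k p) n hn2 t ht0 ht1)
      _ = (d : ℝ≥0∞) * ENNReal.ofReal (3 * Real.exp (-(((n:ℝ) * t) ^ 2) / (4 * n))) := by
          rw [tsum_fintype, Finset.sum_const, Finset.card_univ, Fintype.card_fin, nsmul_eq_mul]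
      _ ≤ ENNReal.ofReal (3 * ↑d * (n:ℝ) ^ (-δ)) := by
          rw [← ENNReal.ofReal_natCast d, ← ENNReal.ofReal_mul (Nat.cast_nonneg d)]
          apply ENNReal.ofReal_le_ofReal
          nlinarith
end
end
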